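/- arXiv:1005.0822 — 5 statements merged into one kernel-verified Lean document; each statement's English description precedes it below -/
import Mathlib

section
/- The convex cone Q(ℂ⟨X⟩) + C_cyc^h is closed in the real vector space ℂ⟨X⟩^h with its finest locally convex topology; equivalently, for every m ∈ ℕ the intersection ℂ⟨X⟩^h_{≤m} ∩ (Q(ℂ⟨X⟩) + C_cyc^h) is a closed subset of the finite-dimensional real vector space ℂ⟨X⟩^h_{≤m}. -/
open scoped ComplexOrder

noncomputable section

/-- The free `*`-algebra `ℂ⟨X⟩` on a set `X` of self-adjoint variables. -/
abbrev FA (X : Type) : Type := FreeAlgebra ℂ X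

/-- Coefficients of a non-commutative polynomial, indexed by words. -/
def coefficient {X : Type} (P : FA X) : FreeMonoid X →₀ ℂ :=
  (FreeAlgebra.equivMonoidAlgebraFreeMonoid P).coeff

/-- The involution on `ℂ⟨X⟩` fixing the variables, reversing words and
conjugating coefficients. -/
def cstar {X : Type} (P : FA X) : FA X :=
  star <| (FreeAlgebra.equivMonoidAlgebraFreeMonoid (R := ℂ) (X := X)).symm <| MonoidAlgebra.ofCoeff <|
    Finsupp.mapRange (starRingEnd ℂ) (map_zero _) (coefficient P)

/-- The hermitian elements `ℂ⟨X⟩^h`. -/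
def herm (X : Type) : Set (FA X) := {P | cstar P = P}

/-- Polynomials of degree at most `m`. -/
def degLE (X : Type) (m : ℕ) : Set (FA X) :=
  {P | ∀ w ∈ (coefficient P).support, (FreeMonoid.length w) ≤ m}

/-- The convex cone `Q(ℂ⟨X⟩)` of sums of hermitian squares. -/
def Qcone (X : Type) : Set (FA X) :=
  {x | ∃ (m : ℕ) (P : Fin m → FA X), x = ∑ i, cstar (P i) * P i}

/-- The span `C_cyc` of all commutators. -/
def Ccyc (X : Type) : Submodule ℂ (FA X) :=
  Submodule.span ℂ {x | ∃ P Q : FA X, x = P * Q - Q * P}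

/-- The hermitian part `C_cyc^h`. -/
def CcycH (X : Type) : Set (FA X) := {P | P ∈ Ccyc X ∧ cstar P = P}

/-- The ideal `J_k` of polynomials vanishing at every tuple of self-adjoint
complex `k×k` matrices. -/
def Jset (X : Type) (k : ℕ) : Set (FA X) :=
  {P | ∀ a : X → Matrix (Fin k) (Fin k) ℂ, (∀ i, IsSelfAdjoint (a i)) →
    FreeAlgebra.lift ℂ a P = 0}

/-- The hermitian part `J_k^h`. -/
def JsetH (X : Type) (k : ℕ) : Set (FA X) := {P | P ∈ Jset X k ∧ cstar P = P}

/-- The cone `Q(ℂ⟨X⟩) + C_cyc^h + J_k^h`. -/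
def coneQCJ (X : Type) (k : ℕ) : Set (FA X) :=
  {x | ∃ q ∈ Qcone X, ∃ c ∈ CcycH X, ∃ j ∈ JsetH X k, x = q + c + j}

/-- The cone `Q(ℂ⟨X⟩) + C_cyc^h`. -/
def coneQC (X : Type) : Set (FA X) :=
  {x | ∃ q ∈ Qcone X, ∃ c ∈ CcycH X, x = q + c}

namespace Aux

variable {X : Type}

abbrev eqv (X : Type) : FreeAlgebra ℂ X ≃ₐ[ℂ] MonoidAlgebra ℂ (FreeMonoid X) :=
  FreeAlgebra.equivMonoidAlgebraFreeMonoid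

/-- basis word element -/
def ew (w : FreeMonoid X) : FA X := (eqv X).symm (MonoidAlgebra.single w 1)

lemma coefficient_eq (P : FA X) : coefficient P = (eqv X P).coeff := rfl

lemma coefficient_symm_apply (f : MonoidAlgebra ℂ (FreeMonoid X)) :
    coefficient ((eqv X).symm f) = f.coeff := by
  rw [coefficient_eq]; rw [(eqv X).apply_symm_apply f]

lemma coefficient_injective : Function.Injective (coefficient (X := X)) := by
  intro a b h
  have h2 : eqv X a = eqv X b := MonoidAlgebra.coeff_injective h
  exact (eqv X).injective h2

lemma coefficient_ew (w : FreeMonoid X) : coefficient (ew w) = Finsupp.single w 1 :=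
  coefficient_symm_apply _

lemma symm_single (w : FreeMonoid X) (c : ℂ) :
    (eqv X).symm (MonoidAlgebra.single w c) = c • ew w := by
  rw [show MonoidAlgebra.single w c = c • MonoidAlgebra.single w (1:ℂ) by
    rw [MonoidAlgebra.smul_single', mul_one], map_smul]
  rfl

lemma coefficient_smul_ew (w : FreeMonoid X) (c : ℂ) :
    coefficient (c • ew w) = Finsupp.single w c := by
  rw [← symm_single, coefficient_symm_apply, MonoidAlgebra.coeff_single]

lemma star_smulc (z : ℂ) (P : FA X) : star (z • P) = z • star P := by
  rw [Algebra.smul_def, star_mul, FreeAlgebra.star_algebraMap, ← Algebra.commutes,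
    ← Algebra.smul_def]

lemma eqv_ι (x : X) : eqv X (FreeAlgebra.ι ℂ x) = MonoidAlgebra.single (FreeMonoid.of x) 1 := by
  simp [eqv, FreeAlgebra.equivMonoidAlgebraFreeMonoid]

lemma ew_of (x : X) : ew (FreeMonoid.of x) = FreeAlgebra.ι ℂ x := by
  rw [ew, ← eqv_ι]; exact (eqv X).symm_apply_apply _

lemma ew_one : ew (1 : FreeMonoid X) = 1 := by
  rw [ew, ← MonoidAlgebra.one_def, map_one]

lemma ew_mul (u v : FreeMonoid X) : ew (u * v) = ew u * ew v := by
  rw [ew, show MonoidAlgebra.single (u * v) (1:ℂ)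
      = MonoidAlgebra.single u 1 * MonoidAlgebra.single v 1 by
    rw [MonoidAlgebra.single_mul_single, one_mul], map_mul]
  rfl

lemma star_ew (w : FreeMonoid X) : star (ew w) = ew (star w) := by
  induction w using FreeMonoid.recOn with
  | one => rw [ew_one]; simp [ew_one]
  | of_mul x xs ih =>
      rw [ew_mul, star_mul, ih, ew_of, FreeAlgebra.star_ι, star_mul]
      simp only [FreeMonoid.star_of]
      rw [ew_mul, ew_of]


lemma coefficient_add (P Q : FA X) : coefficient (P + Q) = coefficient P + coefficient Q := by
  simp only [coefficient_eq, map_add, MonoidAlgebra.coeff_add]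

lemma coefficient_smulc (z : ℂ) (P : FA X) : coefficient (z • P) = z • coefficient P := by
  simp only [coefficient_eq, map_smul, MonoidAlgebra.coeff_smul]

lemma cstar_add (P Q : FA X) : cstar (P + Q) = cstar P + cstar Q := by
  unfold cstar
  rw [coefficient_add, Finsupp.mapRange_add
    (by exact fun a b => map_add _ a b), MonoidAlgebra.ofCoeff_add, map_add, star_add]

/-- `cstar` as an additive monoid hom. -/
def cstarH (X : Type) : FA X →+ FA X := AddMonoidHom.mk' cstar cstar_add

lemma cstarH_apply (P : FA X) : cstarH X P = cstar P := rfl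

lemma cstar_sum {ι : Type*} (s : Finset ι) (f : ι → FA X) :
    cstar (∑ i ∈ s, f i) = ∑ i ∈ s, cstar (f i) :=
  map_sum (cstarH X) f s

lemma cstar_smul (z : ℂ) (P : FA X) :
    cstar (z • P) = (starRingEnd ℂ z) • cstar P := by
  unfold cstar
  rw [coefficient_smulc]
  have hmr : Finsupp.mapRange (starRingEnd ℂ) (map_zero _) (z • coefficient P)
      = (starRingEnd ℂ z) • Finsupp.mapRange (starRingEnd ℂ) (map_zero _) (coefficient P) := by
    ext w
    simp [Finsupp.mapRange_apply, map_mul]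
  rw [hmr, MonoidAlgebra.ofCoeff_smul, map_smul, star_smulc]

lemma cstar_ew (w : FreeMonoid X) : cstar (ew w) = ew (star w) := by
  unfold cstar
  rw [coefficient_ew]
  have : Finsupp.mapRange (starRingEnd ℂ) (map_zero _) (Finsupp.single w (1:ℂ))
      = Finsupp.single w 1 := by
    rw [Finsupp.mapRange_single, map_one]
  rw [this]
  show star ((eqv X).symm (MonoidAlgebra.single w 1)) = _
  rw [← ew, star_ew]

lemma cstar_smul_ew (c : ℂ) (w : FreeMonoid X) :
    cstar (c • ew w) = (starRingEnd ℂ c) • ew (star w) := by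
  rw [cstar_smul, cstar_ew]

lemma P_expand (P : FA X) :
    P = ∑ w ∈ (coefficient P).support, coefficient P w • ew w := by
  conv_lhs => rw [← (eqv X).symm_apply_apply P]
  conv_lhs => rw [← MonoidAlgebra.sum_coeff_single (eqv X P), ← coefficient_eq]
  rw [map_finsuppSum]
  rw [Finsupp.sum]
  exact Finset.sum_congr rfl fun w _ => symm_single w _

lemma coefficient_finset_sum {ι : Type*} (s : Finset ι) (f : ι → FA X) :
    coefficient (∑ i ∈ s, f i) = ∑ i ∈ s, coefficient (f i) := by
  simp only [coefficient_eq, map_sum, MonoidAlgebra.coeff_sum]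

lemma cstar_mul (P Q : FA X) : cstar (P * Q) = cstar Q * cstar P := by
  rw [P_expand P, P_expand Q]
  rw [Finset.sum_mul_sum]
  simp only [cstar_sum]
  rw [Finset.sum_comm, Finset.sum_mul]
  refine Finset.sum_congr rfl fun v _ => ?_
  rw [Finset.mul_sum]
  refine Finset.sum_congr rfl fun u _ => ?_
  rw [smul_mul_smul_comm, ← ew_mul, cstar_smul_ew, cstar_smul_ew, cstar_smul_ew,
    smul_mul_smul_comm, ← ew_mul]
  simp [star_mul, map_mul, mul_comm]

lemma cstar_cstar (P : FA X) : cstar (cstar P) = P := by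
  conv_lhs => rw [P_expand P]
  simp only [cstar_sum, cstar_smul_ew, star_star, Complex.conj_conj]
  exact (P_expand P).symm

lemma coefficient_cstar (P : FA X) (w : FreeMonoid X) :
    coefficient (cstar P) w = starRingEnd ℂ (coefficient P (star w)) := by
  classical
  conv_lhs => rw [P_expand P]
  simp only [cstar_sum, cstar_smul_ew]
  rw [coefficient_finset_sum]
  simp only [coefficient_smul_ew]
  rw [Finsupp.finset_sum_apply]
  simp only [Finsupp.single_apply]
  by_cases hw : star w ∈ (coefficient P).support
  · rw [Finset.sum_eq_single (star w)]
    · simp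
    · intro v hv hne
      rw [if_neg]
      intro h
      exact hne (by rw [← h, star_star])
    · intro h; exact absurd hw h
  · have h0 : coefficient P (star w) = 0 := Finsupp.notMem_support_iff.mp hw
    rw [h0, map_zero]
    refine Finset.sum_eq_zero fun v hv => ?_
    rw [if_neg]
    intro h
    subst h
    rw [star_star] at hw
    exact hw hv

end Aux

namespace Aux
section Matrices
open Matrix

/-- Words of length at most `D` (the truncated Fock-space basis). -/
abbrev VT (n D : ℕ) : Type := ↥{l : List (Fin n) | l.length ≤ D}

noncomputable instance (n D : ℕ) : Fintype (VT n D) :=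
  (List.finite_length_le (Fin n) D).fintype

variable {n D : ℕ}

/-- Self-adjoint creation + annihilation operator for the letter `i`. -/
def AOp (n D : ℕ) (i : Fin n) : Matrix (VT n D) (VT n D) ℂ :=
  Matrix.of fun u v => (if u.1 = i :: v.1 then (1:ℂ) else 0) + (if v.1 = i :: u.1 then 1 else 0)

lemma AOp_herm (i : Fin n) : (AOp n D i)ᴴ = AOp n D i := by
  ext u v
  simp only [conjTranspose_apply, AOp, Matrix.of_apply, star_add,
    apply_ite (star : ℂ → ℂ), star_one, star_zero]
  exact add_comm _ _

/-- Product of the operators along the word `l`. -/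
def mprod (n D : ℕ) (l : List (Fin n)) : Matrix (VT n D) (VT n D) ℂ :=
  (l.map (AOp n D)).prod

lemma mprod_nil : mprod n D [] = 1 := rfl

lemma mprod_cons (i : Fin n) (l : List (Fin n)) :
    mprod n D (i :: l) = AOp n D i * mprod n D l := by
  simp [mprod]

lemma mprod_append (l₁ l₂ : List (Fin n)) :
    mprod n D (l₁ ++ l₂) = mprod n D l₁ * mprod n D l₂ := by
  rw [mprod, mprod, mprod, List.map_append, List.prod_append]

lemma mprod_herm (l : List (Fin n)) : (mprod n D l)ᴴ = mprod n D l.reverse := by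
  induction l with
  | nil => simp [mprod_nil]
  | cons i l ih =>
      rw [mprod_cons, conjTranspose_mul, ih, AOp_herm, List.reverse_cons, mprod_append]
      simp [mprod]

/-- Evaluation of polynomials at the tuple `t • AOp`. -/
def evt (n D : ℕ) (t : ℂ) : FA (Fin n) →ₐ[ℂ] Matrix (VT n D) (VT n D) ℂ :=
  FreeAlgebra.lift ℂ (fun i => t • AOp n D i)

lemma toList_star (w : FreeMonoid (Fin n)) :
    FreeMonoid.toList (star w) = (FreeMonoid.toList w).reverse := rfl

lemma length_star (w : FreeMonoid (Fin n)) :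
    FreeMonoid.length (star w) = FreeMonoid.length w :=
  List.length_reverse

lemma evt_ew (t : ℂ) (w : FreeMonoid (Fin n)) :
    evt n D t (ew w) = t ^ (FreeMonoid.length w) • mprod n D (FreeMonoid.toList w) := by
  induction w using FreeMonoid.recOn with
  | one =>
      rw [ew_one, _root_.map_one]
      simp [mprod_nil]
  | of_mul x xs ih =>
      rw [ew_mul, _root_.map_mul, ih, ew_of, evt, FreeAlgebra.lift_ι_apply, smul_mul_smul_comm]
      rw [FreeMonoid.toList_of_mul, mprod_cons, FreeMonoid.length_mul, FreeMonoid.length_of]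
      rw [← pow_succ']
      congr 1
      rw [Nat.add_comm]

/-- The homogeneous evaluation slices. -/
def uMat (n D : ℕ) (p : FA (Fin n)) (k : ℕ) : Matrix (VT n D) (VT n D) ℂ :=
  ∑ w ∈ (coefficient p).support.filter (fun w => FreeMonoid.length w = k),
    coefficient p w • mprod n D (FreeMonoid.toList w)

lemma evt_eq_sum_uMat {p : FA (Fin n)} (hp : p ∈ degLE (Fin n) D) (t : ℂ) :
    evt n D t p = ∑ k ∈ Finset.range (D+1), t ^ k • uMat n D p k := by
  rw [eq_comm]
  have h1 : ∀ k ∈ Finset.range (D+1), t ^ k • uMat n D p k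
      = ∑ w ∈ (coefficient p).support.filter (fun w => FreeMonoid.length w = k),
          coefficient p w • (t ^ (FreeMonoid.length w) • mprod n D (FreeMonoid.toList w)) := by
    intro k _
    rw [uMat, Finset.smul_sum]
    refine Finset.sum_congr rfl fun w hw => ?_
    rw [(Finset.mem_filter.mp hw).2, smul_comm]
  rw [Finset.sum_congr rfl h1]
  rw [Finset.sum_fiberwise_of_maps_to (fun w hw => Finset.mem_range.2 (Nat.lt_succ_of_le (hp w hw)))]
  conv_rhs => rw [P_expand p]
  rw [_root_.map_sum]
  exact (Finset.sum_congr rfl fun w _ => by rw [_root_.map_smul, evt_ew]).symm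

lemma degLE_cstar {p : FA (Fin n)} {m : ℕ} (hp : p ∈ degLE (Fin n) m) :
    cstar p ∈ degLE (Fin n) m := by
  intro w hw
  rw [Finsupp.mem_support_iff, coefficient_cstar] at hw
  have : star w ∈ (coefficient p).support := by
    rw [Finsupp.mem_support_iff]
    intro h0
    rw [h0, map_zero] at hw
    exact hw rfl
  have := hp _ this
  rwa [length_star] at this

lemma support_cstar_mem {p : FA (Fin n)} {w : FreeMonoid (Fin n)} :
    w ∈ (coefficient (cstar p)).support ↔ star w ∈ (coefficient p).support := by
  rw [Finsupp.mem_support_iff, Finsupp.mem_support_iff, coefficient_cstar]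
  simp

lemma uMat_cstar (p : FA (Fin n)) (k : ℕ) :
    uMat n D (cstar p) k = (uMat n D p k)ᴴ := by
  rw [uMat, uMat, conjTranspose_sum]
  refine Finset.sum_nbij' (fun w => star w) (fun w => star w) ?_ ?_ ?_ ?_ ?_
  · intro w hw
    rw [Finset.mem_filter] at hw ⊢
    exact ⟨support_cstar_mem.mp hw.1, by rw [length_star]; exact hw.2⟩ 
  · intro w hw
    rw [Finset.mem_filter] at hw ⊢
    refine ⟨support_cstar_mem.mpr (by rw [star_star]; exact hw.1), by rw [length_star]; exact hw.2⟩
  · intro w _; exact star_star w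
  · intro w _; exact star_star w
  · intro w hw
    rw [conjTranspose_smul, mprod_herm, coefficient_cstar]
    rw [toList_star, List.reverse_reverse]
    rfl

lemma trace_eval_ccyc {N : Type*} [Fintype N] [DecidableEq N]
    (B : FA (Fin n) →ₐ[ℂ] Matrix N N ℂ) {c : FA (Fin n)} (hc : c ∈ Ccyc (Fin n)) :
    Matrix.trace (B c) = 0 := by
  have h : Ccyc (Fin n) ≤ LinearMap.ker ((Matrix.traceLinearMap N ℂ ℂ).comp B.toLinearMap) := by
    rw [Ccyc, Submodule.span_le]
    rintro x ⟨P, Q, rfl⟩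
    simp only [SetLike.mem_coe, LinearMap.mem_ker, LinearMap.comp_apply, AlgHom.toLinearMap_apply,
      _root_.map_sub, _root_.map_mul, Matrix.traceLinearMap_apply]
    rw [Matrix.trace_mul_comm, sub_self]
  simpa using h hc

lemma sum_mulVec {ι : Type*} (s : Finset ι) (A : ι → Matrix (VT n D) (VT n D) ℂ)
    (x : VT n D → ℂ) : (∑ i ∈ s, A i).mulVec x = ∑ i ∈ s, (A i).mulVec x := by
  induction s using Finset.cons_induction with
  | empty => simp [Matrix.zero_mulVec]
  | cons a s ha ih => rw [Finset.sum_cons, Finset.sum_cons, Matrix.add_mulVec, ih]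

/-- The vacuum vector. -/
def vac (n D : ℕ) : VT n D → ℂ :=
  Pi.single ⟨[], by simp⟩ 1

/-- `f` vanishes on words of length at least `j`. -/
def IsLow (n D j : ℕ) (f : VT n D → ℂ) : Prop :=
  ∀ v : VT n D, j ≤ v.1.length → f v = 0

lemma IsLow.add {j : ℕ} {f g : VT n D → ℂ} (hf : IsLow n D j f) (hg : IsLow n D j g) :
    IsLow n D j (f + g) := fun v hv => by
  simp [hf v hv, hg v hv]

lemma IsLow.mono {j j' : ℕ} (h : j ≤ j') {f : VT n D → ℂ} (hf : IsLow n D j f) :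
    IsLow n D j' f := fun v hv => hf v (le_trans h hv)

lemma IsLow.mulVec_AOp {j : ℕ} {f : VT n D → ℂ} (hf : IsLow n D j f) (i : Fin n) :
    IsLow n D (j+1) ((AOp n D i).mulVec f) := by
  intro u hu
  have hrw : (AOp n D i).mulVec f u = ∑ v, AOp n D i u v * f v := rfl
  rw [hrw]
  refine Finset.sum_eq_zero fun v _ => ?_
  by_cases h1 : u.1 = i :: v.1
  · have hlen : j ≤ v.1.length := by
      have := congrArg List.length h1
      simp only [List.length_cons] at this
      omega
    rw [hf v hlen, mul_zero]
  · by_cases h2 : v.1 = i :: u.1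
    · have hlen : j ≤ v.1.length := by
        have := congrArg List.length h2
        simp only [List.length_cons] at this
        omega
      rw [hf v hlen, mul_zero]
    · simp [AOp, h1, h2]

lemma mulVec_mprod_vac (l : List (Fin n)) (hl : l.length ≤ D) :
    ∃ err : VT n D → ℂ, IsLow n D l.length err ∧
      (mprod n D l).mulVec (vac n D) =
        Pi.single (⟨l, hl⟩ : VT n D) 1 + err := by
  induction l with
  | nil =>
      refine ⟨0, fun v _ => rfl, ?_⟩
      rw [mprod_nil, Matrix.one_mulVec, add_zero]
      rfl
  | cons i l ih =>
      have hl' : l.length ≤ D := by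
        simp only [List.length_cons] at hl; omega
      obtain ⟨err, herr, heq⟩ := ih hl'
      rw [mprod_cons, ← Matrix.mulVec_mulVec, heq, Matrix.mulVec_add]
      set g : VT n D → ℂ := fun u => if l = i :: u.1 then 1 else 0 with hg
      have h1 : (AOp n D i).mulVec (Pi.single (⟨l, hl'⟩ : VT n D) 1)
          = Pi.single (⟨i :: l, hl⟩ : VT n D) 1 + g := by
        rw [Matrix.mulVec_single]
        funext u
        simp only [AOp, Matrix.of_apply, mul_one, Pi.add_apply, hg, MulOpposite.op_one, one_smul,
          Matrix.col_apply]
        rw [Pi.single_apply]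
        congr 1
        by_cases h : u.1 = i :: l
        · rw [if_pos h, if_pos (Subtype.ext h)]
        · rw [if_neg h, if_neg (fun hh => h (by rw [hh]))]
      refine ⟨g + (AOp n D i).mulVec err, ?_, ?_⟩
      · refine IsLow.add ?_ ?_
        · intro v hv
          simp only [List.length_cons] at hv
          rw [hg]
          simp only
          rw [if_neg]
          intro hcon
          have := congrArg List.length hcon
          simp only [List.length_cons] at this
          omega
        · exact herr.mulVec_AOp i
      · rw [h1, add_assoc]

lemma uMat_zero_coeff {p : FA (Fin n)} {k : ℕ} (hk : k ≤ D)
    (h : uMat n D p k = 0) :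
    ∀ w ∈ (coefficient p).support, FreeMonoid.length w = k → coefficient p w = 0 := by
  classical
  intro w hw hlen
  have hwD : (FreeMonoid.toList w).length ≤ D := by
    rw [show (FreeMonoid.toList w).length = FreeMonoid.length w from rfl, hlen]; exact hk
  set u₀ : VT n D := ⟨FreeMonoid.toList w, hwD⟩ with hu₀
  have h0 : ((uMat n D p k).mulVec (vac n D)) u₀ = 0 := by rw [h, Matrix.zero_mulVec]; rfl
  rw [uMat, sum_mulVec] at h0
  simp only [Matrix.smul_mulVec] at h0
  rw [Finset.sum_apply] at h0
  have hterm : ∀ w' ∈ (coefficient p).support.filter (fun w' => FreeMonoid.length w' = k),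
      (coefficient p w' • (mprod n D (FreeMonoid.toList w')).mulVec (vac n D)) u₀
        = coefficient p w' * (if w' = w then 1 else 0) := by
    intro w' hw'
    have hlen' : (FreeMonoid.toList w').length = k := (Finset.mem_filter.mp hw').2
    obtain ⟨err, herr, heq⟩ := mulVec_mprod_vac (D := D) (FreeMonoid.toList w') (by rw [hlen']; exact hk)
    have hu0len : u₀.1.length = k := hlen
    rw [Pi.smul_apply, heq, smul_eq_mul]
    congr 1
    rw [Pi.add_apply, herr u₀ (by rw [hlen']; exact le_of_eq hu0len.symm), add_zero]
    rw [Pi.single_apply]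
    by_cases hww : w' = w
    · subst hww
      rw [if_pos rfl, if_pos rfl]
    · rw [if_neg hww, if_neg ?_]
      intro hh
      exact hww (FreeMonoid.toList.injective (congrArg Subtype.val hh)).symm
  have hfin : ∑ w' ∈ (coefficient p).support.filter (fun w' => FreeMonoid.length w' = k),
      coefficient p w' * (if w' = w then 1 else 0) = coefficient p w := by
    rw [Finset.sum_eq_single w]
    · rw [if_pos rfl, mul_one]
    · intro b _ hbne; rw [if_neg hbne, mul_zero]
    · intro hcon; exact absurd (Finset.mem_filter.mpr ⟨hw, hlen⟩) hcon
  rw [Finset.sum_congr rfl hterm, hfin] at h0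
  exact h0

end Matrices


section PolyLayer
open Matrix
variable {n D : ℕ}

/-- Frobenius pairing of homogeneous slices. -/
def FrobC (n D : ℕ) (p : FA (Fin n)) (a b : ℕ) : ℂ :=
  Matrix.trace ((uMat n D p a)ᴴ * uMat n D p b)

/-- The "sum of squares" side polynomial. -/
def PRpoly (n D N : ℕ) (p : Fin N → FA (Fin n)) : Polynomial ℂ :=
  ∑ i : Fin N, ∑ a ∈ Finset.range (D+1), ∑ b ∈ Finset.range (D+1),
    Polynomial.C (FrobC n D (p i) a b) * Polynomial.X ^ (a+b)

/-- The coefficient-side polynomial. -/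
def PLpoly (n D : ℕ) (x : FA (Fin n)) : Polynomial ℂ :=
  ∑ w ∈ (coefficient x).support,
    Polynomial.C (coefficient x w * Matrix.trace (mprod n D (FreeMonoid.toList w)))
      * Polynomial.X ^ (FreeMonoid.length w)

lemma PL_eval (x : FA (Fin n)) (t : ℂ) :
    Matrix.trace (evt n D t x) = (PLpoly n D x).eval t := by
  conv_lhs => rw [P_expand x]
  rw [_root_.map_sum, Matrix.trace_sum, PLpoly, Polynomial.eval_finset_sum]
  refine Finset.sum_congr rfl fun w _ => ?_
  rw [_root_.map_smul, evt_ew, Polynomial.eval_mul, Polynomial.eval_C, Polynomial.eval_pow,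
    Polynomial.eval_X, smul_smul, Matrix.trace_smul, smul_eq_mul]
  ring

lemma PR_eval {N : ℕ} {p : Fin N → FA (Fin n)} (hp : ∀ i, p i ∈ degLE (Fin n) D)
    {c : FA (Fin n)} (hc : c ∈ Ccyc (Fin n)) (t : ℂ) :
    Matrix.trace (evt n D t (∑ i, cstar (p i) * p i + c)) = (PRpoly n D N p).eval t := by
  rw [_root_.map_add, Matrix.trace_add, trace_eval_ccyc _ hc, add_zero, _root_.map_sum,
    Matrix.trace_sum, PRpoly, Polynomial.eval_finset_sum]
  refine Finset.sum_congr rfl fun i _ => ?_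
  rw [_root_.map_mul, evt_eq_sum_uMat (hp i), evt_eq_sum_uMat (degLE_cstar (hp i)),
    Finset.sum_mul_sum]
  rw [Matrix.trace_sum, Polynomial.eval_finset_sum]
  refine Finset.sum_congr rfl fun a _ => ?_
  rw [Matrix.trace_sum, Polynomial.eval_finset_sum]
  refine Finset.sum_congr rfl fun b _ => ?_
  rw [Polynomial.eval_mul, Polynomial.eval_C, Polynomial.eval_pow, Polynomial.eval_X]
  rw [uMat_cstar, smul_mul_smul_comm, ← pow_add, Matrix.trace_smul, smul_eq_mul, FrobC]
  exact mul_comm _ _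

lemma PR_coeff (N : ℕ) (p : Fin N → FA (Fin n)) (M : ℕ) :
    (PRpoly n D N p).coeff M
      = ∑ i : Fin N, ∑ a ∈ Finset.range (D+1), ∑ b ∈ Finset.range (D+1),
          (if M = a + b then FrobC n D (p i) a b else 0) := by
  rw [PRpoly, Polynomial.finset_sum_coeff]
  refine Finset.sum_congr rfl fun i _ => ?_
  rw [Polynomial.finset_sum_coeff]
  refine Finset.sum_congr rfl fun a _ => ?_
  rw [Polynomial.finset_sum_coeff]
  refine Finset.sum_congr rfl fun b _ => ?_
  rw [Polynomial.coeff_C_mul, Polynomial.coeff_X_pow, mul_ite, mul_one, mul_zero]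

lemma PL_coeff_high {m : ℕ} {x : FA (Fin n)} (hx : x ∈ degLE (Fin n) m) {k : ℕ} (hk : m < k) :
    (PLpoly n D x).coeff k = 0 := by
  rw [PLpoly, Polynomial.finset_sum_coeff]
  refine Finset.sum_eq_zero fun w hw => ?_
  rw [Polynomial.coeff_C_mul, Polynomial.coeff_X_pow, if_neg, mul_zero]
  have := hx w hw
  omega

lemma trace_conjTranspose_mul_self (M : Matrix (VT n D) (VT n D) ℂ) :
    Matrix.trace (Mᴴ * M) = ((∑ u, ∑ v, Complex.normSq (M u v) : ℝ) : ℂ) := by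
  rw [Matrix.trace]
  push_cast
  rw [Finset.sum_comm]
  refine Finset.sum_congr rfl fun v _ => ?_
  rw [Matrix.diag_apply, Matrix.mul_apply]
  refine Finset.sum_congr rfl fun u _ => ?_
  rw [Matrix.conjTranspose_apply, Complex.normSq_eq_conj_mul_self]
  rfl

lemma uMat_high {p : FA (Fin n)} (hp : p ∈ degLE (Fin n) D) {k : ℕ} (hk : D < k) :
    uMat n D p k = 0 := by
  rw [uMat]
  refine Finset.sum_eq_zero fun w hw => ?_
  rw [Finset.mem_filter] at hw
  have := hp w hw.1
  have := hw.2
  omega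

/-- Downward induction: vanishing of the even coefficients of `PRpoly` above a threshold
kills the corresponding homogeneous slices. -/
lemma down {N : ℕ} {p : Fin N → FA (Fin n)} (hp : ∀ i, p i ∈ degLE (Fin n) D)
    (F : ℕ → Prop) (hFup : ∀ a b : ℕ, a ≤ b → F a → F b)
    (hco : ∀ k, F k → (PRpoly n D N p).coeff (2*k) = 0) :
    ∀ k, F k → ∀ i, uMat n D (p i) k = 0 := by
  classical
  have key : ∀ j k, D + 1 - k ≤ j → F k → ∀ i, uMat n D (p i) k = 0 := by
    intro j
    induction j with
    | zero =>
        intro k hk hF i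
        exact uMat_high (hp i) (by omega)
    | succ j ih =>
        intro k hk hF i
        by_cases hkD : D < k
        · exact uMat_high (hp i) hkD
        push_neg at hkD
        have hIH : ∀ k', k < k' → ∀ i, uMat n D (p i) k' = 0 := by
          intro k' hk' i
          exact ih k' (by omega) (hFup k k' (le_of_lt hk') hF) i
        have h2 := hco k hF
        rw [PR_coeff] at h2
        have h3 : ∀ i' : Fin N, ∑ a ∈ Finset.range (D+1), ∑ b ∈ Finset.range (D+1),
            (if 2*k = a + b then FrobC n D (p i') a b else 0) = FrobC n D (p i') k k := by
          intro i'
          rw [Finset.sum_eq_single k]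
          · rw [Finset.sum_eq_single k]
            · rw [if_pos (by omega)]
            · intro b _ hbk
              rw [if_neg (by omega)]
            · intro hcon
              exact absurd (Finset.mem_range.mpr (by omega)) hcon
          · intro a ha hak
            refine Finset.sum_eq_zero fun b _ => ?_
            by_cases hab : 2*k = a + b
            · rw [if_pos hab]
              rcases Nat.lt_or_ge k a with hka | hka
              · simp [FrobC, hIH a hka i']
              · have hkb : k < b := by omega
                simp [FrobC, hIH b hkb i']
            · rw [if_neg hab]
          · intro hcon
            exact absurd (Finset.mem_range.mpr (by omega)) hcon
        rw [Finset.sum_congr rfl (fun i' _ => h3 i')] at h2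
        -- now h2 : ∑ i', FrobC n D (p i') k k = 0
        have h4 : ∀ i' : Fin N, FrobC n D (p i') k k
            = ((∑ u, ∑ v, Complex.normSq (uMat n D (p i') k u v) : ℝ) : ℂ) := fun i' =>
          trace_conjTranspose_mul_self _
        rw [Finset.sum_congr rfl (fun i' _ => h4 i')] at h2
        rw [← Complex.ofReal_sum] at h2
        have h5 := Complex.ofReal_eq_zero.mp h2
        have h6 : ∀ i' ∈ Finset.univ (α := Fin N),
            (0:ℝ) ≤ ∑ u, ∑ v, Complex.normSq (uMat n D (p i') k u v) := by
          intro i' _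
          refine Finset.sum_nonneg fun u _ => Finset.sum_nonneg fun v _ => Complex.normSq_nonneg _
        have h7 := (Finset.sum_eq_zero_iff_of_nonneg h6).mp h5 i (Finset.mem_univ i)
        ext u v
        have h8 : ∀ u' ∈ Finset.univ (α := VT n D),
            (0:ℝ) ≤ ∑ v', Complex.normSq (uMat n D (p i) k u' v') := fun u' _ =>
          Finset.sum_nonneg fun v' _ => Complex.normSq_nonneg _
        have h9 := (Finset.sum_eq_zero_iff_of_nonneg h8).mp h7 u (Finset.mem_univ u)
        have h10 := (Finset.sum_eq_zero_iff_of_nonneg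
          (fun v' _ => Complex.normSq_nonneg (uMat n D (p i) k u v'))).mp h9 v (Finset.mem_univ v)
        simpa using Complex.normSq_eq_zero.mp h10
  intro k hF i
  exact key (D + 1 - k) k le_rfl hF i

end PolyLayer

section Kill
open Matrix
variable {n : ℕ}

lemma degree_bound {m N : ℕ} {p : Fin N → FA (Fin n)} {c : FA (Fin n)}
    (hc : c ∈ Ccyc (Fin n))
    (hx : (∑ i, cstar (p i) * p i + c) ∈ degLE (Fin n) m) :
    ∀ i, ∀ w ∈ (coefficient (p i)).support, 2 * FreeMonoid.length w ≤ m := by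
  classical
  set D := Finset.univ.sup (fun i : Fin N => (coefficient (p i)).support.sup FreeMonoid.length)
    with hD
  have hp : ∀ i, p i ∈ degLE (Fin n) D := fun i w hw =>
    le_trans (Finset.le_sup (f := FreeMonoid.length) hw)
      (Finset.le_sup (f := fun i : Fin N => (coefficient (p i)).support.sup FreeMonoid.length)
        (Finset.mem_univ i))
  have hfun : PLpoly n D (∑ i, cstar (p i) * p i + c) = PRpoly n D N p := by
    apply Polynomial.funext
    intro t
    rw [← PL_eval, ← PR_eval hp hc]
  have hdown := down (D := D) hp (fun k => m < 2*k) (fun a b hab hFa => by omega)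
    (fun k hk => by rw [← hfun]; exact PL_coeff_high hx (by omega))
  intro i w hw
  by_contra hcon
  push_neg at hcon
  have hkD : FreeMonoid.length w ≤ D := hp i w hw
  have h0 := uMat_zero_coeff (D := D) hkD
    (hdown (FreeMonoid.length w) (by omega) i) w hw rfl
  exact (Finsupp.mem_support_iff.mp hw) h0

lemma coefficient_zero : coefficient (0 : FA (Fin n)) = 0 := by
  rw [coefficient_eq, map_zero, MonoidAlgebra.coeff_zero]

lemma sos_zero_of_ccyc {N : ℕ} {p : Fin N → FA (Fin n)}
    (h : (∑ i, cstar (p i) * p i) ∈ Ccyc (Fin n)) : ∀ i, p i = 0 := by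
  classical
  set D := Finset.univ.sup (fun i : Fin N => (coefficient (p i)).support.sup FreeMonoid.length)
    with hD
  have hp : ∀ i, p i ∈ degLE (Fin n) D := fun i w hw =>
    le_trans (Finset.le_sup (f := FreeMonoid.length) hw)
      (Finset.le_sup (f := fun i : Fin N => (coefficient (p i)).support.sup FreeMonoid.length)
        (Finset.mem_univ i))
  have hPR : PRpoly n D N p = 0 := by
    apply Polynomial.funext
    intro t
    have h1 := PR_eval (D := D) hp (Submodule.neg_mem _ h) t
    rw [add_neg_cancel, _root_.map_zero, Matrix.trace_zero] at h1
    rw [← h1, Polynomial.eval_zero]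
  have hdown := down (D := D) hp (fun _ => True) (fun _ _ _ _ => trivial)
    (fun k _ => by rw [hPR, Polynomial.coeff_zero])
  intro i
  apply coefficient_injective
  rw [coefficient_zero]
  ext w
  rw [Finsupp.coe_zero, Pi.zero_apply]
  by_cases hw : w ∈ (coefficient (p i)).support
  · exact uMat_zero_coeff (hp i w hw) (hdown _ trivial i) w hw rfl
  · exact Finsupp.notMem_support_iff.mp hw

end Kill

section Gram
open Matrix

open scoped MatrixOrder in
lemma psdB {ι : Type} [Fintype ι] [DecidableEq ι] {M : Matrix ι ι ℂ} (h : M.PosSemidef) :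
    ∃ B : Matrix ι ι ℂ, M = Bᴴ * B := by
  have h0 : 0 ≤ M := h.nonneg
  refine ⟨CFC.sqrt M, ?_⟩
  have hs : (CFC.sqrt M)ᴴ = CFC.sqrt M := (CFC.sqrt_nonneg M).isSelfAdjoint
  rw [hs, CFC.sqrt_mul_sqrt_self M h0]
variable {n m : ℕ}

lemma rep_fintype {p : FA (Fin n)} (hp : p ∈ degLE (Fin n) m) :
    p = ∑ u : VT n m, coefficient p (FreeMonoid.ofList u.1) • ew (FreeMonoid.ofList u.1) := by
  classical
  apply coefficient_injective
  rw [coefficient_finset_sum]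
  simp only [coefficient_smul_ew]
  ext w
  rw [Finsupp.finset_sum_apply]
  simp only [Finsupp.single_apply]
  by_cases hw : FreeMonoid.length w ≤ m
  · rw [Finset.sum_eq_single (⟨FreeMonoid.toList w, hw⟩ : VT n m)]
    · split
      · rfl
      · next hne => exact absurd rfl hne
    · intro u _ hne
      rw [if_neg]
      intro hh
      exact hne (Subtype.ext (congrArg FreeMonoid.toList hh))
    · intro hcon
      exact absurd (Finset.mem_univ _) hcon
  · have hz : (coefficient p) w = 0 :=
      Finsupp.notMem_support_iff.mp fun hmem => hw (hp w hmem)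
    rw [hz]
    refine (Finset.sum_eq_zero fun u _ => ?_).symm
    rw [if_neg]
    intro hh
    apply hw
    rw [← hh]
    exact u.2
  
/-- The Gram-matrix map. -/
def Φg (n m : ℕ) (g : VT n m → VT n m → ℂ) : FA (Fin n) :=
  ∑ u : VT n m, ∑ v : VT n m,
    g u v • (cstar (ew (FreeMonoid.ofList u.1)) * ew (FreeMonoid.ofList v.1))

lemma Φg_gram {ι : Type*} [Fintype ι] (B : ι → VT n m → ℂ) :
    Φg n m (fun u v => ∑ i, starRingEnd ℂ (B i u) * B i v)
      = ∑ i, cstar (∑ u : VT n m, B i u • ew (FreeMonoid.ofList u.1))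
            * (∑ u : VT n m, B i u • ew (FreeMonoid.ofList u.1)) := by
  have step : ∀ i : ι, cstar (∑ u : VT n m, B i u • ew (FreeMonoid.ofList u.1))
        * (∑ u : VT n m, B i u • ew (FreeMonoid.ofList u.1))
      = ∑ u : VT n m, ∑ v : VT n m,
          (starRingEnd ℂ (B i u) * B i v)
            • (cstar (ew (FreeMonoid.ofList u.1)) * ew (FreeMonoid.ofList v.1)) := by
    intro i
    rw [cstar_sum, Finset.sum_mul_sum]
    refine Finset.sum_congr rfl fun u _ => Finset.sum_congr rfl fun v _ => ?_
    rw [cstar_smul, smul_mul_smul_comm]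
  rw [Finset.sum_congr rfl fun i _ => step i, Φg, eq_comm, Finset.sum_comm]
  refine Finset.sum_congr rfl fun u _ => ?_
  rw [Finset.sum_comm]
  refine Finset.sum_congr rfl fun v _ => ?_
  rw [Finset.sum_smul]

lemma cstar_ew_mul_ew (u v : FreeMonoid (Fin n)) :
    cstar (ew u) * ew v = ew (star u * v) := by
  rw [cstar_ew, ← ew_mul]

lemma Φg_degLE (g : VT n m → VT n m → ℂ) : Φg n m g ∈ degLE (Fin n) (2*m) := by
  classical
  intro w hw
  rw [Φg] at hw
  rw [coefficient_finset_sum] at hw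
  have h1 := Finsupp.support_finset_sum hw
  rw [Finset.mem_biUnion] at h1
  obtain ⟨u, _, hu⟩ := h1
  rw [coefficient_finset_sum] at hu
  have h2 := Finsupp.support_finset_sum hu
  rw [Finset.mem_biUnion] at h2
  obtain ⟨v, _, hv⟩ := h2
  rw [cstar_ew_mul_ew, coefficient_smul_ew] at hv
  have h3 := Finsupp.support_single_subset hv
  rw [Finset.mem_singleton] at h3
  subst h3
  rw [FreeMonoid.length_mul, length_star]
  have hu2 : FreeMonoid.length (FreeMonoid.ofList u.1) ≤ m := u.2
  have hv2 : FreeMonoid.length (FreeMonoid.ofList v.1) ≤ m := v.2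
  omega

lemma coeff_comb (B : VT n m → ℂ) (u₀ : VT n m) :
    coefficient (∑ u : VT n m, B u • ew (FreeMonoid.ofList u.1)) (FreeMonoid.ofList u₀.1)
      = B u₀ := by
  classical
  rw [coefficient_finset_sum]
  simp only [coefficient_smul_ew]
  rw [Finsupp.finset_sum_apply]
  simp only [Finsupp.single_apply]
  rw [Finset.sum_eq_single u₀]
  · rw [if_pos rfl]
  · intro u _ hne
    rw [if_neg]
    intro hh
    exact hne (Subtype.ext (congrArg FreeMonoid.toList hh))
  · intro hcon
    exact absurd (Finset.mem_univ _) hcon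

lemma kappa_inj {M : ℕ} {x y : FA (Fin n)} (hx : x ∈ degLE (Fin n) M)
    (hy : y ∈ degLE (Fin n) M)
    (h : ∀ u : VT n M, coefficient x (FreeMonoid.ofList u.1) = coefficient y (FreeMonoid.ofList u.1)) :
    x = y := by
  classical
  apply coefficient_injective
  ext w
  by_cases hw : FreeMonoid.length w ≤ M
  · exact h ⟨FreeMonoid.toList w, hw⟩
  · have h1 : coefficient x w = 0 :=
      Finsupp.notMem_support_iff.mp fun hmem => hw (hx w hmem)
    have h2 : coefficient y w = 0 :=
      Finsupp.notMem_support_iff.mp fun hmem => hw (hy w hmem)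
    rw [h1, h2]

lemma degLE_mono {M M' : ℕ} (h : M ≤ M') {x : FA (Fin n)} (hx : x ∈ degLE (Fin n) M) :
    x ∈ degLE (Fin n) M' := fun w hw => le_trans (hx w hw) h

lemma degLE_sub {M : ℕ} {x y : FA (Fin n)} (hx : x ∈ degLE (Fin n) M)
    (hy : y ∈ degLE (Fin n) M) : (x - y) ∈ degLE (Fin n) M := by
  classical
  intro w hw
  have : coefficient (x - y) = coefficient x - coefficient y := by
    simp only [coefficient_eq, map_sub, MonoidAlgebra.coeff_sub]
  rw [this] at hw
  have h1 := Finsupp.support_sub hw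
  rw [Finset.mem_union] at h1
  rcases h1 with h1 | h1
  · exact hx w h1
  · exact hy w h1

end Gram


section ClosedImage

lemma isClosed_image_cone {E F : Type*} [NormedAddCommGroup E] [NormedSpace ℝ E]
    [FiniteDimensional ℝ E] [NormedAddCommGroup F] [NormedSpace ℝ F]
    (f : E →ₗ[ℝ] F) {C : Set E} (hC : IsClosed C)
    (hcone : ∀ t : ℝ, 0 < t → ∀ x ∈ C, t • x ∈ C)
    (hker : ∀ x ∈ C, f x = 0 → x = 0) : IsClosed (f '' C) := by
  have hfc : Continuous f := f.continuous_of_finiteDimensional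
  rw [← isSeqClosed_iff_isClosed]
  intro u y hu hy
  choose x hxC hfx using hu
  by_cases hbd : ∃ R : ℝ, ∀ j, ‖x j‖ ≤ R
  · obtain ⟨R, hR⟩ := hbd
    have hbdd : Bornology.IsBounded (C ∩ Metric.closedBall 0 R) :=
      Metric.isBounded_closedBall.subset Set.inter_subset_right
    have hmem : ∀ j, x j ∈ C ∩ Metric.closedBall 0 R := fun j =>
      ⟨hxC j, by simpa [Metric.mem_closedBall, dist_zero_right] using hR j⟩
    obtain ⟨a, ha, φ, hφ, hlim⟩ := tendsto_subseq_of_bounded hbdd hmem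
    have haC : a ∈ C :=
      ((closure_mono Set.inter_subset_left).trans (le_of_eq hC.closure_eq)) ha
    refine ⟨a, haC, ?_⟩
    have h1 : Filter.Tendsto (fun k => f (x (φ k))) Filter.atTop (nhds (f a)) :=
      (hfc.tendsto a).comp hlim
    have h2 : Filter.Tendsto (fun k => f (x (φ k))) Filter.atTop (nhds y) := by
      have h3 : Filter.Tendsto (fun k => u (φ k)) Filter.atTop (nhds y) :=
        hy.comp hφ.tendsto_atTop
      have h4 : (fun k => f (x (φ k))) = fun k => u (φ k) := funext fun k => hfx (φ k)
      rw [h4]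
      exact h3
    exact tendsto_nhds_unique h1 h2
  · exfalso
    push_neg at hbd
    have hbd' : ∀ k : ℕ, ∃ j, ((k : ℝ) + 1) < ‖x j‖ := fun k => hbd ((k : ℝ) + 1)
    choose χ hχ using hbd'
    have hxpos : ∀ k, (0:ℝ) < ‖x (χ k)‖ := fun k =>
      lt_of_le_of_lt (by positivity) (hχ k)
    set z : ℕ → E := fun k => ‖x (χ k)‖⁻¹ • x (χ k) with hz
    have hzC : ∀ k, z k ∈ C := fun k =>
      hcone _ (inv_pos.mpr (hxpos k)) _ (hxC (χ k))
    have hznorm : ∀ k, ‖z k‖ = 1 := fun k => by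
      rw [hz]
      simp only [norm_smul, norm_inv, norm_norm]
      exact inv_mul_cancel₀ (ne_of_gt (hxpos k))
    have hmem : ∀ k, z k ∈ C ∩ Metric.closedBall 0 1 := fun k =>
      ⟨hzC k, by simp [Metric.mem_closedBall, dist_zero_right, hznorm k]⟩
    have hbdd : Bornology.IsBounded (C ∩ Metric.closedBall 0 1) :=
      Metric.isBounded_closedBall.subset Set.inter_subset_right
    obtain ⟨a, ha, φ, hφ, hlim⟩ := tendsto_subseq_of_bounded hbdd hmem
    have haC : a ∈ C :=
      ((closure_mono Set.inter_subset_left).trans (le_of_eq hC.closure_eq)) ha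
    have hanorm : ‖a‖ = 1 := by
      have l1 : Filter.Tendsto (fun k => ‖z (φ k)‖) Filter.atTop (nhds ‖a‖) :=
        (continuous_norm.tendsto a).comp hlim
      have l2 : Filter.Tendsto (fun k => ‖z (φ k)‖) Filter.atTop (nhds 1) := by
        simp only [hznorm]
        exact tendsto_const_nhds
      exact tendsto_nhds_unique l1 l2
    -- bound on ‖u j‖
    have hub : ∃ Mu : ℝ, ∀ j, ‖u j‖ ≤ Mu := by
      have : Filter.Tendsto (fun j => ‖u j‖) Filter.atTop (nhds ‖y‖) :=
        (continuous_norm.tendsto y).comp hy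
      obtain ⟨Mu, hMu⟩ := this.bddAbove_range
      exact ⟨Mu, fun j => hMu (Set.mem_range_self j)⟩
    obtain ⟨Mu, hMu⟩ := hub
    have hMu0 : 0 ≤ Mu := le_trans (norm_nonneg (u 0)) (hMu 0)
    have hfz : ∀ k, f (z k) = ‖x (χ k)‖⁻¹ • u (χ k) := fun k => by
      rw [hz]
      simp only [map_smul]
      rw [hfx]
    have hb1 : ∀ k, ‖f (z (φ k))‖ ≤ Mu / ((k:ℝ) + 1) := by
      intro k
      rw [hfz, norm_smul, norm_inv, norm_norm]
      have hk1 : ((k:ℝ) + 1) ≤ ((φ k : ℝ) + 1) := by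
        have hkk : (k:ℝ) ≤ (φ k : ℝ) := by exact_mod_cast hφ.le_apply
        linarith
      have hk2 : ((k:ℝ) + 1) < ‖x (χ (φ k))‖ := lt_of_le_of_lt hk1 (hχ (φ k))
      have hpos : (0:ℝ) < (k:ℝ) + 1 := by positivity
      rw [div_eq_mul_inv, mul_comm Mu _]
      apply mul_le_mul
      · exact inv_anti₀ hpos (le_of_lt hk2)
      · exact hMu _
      · exact norm_nonneg _
      · positivity
    have hlim0 : Filter.Tendsto (fun k => f (z (φ k))) Filter.atTop (nhds 0) := by
      apply squeeze_zero_norm hb1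
      have : Filter.Tendsto (fun k : ℕ => Mu * (1 / ((k:ℝ) + 1))) Filter.atTop (nhds (Mu * 0)) :=
        tendsto_one_div_add_atTop_nhds_zero_nat.const_mul Mu
      simpa [div_eq_mul_inv, one_div, mul_comm] using this
    have hlimfa : Filter.Tendsto (fun k => f (z (φ k))) Filter.atTop (nhds (f a)) :=
      (hfc.tendsto a).comp hlim
    have hfa0 : f a = 0 := tendsto_nhds_unique hlimfa hlim0
    have : a = 0 := hker a haC hfa0
    rw [this, norm_zero] at hanorm
    exact zero_ne_one hanorm

end ClosedImage

section Assemble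
open Matrix
variable {n m : ℕ}

/-- Coordinates of a polynomial on words of length at most `M`. -/
def κfun (n M : ℕ) (p : FA (Fin n)) : VT n M → ℂ :=
  fun u => coefficient p (FreeMonoid.ofList u.1)

lemma κfun_add {M : ℕ} (p q : FA (Fin n)) :
    κfun n M (p + q) = κfun n M p + κfun n M q := by
  funext u
  rw [κfun, coefficient_add]
  rfl

lemma κfun_zero {M : ℕ} : κfun n M (0 : FA (Fin n)) = 0 := by
  funext u
  rw [κfun, coefficient_zero]
  rfl

lemma κfun_csmul {M : ℕ} (z : ℂ) (p : FA (Fin n)) :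
    κfun n M (z • p) = z • κfun n M p := by
  funext u
  rw [κfun, coefficient_smulc]
  rfl

lemma csmul_eq_rsmul {α : Type*} (r : ℝ) (f : α → ℂ) : (r:ℂ) • f = r • f := by
  funext u
  rw [Pi.smul_apply, Pi.smul_apply, Complex.real_smul, smul_eq_mul]

lemma Φg_add (g g' : VT n m → VT n m → ℂ) :
    Φg n m (g + g') = Φg n m g + Φg n m g' := by
  rw [Φg, Φg, Φg, ← Finset.sum_add_distrib]
  refine Finset.sum_congr rfl fun u _ => ?_
  rw [← Finset.sum_add_distrib]
  refine Finset.sum_congr rfl fun v _ => ?_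
  rw [Pi.add_apply, Pi.add_apply, add_smul]

lemma Φg_rsmul (r : ℝ) (g : VT n m → VT n m → ℂ) :
    Φg n m (r • g) = ((r:ℂ)) • Φg n m g := by
  rw [Φg, Φg, Finset.smul_sum]
  refine Finset.sum_congr rfl fun u _ => ?_
  rw [Finset.smul_sum]
  refine Finset.sum_congr rfl fun v _ => ?_
  rw [Pi.smul_apply, Pi.smul_apply, Complex.real_smul, mul_smul]

lemma Φg_zero : Φg n m (0 : VT n m → VT n m → ℂ) = 0 := by
  rw [Φg]
  refine Finset.sum_eq_zero fun u _ => Finset.sum_eq_zero fun v _ => ?_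
  rw [Pi.zero_apply, Pi.zero_apply, zero_smul]

lemma cstar_zero : cstar (0 : FA (Fin n)) = 0 := map_zero (cstarH (Fin n))

lemma degLE_zero {M : ℕ} : (0 : FA (Fin n)) ∈ degLE (Fin n) M := by
  intro w hw
  rw [coefficient_zero] at hw
  simp at hw

lemma degLE_add {M : ℕ} {x y : FA (Fin n)} (hx : x ∈ degLE (Fin n) M)
    (hy : y ∈ degLE (Fin n) M) : (x + y) ∈ degLE (Fin n) M := by
  classical
  intro w hw
  rw [coefficient_add] at hw
  rcases Finset.mem_union.mp (Finsupp.support_add hw) with h | h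
  · exact hx w h
  · exact hy w h

lemma degLE_csmul {M : ℕ} (z : ℂ) {x : FA (Fin n)} (hx : x ∈ degLE (Fin n) M) :
    (z • x) ∈ degLE (Fin n) M := by
  intro w hw
  rw [coefficient_smulc] at hw
  exact hx w (Finsupp.support_smul hw)

/-- The (coordinates of) hermitian commutator-span elements of degree at most `2m`:
an `ℝ`-subspace. -/
def Scyc (n m : ℕ) : Submodule ℝ (VT n (2*m) → ℂ) where
  carrier := {c | ∃ p : FA (Fin n), p ∈ Ccyc (Fin n) ∧ cstar p = p ∧
    p ∈ degLE (Fin n) (2*m) ∧ c = κfun n (2*m) p}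
  add_mem' := by
    rintro a b ⟨p, hp1, hp2, hp3, rfl⟩ ⟨q, hq1, hq2, hq3, rfl⟩
    exact ⟨p + q, Submodule.add_mem _ hp1 hq1, by rw [cstar_add, hp2, hq2],
      degLE_add hp3 hq3, (κfun_add p q).symm⟩
  zero_mem' := ⟨0, Submodule.zero_mem _, cstar_zero, degLE_zero, κfun_zero.symm⟩
  smul_mem' := by
    rintro r a ⟨p, hp1, hp2, hp3, rfl⟩
    refine ⟨(r:ℂ) • p, Submodule.smul_mem _ _ hp1, ?_, degLE_csmul _ hp3, ?_⟩
    · rw [cstar_smul, Complex.conj_ofReal, hp2]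
    · rw [κfun_csmul, csmul_eq_rsmul]

/-- The closed set of nonnegative complex numbers. -/
lemma isClosed_nonnegC : IsClosed {z : ℂ | 0 ≤ z} := by
  have heq : {z : ℂ | 0 ≤ z} = Complex.re ⁻¹' (Set.Ici 0) ∩ Complex.im ⁻¹' {0} := by
    ext z
    simp only [Set.mem_setOf_eq, Set.mem_inter_iff, Set.mem_preimage, Set.mem_Ici,
      Set.mem_singleton_iff]
    rw [Complex.le_def]
    simp [eq_comm]
  rw [heq]
  exact (isClosed_Ici.preimage Complex.continuous_re).inter
    (isClosed_singleton.preimage Complex.continuous_im)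

lemma isClosed_psd (n m : ℕ) :
    IsClosed {g : VT n m → VT n m → ℂ | (Matrix.of g).PosSemidef} := by
  have heq : {g : VT n m → VT n m → ℂ | (Matrix.of g).PosSemidef}
      = (⋂ (u : VT n m) (v : VT n m), {g : VT n m → VT n m → ℂ | star (g v u) = g u v})
        ∩ ⋂ (x : VT n m → ℂ), {g : VT n m → VT n m → ℂ |
            dotProduct (star x) ((Matrix.of g).mulVec x) ∈ {z : ℂ | 0 ≤ z}} := by
    ext g
    simp only [Set.mem_setOf_eq, Set.mem_inter_iff, Set.mem_iInter,
      Matrix.posSemidef_iff_dotProduct_mulVec]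
    constructor
    · rintro ⟨h1, h2⟩
      refine ⟨fun u v => ?_, fun x => h2 x⟩
      exact congrFun (congrFun h1 u) v
    · rintro ⟨h1, h2⟩
      refine ⟨?_, fun x => h2 x⟩
      ext u v
      exact h1 u v
  rw [heq]
  refine IsClosed.inter ?_ ?_
  · refine isClosed_iInter fun u => isClosed_iInter fun v => ?_
    exact isClosed_eq (continuous_star.comp ((continuous_apply u).comp (continuous_apply v)))
      ((continuous_apply v).comp (continuous_apply u))
  · refine isClosed_iInter fun x => ?_
    refine IsClosed.preimage ?_ isClosed_nonnegC
    have hrw : (fun g : VT n m → VT n m → ℂ =>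
        dotProduct (star x) ((Matrix.of g).mulVec x))
        = fun g => ∑ u, star (x u) * ∑ v, g u v * x v := rfl
    rw [hrw]
    refine continuous_finset_sum _ fun u _ => Continuous.mul continuous_const ?_
    exact continuous_finset_sum _ fun v _ =>
      Continuous.mul ((continuous_apply v).comp (continuous_apply u)) continuous_const

lemma psd_rsmul {t : ℝ} (ht : 0 ≤ t) {g : VT n m → VT n m → ℂ}
    (hg : (Matrix.of g).PosSemidef) : (Matrix.of (t • g)).PosSemidef := by
  refine Matrix.PosSemidef.of_dotProduct_mulVec_nonneg ?_ ?_
  · ext u v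
    have h1 := congrFun (congrFun hg.1 u) v
    show star ((t • g) v u) = (t • g) u v
    rw [Pi.smul_apply, Pi.smul_apply, Pi.smul_apply, Pi.smul_apply, star_smul, star_trivial]
    rw [show star (g v u) = g u v from h1]
  · intro x
    have h2 := hg.dotProduct_mulVec_nonneg x
    have hof : Matrix.of (t • g) = t • Matrix.of g := rfl
    rw [hof, Matrix.smul_mulVec, dotProduct_smul]
    rw [Complex.real_smul]
    have ht' : (0:ℂ) ≤ (t:ℂ) := by
      rw [Complex.le_def]
      simp [ht]
    exact mul_nonneg ht' h2

/-- The linear parametrization of the cone. -/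
def Ψmap (n m : ℕ) : ((VT n m → VT n m → ℂ) × (VT n (2*m) → ℂ)) →ₗ[ℝ] (VT n (2*m) → ℂ) where
  toFun gc := κfun n (2*m) (Φg n m gc.1) + gc.2
  map_add' a b := by
    show κfun n (2*m) (Φg n m (a.1 + b.1)) + (a.2 + b.2) = _
    rw [Φg_add, κfun_add]
    abel
  map_smul' r a := by
    show κfun n (2*m) (Φg n m (r • a.1)) + r • a.2 = r • (κfun n (2*m) (Φg n m a.1) + a.2)
    rw [Φg_rsmul, κfun_csmul, csmul_eq_rsmul, smul_add]

/-- The parameter cone. -/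
def C₀set (n m : ℕ) : Set ((VT n m → VT n m → ℂ) × (VT n (2*m) → ℂ)) :=
  {gc | (Matrix.of gc.1).PosSemidef ∧ gc.2 ∈ Scyc n m}

lemma isClosed_C₀ (n m : ℕ) : IsClosed (C₀set n m) := by
  have heq : C₀set n m = {g : VT n m → VT n m → ℂ | (Matrix.of g).PosSemidef}
      ×ˢ (Scyc n m : Set (VT n (2*m) → ℂ)) := by
    ext gc
    simp [C₀set, Set.mem_prod, SetLike.mem_coe]
  rw [heq]
  exact (isClosed_psd n m).prod (Submodule.closed_of_finiteDimensional _)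

lemma cone_C₀ (n m : ℕ) : ∀ t : ℝ, 0 < t → ∀ x ∈ C₀set n m, t • x ∈ C₀set n m := by
  rintro t ht gc ⟨h1, h2⟩
  exact ⟨psd_rsmul (le_of_lt ht) h1, Submodule.smul_mem _ _ h2⟩

lemma kernel_C₀ (n m : ℕ) : ∀ x ∈ C₀set n m, Ψmap n m x = 0 → x = 0 := by
  classical
  rintro ⟨g, c⟩ ⟨hpsd, p, hp1, hp2, hp3, rfl⟩ h0
  have h0' : κfun n (2*m) (Φg n m g + p) = 0 := by
    rw [κfun_add]
    exact h0
  have hxdeg : (Φg n m g + p) ∈ degLE (Fin n) (2*m) := degLE_add (Φg_degLE g) hp3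
  have hx0 : Φg n m g + p = 0 := by
    refine kappa_inj hxdeg degLE_zero fun u => ?_
    rw [coefficient_zero]
    exact congrFun h0' u
  have hccyc : Φg n m g ∈ Ccyc (Fin n) := by
    rw [eq_neg_of_add_eq_zero_left hx0]
    exact Submodule.neg_mem _ hp1
  -- Gram decomposition
  obtain ⟨B, hB⟩ := psdB hpsd
  have hgB : g = fun u v => ∑ i, starRingEnd ℂ (B i u) * B i v := by
    funext u v
    have := congrFun (congrFun hB u) v
    rw [show (Matrix.of g) u v = g u v from rfl] at this
    rw [this, Matrix.mul_apply]
    exact Finset.sum_congr rfl fun i _ => by rw [Matrix.conjTranspose_apply, starRingEnd_apply]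
  set r : VT n m → FA (Fin n) := fun i => ∑ u : VT n m, B i u • ew (FreeMonoid.ofList u.1)
    with hr
  have hΦB : Φg n m g = ∑ i : VT n m, cstar (r i) * r i := by
    rw [hgB]
    exact Φg_gram B
  -- transfer to a `Fin`-indexed family
  set N := Fintype.card (VT n m) with hN
  set e := (Fintype.equivFin (VT n m)).symm with he
  have hsum : (∑ k : Fin N, cstar (r (e k)) * r (e k)) = ∑ i : VT n m, cstar (r i) * r i :=
    Equiv.sum_comp e (fun i => cstar (r i) * r i)
  have hmem : (∑ k : Fin N, cstar (r (e k)) * r (e k)) ∈ Ccyc (Fin n) := by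
    rw [hsum, ← hΦB]
    exact hccyc
  have hrzero : ∀ i : VT n m, r i = 0 := by
    intro i
    have h5 := sos_zero_of_ccyc hmem (e.symm i)
    rw [Equiv.apply_symm_apply] at h5
    exact h5
  have hBzero : ∀ i u, B i u = 0 := by
    intro i u
    have h1 := coeff_comb (fun u => B i u) u
    rw [show (∑ u : VT n m, B i u • ew (FreeMonoid.ofList u.1)) = r i from rfl, hrzero i,
      coefficient_zero] at h1
    exact h1.symm
  have hg0 : g = 0 := by
    rw [hgB]
    funext u v
    simp [hBzero]
  have hc0 : κfun n (2*m) p = 0 := by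
    have := h0
    rw [show Ψmap n m (g, κfun n (2*m) p)
        = κfun n (2*m) (Φg n m g) + κfun n (2*m) p from rfl, hg0, Φg_zero, κfun_zero,
      zero_add] at this
    exact this
  rw [hg0, hc0]
  rfl

end Assemble

end Aux

/-- The convex cone `Q(ℂ⟨X⟩) + C_cyc^h` is closed in `ℂ⟨X⟩^h`
with its finest locally convex topology; equivalently, for every `m` its
intersection with the finite-dimensional space `ℂ⟨X⟩^h_{≤m}` is closed there.
Closedness of the intersection in the finite-dimensional space is expressed
sequentially (via coefficientwise convergence, which is convergence in any norm
on that finite-dimensional space): any coefficientwise limit, hermitian and of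
degree at most `m`, of a sequence of hermitian elements of the cone of degree at
most `m` again lies in the cone. -/
theorem cone_QC_closed (n : ℕ) (m : ℕ)
    (P : ℕ → FA (Fin n)) (Q : FA (Fin n))
    (hP : ∀ j, P j ∈ herm (Fin n) ∩ degLE (Fin n) m ∩ coneQC (Fin n))
    (hQh : Q ∈ herm (Fin n)) (hQd : Q ∈ degLE (Fin n) m)
    (hconv : ∀ w : FreeMonoid (Fin n),
      Filter.Tendsto (fun j => coefficient (P j) w) Filter.atTop
        (nhds (coefficient Q w))) :
    Q ∈ coneQC (Fin n) := by
  classical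
  have hclosed : IsClosed (Aux.Ψmap n m '' Aux.C₀set n m) :=
    Aux.isClosed_image_cone (Aux.Ψmap n m) (Aux.isClosed_C₀ n m) (Aux.cone_C₀ n m)
      (Aux.kernel_C₀ n m)
  have hmem : ∀ j, Aux.κfun n (2*m) (P j) ∈ Aux.Ψmap n m '' Aux.C₀set n m := by
    intro j
    obtain ⟨⟨hherm, hdeg⟩, q, hq, c, hcc, hPeq⟩ := hP j
    obtain ⟨N, pf, rfl⟩ := hq
    have hxdeg : (∑ i, cstar (pf i) * pf i + c) ∈ degLE (Fin n) m := by
      rw [← hPeq]; exact hdeg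
    have hdb := Aux.degree_bound hcc.1 hxdeg
    have hpf : ∀ i, pf i ∈ degLE (Fin n) m := by
      intro i w hw
      have := hdb i w hw
      omega
    set B : Fin N → Aux.VT n m → ℂ := fun i u => coefficient (pf i) (FreeMonoid.ofList u.1)
      with hBdef
    set g : Aux.VT n m → Aux.VT n m → ℂ :=
      fun u v => ∑ i, (starRingEnd ℂ) (B i u) * B i v with hgdef
    have hΦ : Aux.Φg n m g = ∑ i, cstar (pf i) * pf i := by
      rw [hgdef, Aux.Φg_gram B]
      refine Finset.sum_congr rfl fun i _ => ?_
      rw [← Aux.rep_fintype (hpf i)]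
    have hpsd : (Matrix.of g).PosSemidef := by
      set BM : Matrix (Fin N) (Aux.VT n m) ℂ := Matrix.of B with hBM
      have hfac : Matrix.of g = Matrix.conjTranspose BM * BM := by
        ext u v
        show (∑ i, (starRingEnd ℂ) (B i u) * B i v) = _
        rw [Matrix.mul_apply]
        refine Finset.sum_congr rfl fun i _ => ?_
        rw [Matrix.conjTranspose_apply]
        rfl
      rw [hfac]
      exact Matrix.posSemidef_conjTranspose_mul_self _
    have hcdeg : c ∈ degLE (Fin n) (2*m) := by
      have h1 : c = P j - (∑ i, cstar (pf i) * pf i) := by rw [hPeq]; abel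
      rw [h1]
      exact Aux.degLE_sub (Aux.degLE_mono (by omega) hdeg)
        (by rw [← hΦ]; exact Aux.Φg_degLE g)
    refine ⟨(g, Aux.κfun n (2*m) c), ⟨hpsd, ⟨c, hcc.1, hcc.2, hcdeg, rfl⟩⟩, ?_⟩
    show Aux.κfun n (2*m) (Aux.Φg n m g) + Aux.κfun n (2*m) c = Aux.κfun n (2*m) (P j)
    rw [hΦ, ← Aux.κfun_add, ← hPeq]
  have htend : Filter.Tendsto (fun j => Aux.κfun n (2*m) (P j)) Filter.atTop
      (nhds (Aux.κfun n (2*m) Q)) := by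
    rw [tendsto_pi_nhds]
    intro u
    exact hconv (FreeMonoid.ofList u.1)
  have hQmem : Aux.κfun n (2*m) Q ∈ Aux.Ψmap n m '' Aux.C₀set n m :=
    hclosed.mem_of_tendsto htend (Filter.Eventually.of_forall hmem)
  obtain ⟨⟨g, cc⟩, ⟨hpsd, p', hp1, hp2, hp3, rfl⟩, hEq⟩ := hQmem
  have hEq' : Aux.κfun n (2*m) (Aux.Φg n m g + p') = Aux.κfun n (2*m) Q := by
    rw [Aux.κfun_add]
    exact hEq
  have hQeq : Q = Aux.Φg n m g + p' := by
    refine (Aux.kappa_inj (Aux.degLE_add (Aux.Φg_degLE g) hp3)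
      (Aux.degLE_mono (by omega) hQd) fun u => ?_).symm
    exact congrFun hEq' u
  obtain ⟨B, hB⟩ := Aux.psdB hpsd
  have hgB : g = fun u v => ∑ i, (starRingEnd ℂ) (B i u) * B i v := by
    funext u v
    have h2 := congrFun (congrFun hB u) v
    rw [show (Matrix.of g) u v = g u v from rfl] at h2
    rw [h2, Matrix.mul_apply]
    refine Finset.sum_congr rfl fun i _ => ?_
    rw [Matrix.conjTranspose_apply, starRingEnd_apply]
  have hΦB : Aux.Φg n m g = ∑ i : Aux.VT n m,
      cstar (∑ u : Aux.VT n m, B i u • Aux.ew (FreeMonoid.ofList u.1))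
        * (∑ u : Aux.VT n m, B i u • Aux.ew (FreeMonoid.ofList u.1)) := by
    rw [hgB]
    exact Aux.Φg_gram B
  refine ⟨Aux.Φg n m g, ?_, p', ⟨hp1, hp2⟩, hQeq⟩
  refine ⟨Fintype.card (Aux.VT n m), fun k => (∑ u : Aux.VT n m,
      B ((Fintype.equivFin (Aux.VT n m)).symm k) u • Aux.ew (FreeMonoid.ofList u.1)), ?_⟩
  rw [hΦB]
  exact (Equiv.sum_comp (Fintype.equivFin (Aux.VT n m)).symm
    (fun i => cstar (∑ u : Aux.VT n m, B i u • Aux.ew (FreeMonoid.ofList u.1))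
      * (∑ u : Aux.VT n m, B i u • Aux.ew (FreeMonoid.ofList u.1)))).symm
end
end

section
/- Let V be a real vector space of countable dimension, let B ⊆ V be a convex cone such that B ∩ W is closed for every finite-dimensional subspace W of V, let F ⊆ V be a finite-dimensional subspace equipped with a norm, and let ε > 0. If φ: F → ℝ is a linear functional with φ(b) ≥ 0 for all b ∈ F ∩ B, then there exists a linear functional ψ: V → ℝ with ψ(b) ≥ 0 for all b ∈ B and ‖ψ|_F − φ‖ ≤ ε, where ‖·‖ denotes the operator norm of linear functionals on the normed space F. -/
noncomputable section

open scoped RealInnerProductSpace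

lemma stepInner {G : Type*} [NormedAddCommGroup G] [InnerProductSpace ℝ G]
    [FiniteDimensional ℝ G]
    (C : ConvexCone ℝ G) (hCc : IsClosed (C : Set G)) (hC0 : (0:G) ∈ C)
    (H : Submodule ℝ G) (φ : G →ₗ[ℝ] ℝ)
    (hφ : ∀ x, x ∈ C → x ∈ H → 0 ≤ φ x) (δ : ℝ) (hδ : 0 < δ) :
    ∃ ψ : G →ₗ[ℝ] ℝ, (∀ x ∈ C, 0 ≤ ψ x) ∧ ∀ x ∈ H, |ψ x - φ x| ≤ δ * ‖x‖ := by
  haveI : CompleteSpace G := FiniteDimensional.complete ℝ G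
  set P : G →ₗ[ℝ] G := H.subtype.comp (H.orthogonalProjectionOnto).toLinearMap with hP
  have hPadj : ∀ a b : G, ⟪P a, b⟫ = ⟪a, P b⟫ := by
    intro a b
    exact Submodule.inner_starProjection_left_eq_right H a b
  have hPmem : ∀ a : G, P a ∈ H := fun a => SetLike.coe_mem _
  have hPid : ∀ a : G, a ∈ H → P a = a := by
    intro a ha
    have := H.orthogonalProjectionOnto_mem_subspace_eq_self (⟨a, ha⟩ : H)
    simpa [hP] using congrArg (Subtype.val) this
  set vφ : G := (InnerProductSpace.toDual ℝ G).symm (LinearMap.toContinuousLinearMap φ) with hvφ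
  have hvφ' : ∀ x : G, ⟪vφ, x⟫ = φ x := by
    intro x
    rw [hvφ, InnerProductSpace.toDual_symm_apply]
    simp
  set u : G := P vφ with hu
  have huH : u ∈ H := hPmem _
  have huφ : ∀ x ∈ H, ⟪u, x⟫ = φ x := by
    intro x hx
    rw [hu, hPadj, hPid x hx, hvφ']
  set D : ConvexCone ℝ G := ((ProperCone.innerDual (C : Set G) : ConvexCone ℝ G)).map P with hD
  have hD0 : (0:G) ∈ D := by
    refine ConvexCone.mem_map.2 ⟨0, ?_, map_zero P⟩
    exact (ProperCone.innerDual (C : Set G)).zero_mem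
  -- key claim : u ∈ closure D
  have hkey : u ∈ closure (D : Set G) := by
    by_contra hK
    have hKne : ((D.closure : ConvexCone ℝ G) : Set G).Nonempty := by
      exact ⟨0, by rw [ConvexCone.coe_closure]; exact subset_closure hD0⟩
    have hKc : IsClosed ((D.closure : ConvexCone ℝ G) : Set G) := by
      rw [ConvexCone.coe_closure]; exact isClosed_closure
    have hK' : u ∉ D.closure := by
      rw [← SetLike.mem_coe, ConvexCone.coe_closure]; exact hK
    obtain ⟨y, h1, h2⟩ : ∃ y, (∀ x ∈ D.closure, 0 ≤ ⟪x, y⟫) ∧ ⟪y, u⟫ < 0 := by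
      obtain ⟨K, hK⟩ : ∃ K : ProperCone ℝ G, (K : ConvexCone ℝ G) = D.closure :=
        CanLift.prf _ ⟨hKne, hKc⟩
      rw [← hK] at hK'
      obtain ⟨y, h1, h2⟩ := K.hyperplane_separation' hK'
      exact ⟨y, fun x hx => h1 x (by rw [← hK] at hx; exact hx), by rwa [real_inner_comm]⟩
    have hPyC : P y ∈ C := by
      obtain ⟨K, hK⟩ : ∃ K : ProperCone ℝ G, (K : ConvexCone ℝ G) = C :=
        CanLift.prf _ ⟨⟨0, hC0⟩, hCc⟩
      have hbi := K.innerDual_innerDual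
      subst hK
      show P y ∈ K
      rw [← hbi, ProperCone.mem_innerDual]
      intro z hz
      have hPz : P z ∈ D.closure := by
        rw [ConvexCone.mem_closure]
        exact subset_closure (ConvexCone.mem_map.2 ⟨z, hz, rfl⟩)
      have := h1 _ hPz
      rwa [hPadj] at this
    have hpos : 0 ≤ φ (P y) := hφ _ hPyC (hPmem _)
    have : φ (P y) = ⟪y, u⟫ := by
      rw [← huφ _ (hPmem y), ← hPadj, hPid u huH, real_inner_comm]
    linarith [h2, this ▸ hpos]
  obtain ⟨d, hdD, hdist⟩ := Metric.mem_closure_iff.1 hkey δ hδ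
  obtain ⟨z, hz, rfl⟩ := ConvexCone.mem_map.1 hdD
  refine ⟨(innerSL ℝ z).toLinearMap, ?_, ?_⟩
  · intro x hx
    have := hz hx
    simpa [real_inner_comm] using this
  · intro x hx
    have h1 : ⟪z, x⟫ = ⟪P z, x⟫ := by rw [hPadj, hPid x hx]
    have h2 : ((innerSL ℝ z).toLinearMap : G →ₗ[ℝ] ℝ) x - φ x = ⟪P z - u, x⟫ := by
      simp only [ContinuousLinearMap.coe_coe, innerSL_apply_apply]
      rw [← huφ _ hx, inner_sub_left, h1]
    rw [h2]
    calc |⟪P z - u, x⟫| ≤ ‖P z - u‖ * ‖x‖ := abs_real_inner_le_norm _ _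
      _ ≤ δ * ‖x‖ := by
          apply mul_le_mul_of_nonneg_right _ (norm_nonneg x)
          rw [← dist_eq_norm]
          rw [dist_comm] at hdist
          exact hdist.le

lemma stepNormed {G : Type*} [NormedAddCommGroup G] [NormedSpace ℝ G]
    [FiniteDimensional ℝ G]
    (C : Set G) (hCc : IsClosed C) (hC0 : (0:G) ∈ C)
    (hCadd : ∀ x ∈ C, ∀ y ∈ C, x + y ∈ C)
    (hCsmul : ∀ r : ℝ, 0 ≤ r → ∀ x ∈ C, r • x ∈ C)
    (H : Submodule ℝ G) (φ : G →ₗ[ℝ] ℝ)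
    (hφ : ∀ x, x ∈ C → x ∈ H → 0 ≤ φ x) (δ : ℝ) (hδ : 0 < δ) :
    ∃ ψ : G →ₗ[ℝ] ℝ, (∀ x ∈ C, 0 ≤ ψ x) ∧ ∀ x ∈ H, |ψ x - φ x| ≤ δ * ‖x‖ := by
  set e := toEuclidean (E := G) with he
  set E' := EuclideanSpace ℝ (Fin (Module.finrank ℝ G)) with hE'
  set C' : ConvexCone ℝ E' :=
    { carrier := e.symm ⁻¹' C
      smul_mem' := by
        intro c hc x hx
        simpa [map_smul] using hCsmul c hc.le _ hx
      add_mem' := by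
        intro x hx y hy
        simpa [map_add] using hCadd _ hx _ hy } with hC'
  have hC'c : IsClosed (C' : Set E') := hCc.preimage e.symm.continuous
  have hC'0 : (0:E') ∈ C' := by
    show e.symm 0 ∈ C
    simpa using hC0
  set H' : Submodule ℝ E' := H.map (e.toLinearEquiv : G →ₗ[ℝ] E') with hH'
  set φ' : E' →ₗ[ℝ] ℝ := φ.comp ((e.symm : E' →L[ℝ] G) : E' →ₗ[ℝ] G) with hφ'def
  have hφ' : ∀ x, x ∈ C' → x ∈ H' → 0 ≤ φ' x := by
    intro x hx hxH
    exact hφ _ hx (by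
      obtain ⟨g, hg, rfl⟩ := hxH
      simpa using hg)
  set M : ℝ := ‖(e : G →L[ℝ] E')‖ + 1 with hM
  have hM0 : 0 < M := by positivity
  obtain ⟨ψ', hψ'pos, hψ'err⟩ := stepInner C' hC'c hC'0 H' φ' hφ' (δ / M) (by positivity)
  refine ⟨ψ'.comp ((e : G →L[ℝ] E') : G →ₗ[ℝ] E'), ?_, ?_⟩
  · intro x hx
    refine hψ'pos (e x) ?_
    show e.symm (e x) ∈ C
    simpa using hx
  · intro x hx
    have hmem : e x ∈ H' := ⟨x, hx, rfl⟩
    have := hψ'err (e x) hmem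
    have hval : φ' (e x) = φ x := by simp [hφ'def]
    rw [hval] at this
    calc |ψ' (e x) - φ x| ≤ δ / M * ‖e x‖ := this
      _ ≤ δ / M * (M * ‖x‖) := by
          apply mul_le_mul_of_nonneg_left _ (by positivity)
          calc ‖e x‖ = ‖(e : G →L[ℝ] E') x‖ := rfl
            _ ≤ ‖(e : G →L[ℝ] E')‖ * ‖x‖ := ContinuousLinearMap.le_opNorm _ _
            _ ≤ M * ‖x‖ := by
                apply mul_le_mul_of_nonneg_right _ (norm_nonneg x)
                simp [hM]
      _ = δ * ‖x‖ := by field_simp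


section Pad

variable {V : Type*} [AddCommGroup V] [Module ℝ V]
variable {F : Type*} [NormedAddCommGroup F] [NormedSpace ℝ F]

/-- Zero-padding / truncation map between the model spaces `F × ℝⁿ`. -/
def padMap (F : Type*) [NormedAddCommGroup F] [NormedSpace ℝ F] (n m : ℕ) :
    (F × (Fin n → ℝ)) →ₗ[ℝ] (F × (Fin m → ℝ)) where
  toFun p := (p.1, fun i => if h : (i : ℕ) < n then p.2 ⟨i, h⟩ else 0)
  map_add' p q := by
    refine Prod.ext rfl (funext fun i => ?_)
    by_cases h : (i : ℕ) < n <;> simp [h]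
  map_smul' c p := by
    refine Prod.ext rfl (funext fun i => ?_)
    by_cases h : (i : ℕ) < n <;> simp [h]

lemma padMap_fst (n m : ℕ) (p : F × (Fin n → ℝ)) : (padMap F n m p).1 = p.1 := rfl

lemma padMap_snd (n m : ℕ) (p : F × (Fin n → ℝ)) (i : Fin m) :
    (padMap F n m p).2 i = if h : (i : ℕ) < n then p.2 ⟨i, h⟩ else 0 := rfl

lemma padMap_self (n : ℕ) (p : F × (Fin n → ℝ)) : padMap F n n p = p := by
  refine Prod.ext rfl (funext fun i => ?_)
  rw [padMap_snd, dif_pos i.isLt]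

lemma padMap_padMap {n m : ℕ} (k : ℕ) (h : n ≤ m) (p : F × (Fin n → ℝ)) :
    padMap F m k (padMap F n m p) = padMap F n k p := by
  refine Prod.ext rfl (funext fun i => ?_)
  simp only [padMap_snd]
  by_cases h1 : (i : ℕ) < n
  · rw [dif_pos (lt_of_lt_of_le h1 h)]
  · by_cases h2 : (i : ℕ) < m
    · rw [dif_pos h2]
    · rw [dif_neg h2, dif_neg h1]

lemma norm_padMap_le (n m : ℕ) (p : F × (Fin n → ℝ)) : ‖padMap F n m p‖ ≤ ‖p‖ := by
  rw [Prod.norm_def]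
  apply max_le
  · rw [padMap_fst]; exact (norm_fst_le p)
  · refine pi_norm_le_iff_of_nonneg (norm_nonneg p) |>.2 fun i => ?_
    rw [padMap_snd]
    by_cases h : (i : ℕ) < n
    · rw [dif_pos h]
      exact (norm_le_pi_norm p.2 ⟨i, h⟩).trans (norm_snd_le p)
    · rw [dif_neg h, norm_zero]; exact norm_nonneg p

/-- The realization map `F × ℝⁿ → V`. -/
def jmap (ι : F →ₗ[ℝ] V) (w : ℕ → V) (n : ℕ) : (F × (Fin n → ℝ)) →ₗ[ℝ] V where
  toFun p := ι p.1 + ∑ i, p.2 i • w i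
  map_add' p q := by
    simp only [Prod.fst_add, Prod.snd_add, map_add, Pi.add_apply, add_smul,
      Finset.sum_add_distrib]
    abel
  map_smul' c p := by
    simp only [Prod.smul_fst, Prod.smul_snd, map_smul, Pi.smul_apply, smul_eq_mul,
      RingHom.id_apply, smul_add, Finset.smul_sum, smul_smul]

lemma jmap_padMap (ι : F →ₗ[ℝ] V) (w : ℕ → V) {n m : ℕ} (h : n ≤ m)
    (p : F × (Fin n → ℝ)) : jmap ι w m (padMap F n m p) = jmap ι w n p := by
  show ι p.1 + _ = ι p.1 + _
  congr 1
  have key : ∀ N : ℕ, (∑ i : Fin N, (if h : (i:ℕ) < n then p.2 ⟨i, h⟩ else 0) • w i)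
      = ∑ i ∈ Finset.range N, (if h : i < n then p.2 ⟨i, h⟩ else 0) • w i := by
    intro N
    exact Fin.sum_univ_eq_sum_range (fun i => (if h : i < n then p.2 ⟨i, h⟩ else 0) • w i) N
  calc (∑ i : Fin m, (padMap F n m p).2 i • w i)
      = ∑ i ∈ Finset.range m, (if h : i < n then p.2 ⟨i, h⟩ else 0) • w i := key m
    _ = ∑ i ∈ Finset.range n, (if h : i < n then p.2 ⟨i, h⟩ else 0) • w i := by
        refine (Finset.sum_subset (Finset.range_subset_range.2 h) fun i _ hi => ?_).symm
        rw [dif_neg (by simpa using hi), zero_smul]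
    _ = ∑ i ∈ Finset.range n, (fun i => if h : i < n then p.2 ⟨i, h⟩ else (0:ℝ)) i • w i := rfl
    _ = ∑ i : Fin n, (if h : (i:ℕ) < n then p.2 ⟨i, h⟩ else 0) • w i := (key n).symm
    _ = ∑ i : Fin n, p.2 i • w i := by
        refine Finset.sum_congr rfl fun i _ => ?_
        rw [dif_pos i.isLt]

lemma jmap_apply (ι : F →ₗ[ℝ] V) (w : ℕ → V) (n : ℕ) (p : F × (Fin n → ℝ)) :
    jmap ι w n p = ι p.1 + ∑ i, p.2 i • w i := rfl

lemma jmap_zero_apply (ι : F →ₗ[ℝ] V) (w : ℕ → V) (p : F × (Fin 0 → ℝ)) :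
    jmap ι w 0 p = ι p.1 := by
  show ι p.1 + _ = ι p.1
  simp

end Pad

section Main

variable {V : Type*} [AddCommGroup V] [Module ℝ V]
variable {F : Type*} [NormedAddCommGroup F] [NormedSpace ℝ F] [FiniteDimensional ℝ F]

lemma Cset_closed (ι : F →ₗ[ℝ] V) (w : ℕ → V) (B : Set V)
    (hclosed : ∀ (d : ℕ) (f : (Fin d → ℝ) →ₗ[ℝ] V), IsClosed (f ⁻¹' B)) (n : ℕ) :
    IsClosed (jmap ι w n ⁻¹' B) := by
  set G := F × (Fin n → ℝ)
  set bas := Module.finBasis ℝ G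
  set e : (Fin (Module.finrank ℝ G) → ℝ) ≃ₗ[ℝ] G := bas.equivFun.symm
  have h1 : IsClosed (((jmap ι w n).comp e.toLinearMap) ⁻¹' B) := hclosed _ _
  have hcont : Continuous ⇑e.symm := (e.symm.toLinearMap).continuous_of_finiteDimensional
  have h2 : jmap ι w n ⁻¹' B = ⇑e.symm ⁻¹' (((jmap ι w n).comp e.toLinearMap) ⁻¹' B) := by
    ext v
    simp
  rw [h2]
  exact h1.preimage hcont

lemma step_ex (ι : F →ₗ[ℝ] V) (w : ℕ → V) (B : Set V)
    (hadd : ∀ x ∈ B, ∀ y ∈ B, x + y ∈ B)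
    (hsmul : ∀ r : ℝ, 0 ≤ r → ∀ x ∈ B, r • x ∈ B)
    (hB0 : (0:V) ∈ B)
    (hclosed : ∀ (d : ℕ) (f : (Fin d → ℝ) →ₗ[ℝ] V), IsClosed (f ⁻¹' B))
    (m : ℕ) (δ : ℝ) (hδ : 0 < δ) (ψ : (F × (Fin m → ℝ)) →ₗ[ℝ] ℝ)
    (hψ : ∀ v, jmap ι w m v ∈ B → 0 ≤ ψ v) :
    ∃ ψ' : (F × (Fin (m+1) → ℝ)) →ₗ[ℝ] ℝ,
      (∀ v, jmap ι w (m+1) v ∈ B → 0 ≤ ψ' v) ∧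
      ∀ p, |ψ' (padMap F m (m+1) p) - ψ p| ≤ δ * ‖p‖ := by
  obtain ⟨ψ', h1, h2⟩ := stepNormed (jmap ι w (m+1) ⁻¹' B)
    (Cset_closed ι w B hclosed (m+1))
    (by simp only [Set.mem_preimage, map_zero]; exact hB0)
    (fun x hx y hy => by
      simp only [Set.mem_preimage, map_add] at *
      exact hadd _ hx _ hy)
    (fun r hr x hx => by
      simp only [Set.mem_preimage, map_smul] at *
      exact hsmul r hr _ hx)
    (LinearMap.range (padMap F m (m+1)))
    (ψ.comp (padMap F (m+1) m))
    (by
      rintro x hx ⟨p, rfl⟩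
      have hpad : padMap F (m+1) m (padMap F m (m+1) p) = p := by
        rw [padMap_padMap _ (Nat.le_succ m), padMap_self]
      simp only [LinearMap.comp_apply, hpad]
      refine hψ p ?_
      rwa [Set.mem_preimage, jmap_padMap ι w (Nat.le_succ m)] at hx)
    δ hδ
  refine ⟨ψ', fun v hv => h1 v hv, fun p => ?_⟩
  have := h2 (padMap F m (m+1) p) ⟨p, rfl⟩
  have hpad : padMap F (m+1) m (padMap F m (m+1) p) = p := by
    rw [padMap_padMap _ (Nat.le_succ m), padMap_self]
  rw [LinearMap.comp_apply, hpad] at this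
  exact this.trans (mul_le_mul_of_nonneg_left (norm_padMap_le _ _ _) hδ.le)

end Main
open Filter Topology

/-- Let `V` be a real vector space of countable dimension and let
`B ⊆ V` be a convex cone whose intersection with every finite-dimensional subspace
is closed (equivalently, `B` is closed in the finest locally convex topology;
expressed here as: the preimage of `B` under every linear map `ℝ^d → V` is
closed).  Let `F` be a finite-dimensional normed space, realized inside `V` via an
injective linear map `ι : F → V`, let `ε > 0`, and let `φ : F → ℝ` be a linear
functional which is nonnegative on `F ∩ B`.  Then there is a linear functional
`ψ : V → ℝ` which is nonnegative on `B` and satisfies `‖ψ|_F - φ‖ ≤ ε` in the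
operator norm on functionals on `F`. -/
theorem positive_extension_up_to_epsilon
    {V : Type*} [AddCommGroup V] [Module ℝ V]
    (hdim : ∃ s : Set V, s.Countable ∧ Submodule.span ℝ s = ⊤)
    (B : Set V)
    (hadd : ∀ x ∈ B, ∀ y ∈ B, x + y ∈ B)
    (hsmul : ∀ r : ℝ, 0 ≤ r → ∀ x ∈ B, r • x ∈ B)
    (hclosed : ∀ (d : ℕ) (f : (Fin d → ℝ) →ₗ[ℝ] V), IsClosed (f ⁻¹' B))
    {F : Type*} [NormedAddCommGroup F] [NormedSpace ℝ F] [FiniteDimensional ℝ F]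
    (ι : F →ₗ[ℝ] V) (hι : Function.Injective ι)
    (ε : ℝ) (hε : 0 < ε)
    (φ : F →ₗ[ℝ] ℝ) (hφ : ∀ b : F, ι b ∈ B → 0 ≤ φ b) :
    ∃ ψ : V →ₗ[ℝ] ℝ, (∀ b ∈ B, 0 ≤ ψ b) ∧
      ‖LinearMap.toContinuousLinearMap (ψ.comp ι - φ)‖ ≤ ε := by
  rcases Set.eq_empty_or_nonempty B with hBe | hBne
  · -- B empty : any linear extension works
    obtain ⟨q, hq⟩ := Submodule.exists_isCompl (LinearMap.range ι)
    set prj := (LinearMap.range ι).linearProjOfIsCompl q hq with hprj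
    set eqv := LinearEquiv.ofInjective ι hι with heqv
    refine ⟨(φ.comp eqv.symm.toLinearMap).comp prj, ?_, ?_⟩
    · intro b hb
      rw [hBe] at hb
      exact absurd hb (Set.notMem_empty b)
    · apply ContinuousLinearMap.opNorm_le_bound _ hε.le
      intro x
      rw [LinearMap.coe_toContinuousLinearMap']
      have h1 : prj (ι x) = eqv x := by
        have h2 : ι x = ((eqv x : LinearMap.range ι) : V) := by
          simp [heqv]
        rw [h2]
        exact Submodule.linearProjOfIsCompl_apply_left hq (eqv x)
      have h3 : (((φ.comp eqv.symm.toLinearMap).comp prj).comp ι - φ) x = 0 := by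
        simp only [LinearMap.sub_apply, LinearMap.comp_apply, h1,
          LinearEquiv.coe_coe, LinearEquiv.symm_apply_apply, sub_self]
      rw [h3, norm_zero]
      positivity
  · -- B nonempty
    obtain ⟨b₀, hb₀⟩ := hBne
    have hB0 : (0:V) ∈ B := by simpa using hsmul 0 le_rfl b₀ hb₀
    obtain ⟨s, hsc, hss⟩ := hdim
    obtain ⟨w, hw⟩ := (hsc.insert 0).exists_eq_range (Set.insert_nonempty 0 s)
    have hwspan : Submodule.span ℝ (Set.range w) = ⊤ := by
      rw [← hw]
      refine eq_top_iff.2 ?_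
      calc (⊤ : Submodule ℝ V) = Submodule.span ℝ s := hss.symm
        _ ≤ _ := Submodule.span_mono (Set.subset_insert _ _)
    have hsurj : ∀ v : V, ∃ (n : ℕ) (p : F × (Fin n → ℝ)), jmap ι w n p = v := by
      intro v
      have hv : v ∈ Submodule.span ℝ (Set.range w) := by rw [hwspan]; trivial
      rw [Finsupp.mem_span_range_iff_exists_finsupp] at hv
      obtain ⟨c, hc⟩ := hv
      refine ⟨c.support.sup id + 1, (0, fun i => c i), ?_⟩
      rw [jmap_apply, map_zero, zero_add, ← hc,
        Fin.sum_univ_eq_sum_range (fun i => c i • w i)]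
      rw [Finsupp.sum]
      refine (Finset.sum_subset ?_ ?_).symm
      · intro i hi
        exact Finset.mem_range.2 (Nat.lt_succ_of_le (Finset.le_sup (f := id) hi))
      · intro i _ hi
        rw [Finsupp.notMem_support_iff.1 hi, zero_smul]
    -- the recursively chosen sequence of functionals
    let seq : ∀ m : ℕ, {ψ : (F × (Fin m → ℝ)) →ₗ[ℝ] ℝ // ∀ v, jmap ι w m v ∈ B → 0 ≤ ψ v} :=
      fun m => Nat.rec
        ⟨φ.comp (LinearMap.fst ℝ F (Fin 0 → ℝ)), fun v hv =>
          hφ v.1 (by rwa [jmap_zero_apply] at hv)⟩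
        (fun m prev =>
          ⟨(step_ex ι w B hadd hsmul hB0 hclosed m (ε / 2^(m+1)) (by positivity)
              prev.1 prev.2).choose,
           (step_ex ι w B hadd hsmul hB0 hclosed m (ε / 2^(m+1)) (by positivity)
              prev.1 prev.2).choose_spec.1⟩) m
    have hstep : ∀ (m : ℕ) (p : F × (Fin m → ℝ)),
        |(seq (m+1)).1 (padMap F m (m+1) p) - (seq m).1 p| ≤ ε / 2^(m+1) * ‖p‖ := by
      intro m p
      exact (step_ex ι w B hadd hsmul hB0 hclosed m (ε / 2^(m+1)) (by positivity)
        (seq m).1 (seq m).2).choose_spec.2 p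
    -- telescoping estimate
    have htele : ∀ (n : ℕ) (p : F × (Fin n → ℝ)) (k : ℕ),
        |(seq (n+k)).1 (padMap F n (n+k) p) - (seq n).1 p|
          ≤ (ε / 2^n) * (1 - (1/2)^k) * ‖p‖ := by
      intro n p k
      induction k with
      | zero => simp [padMap_self]
      | succ k ih =>
        have h1 : padMap F n (n+(k+1)) p
            = padMap F (n+k) (n+k+1) (padMap F n (n+k) p) := by
          rw [padMap_padMap _ (Nat.le_add_right n k)]
          rfl
        have h2 := hstep (n+k) (padMap F n (n+k) p)
        have h3 : ‖padMap F n (n+k) p‖ ≤ ‖p‖ := norm_padMap_le _ _ _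
        have hA : |(seq (n+(k+1))).1 (padMap F n (n+(k+1)) p)
            - (seq (n+k)).1 (padMap F n (n+k) p)| ≤ ε / 2^(n+k+1) * ‖p‖ := by
          rw [h1]
          exact h2.trans (mul_le_mul_of_nonneg_left h3 (by positivity))
        calc |(seq (n+(k+1))).1 (padMap F n (n+(k+1)) p) - (seq n).1 p|
            ≤ |(seq (n+(k+1))).1 (padMap F n (n+(k+1)) p)
                - (seq (n+k)).1 (padMap F n (n+k) p)|
              + |(seq (n+k)).1 (padMap F n (n+k) p) - (seq n).1 p| := abs_sub_le _ _ _
          _ ≤ ε / 2^(n+k+1) * ‖p‖ + (ε / 2^n) * (1 - (1/2)^k) * ‖p‖ := add_le_add hA ih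
          _ = (ε / 2^n) * (1 - (1/2)^(k+1)) * ‖p‖ := by
              have h2n : (2:ℝ)^n ≠ 0 := by positivity
              simp only [one_div, inv_pow, pow_succ, pow_add]
              field_simp
              ring
    have hteleb : ∀ (n : ℕ) (p : F × (Fin n → ℝ)) (m : ℕ), n ≤ m →
        |(seq m).1 (padMap F n m p) - (seq n).1 p| ≤ ε / 2^n * ‖p‖ := by
      intro n p m hnm
      obtain ⟨k, rfl⟩ := Nat.exists_eq_add_of_le hnm
      refine (htele n p k).trans ?_
      refine mul_le_mul_of_nonneg_right ?_ (norm_nonneg p)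
      refine mul_le_of_le_one_right (by positivity) ?_
      have : (0:ℝ) ≤ (1/2)^k := by positivity
      linarith
    choose nn pp hpp using hsurj
    have hcauchy : ∀ v : V,
        CauchySeq (fun m => (seq m).1 (padMap F (nn v) m (pp v))) := by
      intro v
      rw [Metric.cauchySeq_iff']
      intro η hη
      have htend : Tendsto (fun N : ℕ => ε / 2^N * ‖pp v‖) atTop (𝓝 0) := by
        have h2 : Tendsto (fun N : ℕ => ((1:ℝ)/2)^N) atTop (𝓝 0) :=
          tendsto_pow_atTop_nhds_zero_of_lt_one (by norm_num) (by norm_num)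
        have h3 := h2.const_mul (ε * ‖pp v‖)
        simp only [mul_zero] at h3
        refine h3.congr fun N => ?_
        rw [div_pow, one_pow]
        field_simp
      obtain ⟨N, hN⟩ := ((htend.eventually (gt_mem_nhds hη)).and
        (Filter.eventually_ge_atTop (nn v))).exists
      obtain ⟨hN1, hN2⟩ := hN
      refine ⟨N, fun m hm => ?_⟩
      rw [Real.dist_eq]
      have h1 : padMap F (nn v) m (pp v) = padMap F N m (padMap F (nn v) N (pp v)) :=
        (padMap_padMap _ hN2 _).symm
      calc |(seq m).1 (padMap F (nn v) m (pp v)) - (seq N).1 (padMap F (nn v) N (pp v))|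
          = |(seq m).1 (padMap F N m (padMap F (nn v) N (pp v)))
              - (seq N).1 (padMap F (nn v) N (pp v))| := by rw [← h1]
        _ ≤ ε / 2^N * ‖padMap F (nn v) N (pp v)‖ := hteleb N _ m hm
        _ ≤ ε / 2^N * ‖pp v‖ :=
            mul_le_mul_of_nonneg_left (norm_padMap_le _ _ _) (by positivity)
        _ < η := hN1
    have hlim : ∀ v : V, ∃ l : ℝ,
        Tendsto (fun m => (seq m).1 (padMap F (nn v) m (pp v))) atTop (𝓝 l) :=
      fun v => cauchySeq_tendsto_of_complete (hcauchy v)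
    choose ψf hψf using hlim
    have hker : ∀ (m : ℕ) (q q' : F × (Fin m → ℝ)),
        jmap ι w m q = jmap ι w m q' → (seq m).1 q = (seq m).1 q' := by
      intro m q q' hqq
      have h1 : 0 ≤ (seq m).1 (q - q') := (seq m).2 _ (by
        rw [map_sub, hqq, sub_self]; exact hB0)
      have h2 : 0 ≤ (seq m).1 (q' - q) := (seq m).2 _ (by
        rw [map_sub, hqq, sub_self]; exact hB0)
      rw [map_sub] at h1 h2
      linarith
    have hLim : ∀ (n : ℕ) (p : F × (Fin n → ℝ)),
        Tendsto (fun m => (seq m).1 (padMap F n m p)) atTop (𝓝 (ψf (jmap ι w n p))) := by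
      intro n p
      refine Filter.Tendsto.congr' ?_ (hψf (jmap ι w n p))
      filter_upwards [Filter.eventually_ge_atTop (max n (nn (jmap ι w n p)))] with m hm
      refine hker m _ _ ?_
      rw [jmap_padMap ι w (le_trans (le_max_right _ _) hm),
        jmap_padMap ι w (le_trans (le_max_left _ _) hm), hpp]
    have hadd' : ∀ v₁ v₂ : V, ψf (v₁ + v₂) = ψf v₁ + ψf v₂ := by
      intro v₁ v₂
      have T1 : Tendsto (fun m => (seq m).1 (padMap F (max (nn v₁) (nn v₂)) m
          (padMap F (nn v₁) (max (nn v₁) (nn v₂)) (pp v₁)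
            + padMap F (nn v₂) (max (nn v₁) (nn v₂)) (pp v₂)))) atTop (𝓝 (ψf (v₁ + v₂))) := by
        have h := hLim (max (nn v₁) (nn v₂))
          (padMap F (nn v₁) (max (nn v₁) (nn v₂)) (pp v₁)
            + padMap F (nn v₂) (max (nn v₁) (nn v₂)) (pp v₂))
        rwa [map_add, jmap_padMap ι w (le_max_left _ _),
          jmap_padMap ι w (le_max_right _ _), hpp, hpp] at h
      have T2 : Tendsto (fun m => (seq m).1 (padMap F (max (nn v₁) (nn v₂)) m
          (padMap F (nn v₁) (max (nn v₁) (nn v₂)) (pp v₁)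
            + padMap F (nn v₂) (max (nn v₁) (nn v₂)) (pp v₂)))) atTop
          (𝓝 (ψf v₁ + ψf v₂)) := by
        refine ((hψf v₁).add (hψf v₂)).congr fun m => ?_
        rw [map_add, map_add, padMap_padMap _ (le_max_left _ _),
          padMap_padMap _ (le_max_right _ _)]
      exact tendsto_nhds_unique T1 T2
    have hsmul' : ∀ (c : ℝ) (v : V), ψf (c • v) = c * ψf v := by
      intro c v
      have T1 : Tendsto (fun m => (seq m).1 (padMap F (nn v) m (c • pp v))) atTop
          (𝓝 (ψf (c • v))) := by
        have h := hLim (nn v) (c • pp v)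
        rwa [map_smul, hpp] at h
      have T2 : Tendsto (fun m => (seq m).1 (padMap F (nn v) m (c • pp v))) atTop
          (𝓝 (c * ψf v)) := by
        refine ((hψf v).const_mul c).congr fun m => ?_
        rw [map_smul, map_smul, smul_eq_mul]
      exact tendsto_nhds_unique T1 T2
    refine ⟨{ toFun := ψf, map_add' := hadd', map_smul' := hsmul' }, ?_, ?_⟩
    · intro b hb
      refine ge_of_tendsto (hψf b) ?_
      filter_upwards [Filter.eventually_ge_atTop (nn b)] with m hm
      refine (seq m).2 _ ?_
      rw [jmap_padMap ι w hm, hpp]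
      exact hb
    · apply ContinuousLinearMap.opNorm_le_bound _ hε.le
      intro x
      rw [LinearMap.coe_toContinuousLinearMap']
      have hT : Tendsto (fun m => (seq m).1 (padMap F 0 m (x, (0 : Fin 0 → ℝ)))) atTop
          (𝓝 (ψf (ι x))) := by
        have h := hLim 0 (x, (0 : Fin 0 → ℝ))
        rwa [jmap_zero_apply] at h
      have hbound : ∀ m, |(seq m).1 (padMap F 0 m (x, (0 : Fin 0 → ℝ))) - φ x| ≤ ε * ‖x‖ := by
        intro m
        have h0 : (seq 0).1 (x, (0 : Fin 0 → ℝ)) = φ x := rfl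
        have h := hteleb 0 (x, (0 : Fin 0 → ℝ)) m (Nat.zero_le m)
        rw [h0] at h
        refine h.trans ?_
        have hn : ‖((x, (0 : Fin 0 → ℝ)) : F × (Fin 0 → ℝ))‖ ≤ ‖x‖ := by
          rw [Prod.norm_def]
          refine max_le le_rfl ?_
          rw [norm_zero]
          exact norm_nonneg x
        calc ε / 2^0 * ‖((x, (0 : Fin 0 → ℝ)) : F × (Fin 0 → ℝ))‖
            = ε * ‖((x, (0 : Fin 0 → ℝ)) : F × (Fin 0 → ℝ))‖ := by norm_num
          _ ≤ ε * ‖x‖ := mul_le_mul_of_nonneg_left hn hε.le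
      have hTa : Tendsto (fun m => |(seq m).1 (padMap F 0 m (x, (0 : Fin 0 → ℝ))) - φ x|)
          atTop (𝓝 |ψf (ι x) - φ x|) := (hT.sub_const (φ x)).abs
      have hfin : |ψf (ι x) - φ x| ≤ ε * ‖x‖ :=
        le_of_tendsto hTa (Filter.Eventually.of_forall hbound)
      simpa [Real.norm_eq_abs] using hfin
end
end

section
/- Let τ be a positive trace on a unital ℂ-algebra A with involution. Then for all n ∈ ℕ and all a₁,…,aₙ ∈ A, |τ(a₁a₂⋯aₙ)| ≤ ∏_{i=1}^n τ((aᵢ*aᵢ)^{φ(n)})^{1/(2φ(n))}, where φ(n) = 2^{n/2−1} for even n and φ(n) = φ(n+1) = 2^{(n+1)/2−1} for odd n. -/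
open scoped ComplexOrder

noncomputable section

set_option linter.unusedSectionVars false

/-- A positive trace on a unital complex `*`-algebra: a `ℂ`-linear functional
with `τ(1) = 1`, `τ(a*a) ≥ 0` (a nonnegative real) and `τ(ab) = τ(ba)`. -/
def IsTrace {A : Type*} [Ring A] [Algebra ℂ A] [StarRing A] [StarModule ℂ A]
    (τ : A →ₗ[ℂ] ℂ) : Prop :=
  τ 1 = 1 ∧ (∀ a, 0 ≤ τ (star a * a)) ∧ (∀ a b, τ (a * b) = τ (b * a))

/-- `φ(n) = 2^{n/2-1}` for even `n`, and `φ(n) = φ(n+1) = 2^{(n+1)/2-1}` for odd `n`. -/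
def phi (m : ℕ) : ℕ := if Even m then 2 ^ (m / 2 - 1) else 2 ^ ((m + 1) / 2 - 1)

namespace GCSAux

lemma phi_eq (n : ℕ) : phi n = 2 ^ ((n + 1) / 2 - 1) := by
  unfold phi
  split_ifs with h
  · obtain ⟨c, rfl⟩ := h
    congr 1
    omega
  · rfl

variable {A : Type*} [Ring A] [Algebra ℂ A] [StarRing A] [StarModule ℂ A]
  {τ : A →ₗ[ℂ] ℂ}

lemma re_nn (hτ : IsTrace τ) (x : A) : 0 ≤ (τ (star x * x)).re := by
  have h := Complex.le_def.mp (hτ.2.1 x)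
  simpa using h.1

lemma im_zero (hτ : IsTrace τ) (x : A) : (τ (star x * x)).im = 0 := by
  have h := Complex.le_def.mp (hτ.2.1 x)
  simpa using h.2.symm

lemma expand (x y : A) : τ (star (x + y) * (x + y))
    = τ (star x * x) + τ (star x * y) + τ (star y * x) + τ (star y * y) := by
  rw [star_add, add_mul, mul_add, mul_add, map_add, map_add, map_add]
  ring

lemma sm_right (c : ℂ) (p q : A) : τ (star p * (c • q)) = c * τ (star p * q) := by
  rw [mul_smul_comm, map_smul, smul_eq_mul]

lemma sm_left (c : ℂ) (p q : A) :
    τ (star (c • p) * q) = (starRingEnd ℂ) c * τ (star p * q) := by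
  rw [star_smul, smul_mul_assoc, map_smul, smul_eq_mul, Complex.star_def]

lemma conj_symm (hτ : IsTrace τ) (x y : A) :
    τ (star y * x) = (starRingEnd ℂ) (τ (star x * y)) := by
  have h1 : (τ (star x * y)).im + (τ (star y * x)).im = 0 := by
    have h := im_zero hτ (x + y)
    rw [expand x y] at h
    simpa [im_zero hτ x, im_zero hτ y] using h
  have h2 : (τ (star x * y)).re = (τ (star y * x)).re := by
    have h := im_zero hτ (x + Complex.I • y)
    rw [expand x (Complex.I • y), sm_right, sm_left, sm_left, sm_right] at h
    simp only [Complex.conj_I, Complex.add_im, Complex.mul_im, Complex.mul_re,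
      Complex.neg_re, Complex.neg_im, Complex.I_re, Complex.I_im, im_zero hτ x,
      im_zero hτ y, neg_mul, one_mul, zero_mul, neg_zero, add_zero, zero_add,
      mul_zero, neg_neg, zero_sub, sub_zero] at h
    linarith
  apply Complex.ext
  · simpa using h2.symm
  · have hc := Complex.conj_im (τ (star x * y))
    rw [hc]
    linarith

lemma re_sq_le_abs_sq (z : ℂ) : z.re ^ 2 ≤ ‖z‖ ^ 2 := by
  rw [Complex.sq_norm, Complex.normSq_apply]
  nlinarith [mul_self_nonneg z.im]

/-- Cauchy–Schwarz for the positive sesquilinear form `⟨x,y⟩ = τ(x* y)`. -/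
lemma cs (hτ : IsTrace τ) (x y : A) :
    ‖τ (star x * y)‖ ^ 2 ≤ (τ (star x * x)).re * (τ (star y * y)).re := by
  by_cases h0 : τ (star x * y) = 0
  · rw [h0]
    simpa using mul_nonneg (re_nn hτ x) (re_nn hτ y)
  · set z := τ (star x * y) with hz
    set s : ℝ := Complex.normSq z with hs
    have hzc : z * (starRingEnd ℂ) z = (s : ℂ) := Complex.mul_conj z
    have hyx : τ (star y * x) = (starRingEnd ℂ) z := (conj_symm hτ x y).trans (by rw [← hz])
    have key : ∀ t : ℝ, 0 ≤ (s * (τ (star y * y)).re) * (t * t)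
        + (2 * s) * t + (τ (star x * x)).re := by
      intro t
      have h := re_nn hτ (x + ((t : ℂ) * (starRingEnd ℂ) z) • y)
      rw [expand x (((t : ℂ) * (starRingEnd ℂ) z) • y), sm_right, sm_left, sm_left,
        sm_right, ← hz, hyx] at h
      have e2 : ((t : ℂ) * (starRingEnd ℂ) z) * z = ((t * s : ℝ) : ℂ) := by
        push_cast
        linear_combination (t : ℂ) * hzc
      have e3 : (starRingEnd ℂ) ((t : ℂ) * (starRingEnd ℂ) z) * (starRingEnd ℂ) z
          = ((t * s : ℝ) : ℂ) := by
        rw [map_mul, Complex.conj_conj, Complex.conj_ofReal]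
        push_cast
        linear_combination (t : ℂ) * hzc
      have e4 : (starRingEnd ℂ) ((t : ℂ) * (starRingEnd ℂ) z)
            * (((t : ℂ) * (starRingEnd ℂ) z) * τ (star y * y))
          = ((t * t * s : ℝ) : ℂ) * τ (star y * y) := by
        rw [map_mul, Complex.conj_conj, Complex.conj_ofReal]
        push_cast
        linear_combination ((t : ℂ) * (t : ℂ) * τ (star y * y)) * hzc
      rw [e2, e3, e4] at h
      simp only [Complex.add_re, Complex.mul_re, Complex.ofReal_re, Complex.ofReal_im,
        zero_mul, sub_zero, im_zero hτ y] at h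
      nlinarith [h]
    have hd := discrim_le_zero key
    rw [discrim] at hd
    have hspos : 0 < s := by
      rw [hs]
      exact Complex.normSq_pos.mpr h0
    have habs : ‖z‖ ^ 2 = s := Complex.sq_norm z
    rw [habs]
    nlinarith [hd, hspos]

lemma tau_even_pow_nonneg (hτ : IsTrace τ) {h : A} (hh : star h = h) (N : ℕ) :
    0 ≤ τ (h ^ (2 * N)) := by
  have e : h ^ (2 * N) = star (h ^ N) * h ^ N := by
    rw [star_pow, hh, ← pow_add, two_mul]
  rw [e]
  exact hτ.2.1 _

lemma tau_even_pow_nonneg_re (hτ : IsTrace τ) {h : A} (hh : star h = h) (N : ℕ) :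
    0 ≤ (τ (h ^ (2 * N))).re := by
  have h' := Complex.le_def.mp (tau_even_pow_nonneg hτ hh N)
  simpa using h'.1

lemma R_nn (hτ : IsTrace τ) (x : A) (j : ℕ) : 0 ≤ (τ ((star x * x) ^ (2 ^ j))).re := by
  have hsa : star (star x * x) = star x * x := by rw [star_mul, star_star]
  cases j with
  | zero => simpa using re_nn hτ x
  | succ d =>
    have h1 : (2 : ℕ) ^ (d + 1) = 2 * 2 ^ d := by ring
    rw [h1]
    exact tau_even_pow_nonneg_re hτ hsa _

lemma sq_pow_re_nn (hτ : IsTrace τ) (y : A) (j : ℕ) :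
    0 ≤ (τ ((y * star y) ^ (2 ^ j))).re := by
  have hsa : star (y * star y) = y * star y := by rw [star_mul, star_star]
  cases j with
  | zero =>
    have h := re_nn hτ (star y)
    rw [star_star] at h
    simpa using h
  | succ d =>
    have h1 : (2 : ℕ) ^ (d + 1) = 2 * 2 ^ d := by ring
    rw [h1]
    exact tau_even_pow_nonneg_re hτ hsa _

lemma shift (x y : A) (N : ℕ) : y * (x * y) ^ N = (y * x) ^ N * y := by
  induction N with
  | zero => simp
  | succ d ih =>
    rw [pow_succ, ← mul_assoc, ih, pow_succ]
    simp [mul_assoc]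

lemma tau_cyc (hτ : IsTrace τ) (x y : A) (N : ℕ) : τ ((x * y) ^ N) = τ ((y * x) ^ N) := by
  cases N with
  | zero => simp
  | succ d =>
    have h1 : (x * y) ^ (d + 1) = x * ((y * x) ^ d * y) := by
      rw [pow_succ', mul_assoc, shift x y d]
    rw [h1, hτ.2.2, mul_assoc, ← pow_succ]

lemma moment_step (hτ : IsTrace τ) {h : A} (hh : star h = h) (j : ℕ) :
    ((τ (h ^ (2 ^ (j + 1)))).re) ^ 2 ≤ (τ (h ^ (2 ^ (j + 2)))).re := by
  have hcs := cs hτ (h ^ (2 ^ (j + 1))) (1 : A)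
  rw [star_pow, hh, mul_one, star_one, one_mul, ← pow_add] at hcs
  have e : 2 ^ (j + 1) + 2 ^ (j + 1) = 2 ^ (j + 2) := by ring
  rw [e, hτ.1] at hcs
  simp only [Complex.one_re, mul_one] at hcs
  exact le_trans (re_sq_le_abs_sq _) hcs

lemma moment_iter (hτ : IsTrace τ) {h : A} (hh : star h = h) (j d : ℕ) :
    ((τ (h ^ (2 ^ (j + 1)))).re) ^ (2 ^ d) ≤ (τ (h ^ (2 ^ (j + 1 + d)))).re := by
  induction d generalizing j with
  | zero => simp
  | succ d ih =>
    have h1 := moment_step hτ hh j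
    have e : ((τ (h ^ (2 ^ (j + 1)))).re) ^ (2 ^ (d + 1))
        = (((τ (h ^ (2 ^ (j + 1)))).re) ^ 2) ^ (2 ^ d) := by
      rw [← pow_mul]
      congr 1
      ring
    rw [e]
    calc (((τ (h ^ (2 ^ (j + 1)))).re) ^ 2) ^ (2 ^ d)
        ≤ ((τ (h ^ (2 ^ (j + 2)))).re) ^ (2 ^ d) :=
          pow_le_pow_left₀ (sq_nonneg _) h1 _
      _ ≤ (τ (h ^ (2 ^ (j + 2 + d)))).re := ih (j + 1)
      _ = (τ (h ^ (2 ^ (j + 1 + (d + 1))))).re := by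
          rw [show j + 2 + d = j + 1 + (d + 1) by omega]

/-- The mutual induction: (K) a tracial Hölder inequality for two self-adjoint
elements, and (G) a "symmetrization" inequality. -/
lemma KG (hτ : IsTrace τ) : ∀ k : ℕ,
    (∀ u b : A, star u = u → star b = b →
      ‖τ ((u * b) ^ (2 ^ k))‖ ^ 2
        ≤ (τ (u ^ (2 ^ (k + 1)))).re * (τ (b ^ (2 ^ (k + 1)))).re) ∧
    (∀ u b : A, star u = u → star b = b →
      (τ ((u * b) ^ (2 ^ k) * (b * u) ^ (2 ^ k))).re
        ≤ (τ ((u ^ 2 * b ^ 2) ^ (2 ^ k))).re) := by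
  intro k
  induction k with
  | zero =>
    constructor
    · intro u b hu hb
      have h := cs hτ u b
      rw [hu, hb] at h
      simpa [pow_one, pow_two] using h
    · intro u b hu hb
      have e1 : (u * b) * (b * u) = (u * b ^ 2) * u := by noncomm_ring
      have e2 : u * (u * b ^ 2) = u ^ 2 * b ^ 2 := by noncomm_ring
      have : τ ((u * b) * (b * u)) = τ (u ^ 2 * b ^ 2) := by
        rw [e1, hτ.2.2, e2]
      simp only [pow_one, pow_zero]
      rw [this]
  | succ k ih =>
    obtain ⟨K, G⟩ := ih
    constructor
    · -- K (k+1)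
      intro u b hu hb
      have hstar1 : star ((b * u) ^ (2 ^ k)) = (u * b) ^ (2 ^ k) := by
        rw [star_pow, star_mul, hu, hb]
      have hstar2 : star ((u * b) ^ (2 ^ k)) = (b * u) ^ (2 ^ k) := by
        rw [star_pow, star_mul, hu, hb]
      have hcs := cs hτ ((b * u) ^ (2 ^ k)) ((u * b) ^ (2 ^ k))
      rw [hstar1, hstar2, ← pow_add] at hcs
      have eM : 2 ^ k + 2 ^ k = 2 ^ (k + 1) := by ring
      rw [eM] at hcs
      have hswap : τ ((b * u) ^ (2 ^ k) * (u * b) ^ (2 ^ k))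
          = τ ((u * b) ^ (2 ^ k) * (b * u) ^ (2 ^ k)) := hτ.2.2 _ _
      rw [hswap] at hcs
      have hXnn : 0 ≤ (τ ((u * b) ^ (2 ^ k) * (b * u) ^ (2 ^ k))).re := by
        have h := re_nn hτ ((b * u) ^ (2 ^ k))
        rwa [hstar1] at h
      have hG := G u b hu hb
      have hK := K (u ^ 2) (b ^ 2) (by rw [star_pow, hu]) (by rw [star_pow, hb])
      have hpu : (u ^ 2) ^ (2 ^ (k + 1)) = u ^ (2 ^ (k + 1 + 1)) := by
        rw [← pow_mul]
        congr 1
        ring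
      have hpb : (b ^ 2) ^ (2 ^ (k + 1)) = b ^ (2 ^ (k + 1 + 1)) := by
        rw [← pow_mul]
        congr 1
        ring
      rw [hpu, hpb] at hK
      calc ‖τ ((u * b) ^ (2 ^ (k + 1)))‖ ^ 2
          ≤ (τ ((u * b) ^ (2 ^ k) * (b * u) ^ (2 ^ k))).re
            * (τ ((u * b) ^ (2 ^ k) * (b * u) ^ (2 ^ k))).re := hcs
        _ = ((τ ((u * b) ^ (2 ^ k) * (b * u) ^ (2 ^ k))).re) ^ 2 := (sq _).symm
        _ ≤ ((τ ((u ^ 2 * b ^ 2) ^ (2 ^ k))).re) ^ 2 := pow_le_pow_left₀ hXnn hG 2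
        _ ≤ ‖τ ((u ^ 2 * b ^ 2) ^ (2 ^ k))‖ ^ 2 := re_sq_le_abs_sq _
        _ ≤ (τ (u ^ (2 ^ (k + 1 + 1)))).re * (τ (b ^ (2 ^ (k + 1 + 1)))).re := hK
    · -- G (k+1)
      intro u b hu hb
      have hA : star (u * b * u) = u * b * u := by
        simp [star_mul, hu, hb, mul_assoc]
      have hut : star (b * u ^ 2 * b) = b * u ^ 2 * b := by
        simp [star_mul, star_pow, hu, hb, mul_assoc]
      have hbt : star (u * b ^ 2 * u) = u * b ^ 2 * u := by
        simp [star_mul, star_pow, hu, hb, mul_assoc]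
      have hsq : (2 : ℕ) ^ (k + 1) = 2 ^ k * 2 := pow_succ 2 k
      have e1 : (u * b) ^ (2 ^ (k + 1)) = ((u * b * u) * b) ^ (2 ^ k) := by
        rw [hsq, mul_comm (2 ^ k) 2, pow_mul]
        congr 1
        noncomm_ring
      have e2 : (b * u) ^ (2 ^ (k + 1)) = (b * (u * b * u)) ^ (2 ^ k) := by
        rw [hsq, mul_comm (2 ^ k) 2, pow_mul]
        congr 1
        noncomm_ring
      have hGk := G (u * b * u) b hA hb
      have e3 : τ (((u * b * u) ^ 2 * b ^ 2) ^ (2 ^ k))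
          = τ (((b * u ^ 2 * b) * (u * b ^ 2 * u)) ^ (2 ^ k)) := by
        have h1 : (u * b * u) ^ 2 * b ^ 2 = u * (b * u ^ 2 * b * u * b ^ 2) := by
          noncomm_ring
        have h2 : (b * u ^ 2 * b) * (u * b ^ 2 * u) = (b * u ^ 2 * b * u * b ^ 2) * u := by
          noncomm_ring
        rw [h1, h2, tau_cyc hτ]
      have hK := K (b * u ^ 2 * b) (u * b ^ 2 * u) hut hbt
      have e4 : τ ((b * u ^ 2 * b) ^ (2 ^ (k + 1))) = τ ((u ^ 2 * b ^ 2) ^ (2 ^ (k + 1))) := by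
        rw [tau_cyc hτ (b * u ^ 2) b]
        have h2 : b * (b * u ^ 2) = b ^ 2 * u ^ 2 := by noncomm_ring
        rw [h2, tau_cyc hτ (b ^ 2) (u ^ 2)]
      have e5 : τ ((u * b ^ 2 * u) ^ (2 ^ (k + 1))) = τ ((u ^ 2 * b ^ 2) ^ (2 ^ (k + 1))) := by
        rw [tau_cyc hτ (u * b ^ 2) u]
        have h2 : u * (u * b ^ 2) = u ^ 2 * b ^ 2 := by noncomm_ring
        rw [h2]
      have hZnn : 0 ≤ (τ ((u ^ 2 * b ^ 2) ^ (2 ^ (k + 1)))).re := by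
        have h1 : 0 ≤ (τ ((b * u ^ 2 * b) ^ (2 ^ (k + 1)))).re := by
          have e : (2 : ℕ) ^ (k + 1) = 2 * 2 ^ k := by ring
          rw [e]
          exact tau_even_pow_nonneg_re hτ hut _
        rwa [e4] at h1
      rw [e4, e5] at hK
      have habs : ‖τ (((b * u ^ 2 * b) * (u * b ^ 2 * u)) ^ (2 ^ k))‖
          ≤ (τ ((u ^ 2 * b ^ 2) ^ (2 ^ (k + 1)))).re := by
        apply le_of_pow_le_pow_left₀ two_ne_zero hZnn
        calc ‖τ (((b * u ^ 2 * b) * (u * b ^ 2 * u)) ^ (2 ^ k))‖ ^ 2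
            ≤ (τ ((u ^ 2 * b ^ 2) ^ (2 ^ (k + 1)))).re
              * (τ ((u ^ 2 * b ^ 2) ^ (2 ^ (k + 1)))).re := hK
          _ = ((τ ((u ^ 2 * b ^ 2) ^ (2 ^ (k + 1)))).re) ^ 2 := (sq _).symm
      calc (τ ((u * b) ^ (2 ^ (k + 1)) * (b * u) ^ (2 ^ (k + 1)))).re
          = (τ (((u * b * u) * b) ^ (2 ^ k) * (b * (u * b * u)) ^ (2 ^ k))).re := by
            rw [e1, e2]
        _ ≤ (τ (((u * b * u) ^ 2 * b ^ 2) ^ (2 ^ k))).re := hGk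
        _ = (τ (((b * u ^ 2 * b) * (u * b ^ 2 * u)) ^ (2 ^ k))).re := by rw [e3]
        _ ≤ (τ ((u ^ 2 * b ^ 2) ^ (2 ^ (k + 1)))).re :=
            le_trans (Complex.re_le_norm _) habs

/-- Main power inequality for palindromic products, by induction on the list. -/
lemma Pprime (hτ : IsTrace τ) : ∀ (l : List A), l ≠ [] → ∀ k : ℕ,
    (τ ((l.prod * star l.prod) ^ (2 ^ k))).re ^ (2 ^ (l.length - 1)) ≤
      (l.map (fun x => (τ ((star x * x) ^ (2 ^ (l.length - 1 + k)))).re)).prod := by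
  intro l
  induction l with
  | nil => intro h; exact absurd rfl h
  | cons x t ih =>
    intro _ k
    rcases eq_or_ne t [] with rfl | ht
    · simp only [List.prod_cons, List.prod_nil, mul_one, List.length_cons,
        List.length_nil, List.map_cons, List.map_nil, Nat.zero_add, Nat.add_sub_cancel,
        pow_zero, pow_one, Nat.zero_sub]
      rw [tau_cyc hτ x (star x)]
      simp
    · have hm : 1 ≤ t.length := by
        have := List.length_pos_iff.mpr ht
        omega
      simp only [List.prod_cons, List.length_cons, List.map_cons, Nat.add_sub_cancel]
      have ihh := ih ht (k + 1)
      have harith : t.length - 1 + (k + 1) = t.length + k := by omega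
      rw [harith] at ihh
      set V := t.prod with hV
      have hu : star (V * star V) = V * star V := by rw [star_mul, star_star]
      have hb : star (star x * x) = star x * x := by rw [star_mul, star_star]
      have e1 : τ ((x * V * star (x * V)) ^ (2 ^ k))
          = τ (((V * star V) * (star x * x)) ^ (2 ^ k)) := by
        have h1 : x * V * star (x * V) = x * ((V * star V) * star x) := by
          rw [star_mul]
          noncomm_ring
        rw [h1, tau_cyc hτ x ((V * star V) * star x), mul_assoc]
      have hK := (KG hτ k).1 (V * star V) (star x * x) hu hb
      have hX0nn : 0 ≤ (τ ((x * V * star (x * V)) ^ (2 ^ k))).re :=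
        sq_pow_re_nn hτ (x * V) k
      have hstep : (τ ((x * V * star (x * V)) ^ (2 ^ k))).re
          ≤ ‖τ (((V * star V) * (star x * x)) ^ (2 ^ k))‖ := by
        rw [e1]
        exact Complex.re_le_norm _
      have hexp : (2 : ℕ) ^ t.length = 2 * 2 ^ (t.length - 1) := by
        conv_lhs => rw [show t.length = t.length - 1 + 1 by omega]
        rw [pow_succ']
      have hPP : ((V * star V) ^ (2 ^ (k + 1)) : A) = (t.prod * star t.prod) ^ (2 ^ (k + 1)) := by
        rw [hV]
      have hPPnn : 0 ≤ (τ ((V * star V) ^ (2 ^ (k + 1)))).re := sq_pow_re_nn hτ V (k + 1)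
      have hQQnn : 0 ≤ (τ ((star x * x) ^ (2 ^ (k + 1)))).re := R_nn hτ x (k + 1)
      have hmom := moment_iter hτ hb k (t.length - 1)
      have harith2 : k + 1 + (t.length - 1) = t.length + k := by omega
      rw [harith2] at hmom
      have hfx : 0 ≤ (τ ((star x * x) ^ (2 ^ (t.length + k)))).re := R_nn hτ x _
      calc (τ ((x * V * star (x * V)) ^ (2 ^ k))).re ^ (2 ^ t.length)
          = ((τ ((x * V * star (x * V)) ^ (2 ^ k))).re ^ 2) ^ (2 ^ (t.length - 1)) := by
            rw [← pow_mul, ← hexp]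
        _ ≤ (‖τ (((V * star V) * (star x * x)) ^ (2 ^ k))‖ ^ 2)
              ^ (2 ^ (t.length - 1)) := by
            apply pow_le_pow_left₀ (sq_nonneg _)
            exact pow_le_pow_left₀ hX0nn hstep 2
        _ ≤ ((τ ((V * star V) ^ (2 ^ (k + 1)))).re
              * (τ ((star x * x) ^ (2 ^ (k + 1)))).re) ^ (2 ^ (t.length - 1)) :=
            pow_le_pow_left₀ (sq_nonneg _) hK _
        _ = (τ ((V * star V) ^ (2 ^ (k + 1)))).re ^ (2 ^ (t.length - 1))
              * (τ ((star x * x) ^ (2 ^ (k + 1)))).re ^ (2 ^ (t.length - 1)) := mul_pow _ _ _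
        _ ≤ ((t.map (fun y => (τ ((star y * y) ^ (2 ^ (t.length + k)))).re)).prod)
              * (τ ((star x * x) ^ (2 ^ (t.length + k)))).re := by
            apply mul_le_mul ihh hmom (pow_nonneg hQQnn _)
            exact le_trans (pow_nonneg hPPnn _) ihh
        _ = (τ ((star x * x) ^ (2 ^ (t.length + k)))).re
              * ((t.map (fun y => (τ ((star y * y) ^ (2 ^ (t.length + k)))).re)).prod) :=
            mul_comm _ _

lemma main_even (hτ : IsTrace τ) (m : ℕ) (hm : 1 ≤ m) (l : List A)
    (hl : l.length = 2 * m) :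
    ‖τ l.prod‖ ^ (2 ^ m)
      ≤ (l.map (fun x => (τ ((star x * x) ^ (2 ^ (m - 1)))).re)).prod := by
  have hl1 : (l.take m).length = m := by
    rw [List.length_take, hl]
    omega
  have hl2 : (l.drop m).length = m := by
    rw [List.length_drop, hl]
    omega
  have hne1 : l.take m ≠ [] := by
    intro h
    rw [h] at hl1
    simp at hl1
    omega
  have hne2 : l.drop m ≠ [] := by
    intro h
    rw [h] at hl2
    simp at hl2
    omega
  have happ : l = l.take m ++ l.drop m := (List.take_append_drop m l).symm
  have hprod : l.prod = (l.take m).prod * (l.drop m).prod := by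
    conv_lhs => rw [happ]
    rw [List.prod_append]
  have hcs := cs hτ (star (l.take m).prod) (l.drop m).prod
  rw [star_star] at hcs
  have hsw : τ (star (l.drop m).prod * (l.drop m).prod)
      = τ ((l.drop m).prod * star (l.drop m).prod) := hτ.2.2 _ _
  rw [hsw] at hcs
  have hP1 := Pprime hτ (l.take m) hne1 0
  have hP2 := Pprime hτ (l.drop m) hne2 0
  rw [hl1] at hP1
  rw [hl2] at hP2
  simp only [pow_zero, pow_one, Nat.add_zero] at hP1 hP2
  have hXnn : 0 ≤ (τ ((l.take m).prod * star (l.take m).prod)).re := by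
    have h := sq_pow_re_nn hτ (l.take m).prod 0
    simpa using h
  have hYnn : 0 ≤ (τ ((l.drop m).prod * star (l.drop m).prod)).re := by
    have h := sq_pow_re_nn hτ (l.drop m).prod 0
    simpa using h
  have hexp : (2 : ℕ) ^ m = 2 * 2 ^ (m - 1) := by
    conv_lhs => rw [show m = m - 1 + 1 by omega]
    rw [pow_succ']
  calc ‖τ l.prod‖ ^ (2 ^ m)
      = (‖τ ((l.take m).prod * (l.drop m).prod)‖ ^ 2) ^ (2 ^ (m - 1)) := by
        rw [hprod, ← pow_mul, ← hexp]
    _ ≤ ((τ ((l.take m).prod * star (l.take m).prod)).re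
          * (τ ((l.drop m).prod * star (l.drop m).prod)).re) ^ (2 ^ (m - 1)) :=
        pow_le_pow_left₀ (sq_nonneg _) hcs _
    _ = (τ ((l.take m).prod * star (l.take m).prod)).re ^ (2 ^ (m - 1))
          * (τ ((l.drop m).prod * star (l.drop m).prod)).re ^ (2 ^ (m - 1)) := mul_pow _ _ _
    _ ≤ ((l.take m).map (fun x => (τ ((star x * x) ^ (2 ^ (m - 1)))).re)).prod
          * ((l.drop m).map (fun x => (τ ((star x * x) ^ (2 ^ (m - 1)))).re)).prod := by
        apply mul_le_mul hP1 hP2 (pow_nonneg hYnn _)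
        exact le_trans (pow_nonneg hXnn _) hP1
    _ = (l.map (fun x => (τ ((star x * x) ^ (2 ^ (m - 1)))).re)).prod := by
        conv_rhs => rw [happ]
        rw [List.map_append, List.prod_append]

end GCSAux

/-- generalized Cauchy–Schwarz inequality.  For a positive trace
`τ` on a unital complex `*`-algebra and `a₁,…,aₙ ∈ A`,
`|τ(a₁⋯aₙ)| ≤ ∏ᵢ τ((aᵢ*aᵢ)^{φ(n)})^{1/(2φ(n))}`.  (Each `τ((aᵢ*aᵢ)^{φ(n)})` is a
nonnegative real, recorded via its real part.) -/
theorem generalized_cauchy_schwarz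
    {A : Type*} [Ring A] [Algebra ℂ A] [StarRing A] [StarModule ℂ A]
    (τ : A →ₗ[ℂ] ℂ) (hτ : IsTrace τ) (n : ℕ) (a : Fin n → A) :
    ‖τ (List.ofFn a).prod‖ ≤
      ∏ i, ((τ ((star (a i) * a i) ^ phi n)).re) ^ (1 / (2 * (phi n : ℝ))) := by
  classical
  rcases Nat.eq_zero_or_pos n with rfl | hn
  · simp [hτ.1]
  · set m : ℕ := (n + 1) / 2 with hmdef
    have hm1 : 1 ≤ m := by omega
    have hphi : phi n = 2 ^ (m - 1) := GCSAux.phi_eq n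
    have key : ‖τ (List.ofFn a).prod‖ ^ (2 ^ m)
        ≤ ∏ i, (τ ((star (a i) * a i) ^ (2 ^ (m - 1)))).re := by
      rcases Nat.even_or_odd n with he | ho
      · obtain ⟨c, hc⟩ := he
        have hlen : (List.ofFn a).length = 2 * m := by
          rw [List.length_ofFn]
          omega
        have h := GCSAux.main_even hτ m hm1 (List.ofFn a) hlen
        rwa [List.map_ofFn, List.prod_ofFn] at h
      · obtain ⟨c, hc⟩ := ho
        have hlen : (List.ofFn a ++ [(1 : A)]).length = 2 * m := by
          simp only [List.length_append, List.length_ofFn, List.length_cons,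
            List.length_nil]
          omega
        have h := GCSAux.main_even hτ m hm1 (List.ofFn a ++ [(1 : A)]) hlen
        rw [List.prod_append, List.map_append] at h
        simp only [List.prod_cons, List.prod_nil, List.map_cons, List.map_nil,
          mul_one] at h
        simp only [star_one, one_mul, one_pow, hτ.1, Complex.one_re, mul_one] at h
        simpa [List.map_ofFn, List.prod_ofFn, Function.comp] using h
    have hRnn : ∀ i : Fin n, 0 ≤ (τ ((star (a i) * a i) ^ (2 ^ (m - 1)))).re :=
      fun i => GCSAux.R_nn hτ (a i) (m - 1)
    have hPnn : 0 ≤ ∏ i, (τ ((star (a i) * a i) ^ (2 ^ (m - 1)))).re :=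
      Finset.prod_nonneg (fun i _ => hRnn i)
    have habs : 0 ≤ ‖τ (List.ofFn a).prod‖ := norm_nonneg _
    have h2phi : (2 * (phi n : ℝ)) = (2 : ℝ) ^ m := by
      rw [hphi]
      push_cast
      rw [← pow_succ']
      congr 1
      omega
    have hmain : ‖τ (List.ofFn a).prod‖
        ≤ (∏ i, (τ ((star (a i) * a i) ^ (2 ^ (m - 1)))).re) ^ (((2 : ℝ) ^ m)⁻¹) := by
      have h1 : ‖τ (List.ofFn a).prod‖
          = (‖τ (List.ofFn a).prod‖ ^ ((2 : ℕ) ^ m)) ^ (((2 : ℝ) ^ m)⁻¹) := by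
        rw [← Real.rpow_natCast (‖τ (List.ofFn a).prod‖) (2 ^ m),
          ← Real.rpow_mul habs]
        push_cast
        rw [mul_inv_cancel₀ (by positivity), Real.rpow_one]
      rw [h1]
      exact Real.rpow_le_rpow (pow_nonneg habs _) key (by positivity)
    have hsplit : (∏ i, (τ ((star (a i) * a i) ^ (2 ^ (m - 1)))).re) ^ (((2 : ℝ) ^ m)⁻¹)
        = ∏ i, ((τ ((star (a i) * a i) ^ (2 ^ (m - 1)))).re) ^ (((2 : ℝ) ^ m)⁻¹) :=
      (Real.finset_prod_rpow _ _ (fun i _ => hRnn i) _).symm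
    rw [hsplit] at hmain
    have hexp : (1 / (2 * (phi n : ℝ))) = ((2 : ℝ) ^ m)⁻¹ := by
      rw [h2phi, one_div]
    rw [hexp, hphi]
    exact hmain
end
end

section
/- Let τ be a positive trace on a unital ℂ-algebra A with involution. Then for all r, n ∈ ℕ and all a₁,…,aₙ ∈ A, |τ((a₁ + ⋯ + aₙ)^r)| ≤ (Σ_{i=1}^n τ((aᵢ*aᵢ)^{φ(r)})^{1/(2φ(r))})^r, where φ(r) = 2^{r/2−1} for even r and φ(r) = φ(r+1) = 2^{(r+1)/2−1} for odd r. -/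
open scoped ComplexOrder

noncomputable section

namespace TraceAux

variable {A : Type*} [Ring A] [Algebra ℂ A] [StarRing A] [StarModule ℂ A]
variable {τ : A →ₗ[ℂ] ℂ}

lemma re_nonneg (hτ : IsTrace τ) (x : A) : 0 ≤ (τ (star x * x)).re := by
  have := hτ.2.1 x; rw [Complex.le_def] at this; simpa using this.1

lemma im_zero (hτ : IsTrace τ) (x : A) : (τ (star x * x)).im = 0 := by
  have := hτ.2.1 x; rw [Complex.le_def] at this; simpa using this.2.symm

/-- Hermitian symmetry of the form `(x,y) ↦ τ(x* y)`. -/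
lemma herm (hτ : IsTrace τ) (x y : A) :
    τ (star y * x) = starRingEnd ℂ (τ (star x * y)) := by
  have key1 : (τ (star x * y)).im + (τ (star y * x)).im = 0 := by
    have h := im_zero hτ (x + y)
    have : τ (star (x+y) * (x+y)) =
        τ (star x * x) + τ (star y * y) + (τ (star x * y) + τ (star y * x)) := by
      rw [star_add]; rw [add_mul, mul_add, mul_add]
      simp only [map_add]; ring
    rw [this] at h
    simp only [Complex.add_im, im_zero hτ x, im_zero hτ y] at h
    linarith
  have key2 : (τ (star x * y)).re - (τ (star y * x)).re = 0 := by
    have h := im_zero hτ (x + Complex.I • y)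
    have : τ (star (x + Complex.I • y) * (x + Complex.I • y)) =
        τ (star x * x) + τ (star (Complex.I • y) * (Complex.I • y)) +
          (Complex.I * τ (star x * y) + (starRingEnd ℂ Complex.I) * τ (star y * x)) := by
      rw [star_add, add_mul, mul_add, mul_add]
      simp only [map_add, star_smul, smul_mul_assoc, mul_smul_comm, map_smul,
        starRingEnd_apply]
      simp only [smul_eq_mul]
      ring
    rw [this] at h
    simp only [Complex.add_im, im_zero hτ x, im_zero hτ (Complex.I • y)] at h
    simp only [Complex.conj_I, Complex.mul_im, Complex.neg_re, Complex.neg_im,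
      Complex.I_re, Complex.I_im] at h
    linarith
  apply Complex.ext
  · simp [Complex.conj_re]; linarith
  · simp [Complex.conj_im]; linarith

/-- Cauchy–Schwarz for the positive form. -/
lemma cs (hτ : IsTrace τ) (x y : A) :
    ‖τ (star x * y)‖ ^ 2 ≤ (τ (star x * x)).re * (τ (star y * y)).re := by
  set c : ℂ := τ (star x * y) with hc
  set Tx := (τ (star x * x)).re
  set Ty := (τ (star y * y)).re
  have hTx : 0 ≤ Tx := re_nonneg hτ x
  have hTy : 0 ≤ Ty := re_nonneg hτ y
  have key : ∀ s : ℝ, 0 ≤ Tx - 2*s*(Complex.normSq c) + s^2*(Complex.normSq c)*Ty := by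
    intro s
    set t : ℂ := (s:ℂ) * starRingEnd ℂ c with ht
    have hpos := re_nonneg hτ (x - t • y)
    have hexp : τ (star (x - t • y) * (x - t • y)) =
        τ (star x * x) - t * τ (star x * y) - starRingEnd ℂ t * τ (star y * x)
          + (t * starRingEnd ℂ t) * τ (star y * y) := by
      rw [star_sub, sub_mul, mul_sub, mul_sub]
      simp only [map_sub, star_smul, smul_mul_assoc, mul_smul_comm, map_smul,
        starRingEnd_apply, smul_eq_mul]
      ring
    rw [hexp] at hpos
    have h1 : t * τ (star x * y) = (s:ℂ) * Complex.normSq c := by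
      rw [ht, ← hc, mul_assoc, mul_comm (starRingEnd ℂ c) c, Complex.mul_conj]
    have h2 : starRingEnd ℂ t * τ (star y * x) = (s:ℂ) * Complex.normSq c := by
      rw [herm hτ x y, ← hc, ht]
      simp only [map_mul, Complex.conj_conj, Complex.conj_ofReal]
      rw [mul_assoc, Complex.mul_conj]
    have h3 : t * starRingEnd ℂ t = ((s^2 * Complex.normSq c : ℝ) : ℂ) := by
      have hn : Complex.normSq t = s^2 * Complex.normSq c := by
        rw [ht, Complex.normSq_mul, Complex.normSq_conj, Complex.normSq_ofReal]
        ring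
      rw [Complex.mul_conj, hn]
    rw [h1, h2, h3] at hpos
    have him := im_zero hτ y
    simp only [Complex.sub_re, Complex.add_re, Complex.mul_re, Complex.ofReal_re,
      Complex.ofReal_im, him, Complex.normSq_apply] at hpos
    simp only [Complex.normSq_apply]
    nlinarith [hpos]
  have habs : ‖c‖^2 = Complex.normSq c := Complex.sq_norm c
  rw [habs]
  rcases eq_or_lt_of_le hTy with hTy0 | hTy0
  · -- Ty = 0
    by_cases hns : Complex.normSq c = 0
    · rw [hns]; positivity
    · exfalso
      have hns' : 0 < Complex.normSq c := lt_of_le_of_ne (Complex.normSq_nonneg c) (Ne.symm hns)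
      have hk := key ((Tx + 1) / (2 * Complex.normSq c))
      rw [← hTy0] at hk
      have h4 : 2 * ((Tx + 1) / (2 * Complex.normSq c)) * Complex.normSq c = Tx + 1 := by
        field_simp
      nlinarith [hk, h4]
  · have := key (1 / Ty)
    have h2 : Tx - 2*(1/Ty)*(Complex.normSq c) + (1/Ty)^2*(Complex.normSq c)*Ty
        = Tx - (Complex.normSq c)/Ty := by field_simp; ring
    rw [h2] at this
    have h5 : Complex.normSq c / Ty * Ty = Complex.normSq c :=
      div_mul_cancel₀ _ (ne_of_gt hTy0)
    nlinarith [mul_nonneg this (le_of_lt hTy0), h5]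


/-- Cyclic invariance for powers: `τ((ab)^N) = τ((ba)^N)`. -/
lemma cyc_pow (hτ : IsTrace τ) (a b : A) (N : ℕ) : τ ((a*b)^N) = τ ((b*a)^N) := by
  induction N with
  | zero => simp
  | succ N ih =>
    have hsc : b * (a*b)^N = (b*a)^N * b :=
      (SemiconjBy.pow_right (by simp [SemiconjBy, mul_assoc]) N)
    calc τ ((a*b)^(N+1)) = τ (((a*b)^N * a) * b) := by rw [pow_succ, mul_assoc]
    _ = τ (b * ((a*b)^N * a)) := hτ.2.2 _ _
    _ = τ (((b*a)^N * b) * a) := by rw [← mul_assoc, hsc, mul_assoc]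
    _ = τ ((b*a)^(N+1)) := by rw [pow_succ, mul_assoc]

/-- `(star w * w)^N` is a hermitian square. -/
lemma pow_is_sq (w : A) (N : ℕ) : ∃ z : A, (star w * w)^N = star z * z := by
  rcases Nat.even_or_odd N with ⟨k, hk⟩ | ⟨k, hk⟩
  · refine ⟨(star w * w)^k, ?_⟩
    have hsa : star ((star w * w)^k) = (star w * w)^k := by
      rw [star_pow, star_mul, star_star]
    rw [hsa, ← pow_add, hk]
  · refine ⟨w * (star w * w)^k, ?_⟩
    have hsa : star ((star w * w)^k) = (star w * w)^k := by
      rw [star_pow, star_mul, star_star]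
    rw [star_mul, hsa, hk]
    rw [mul_assoc, ← mul_assoc (star w) w _, ← pow_succ']
    rw [← pow_add]
    ring_nf

lemma re_nonneg_pow (hτ : IsTrace τ) (w : A) (N : ℕ) : 0 ≤ (τ ((star w * w)^N)).re := by
  obtain ⟨z, hz⟩ := pow_is_sq w N
  rw [hz]; exact re_nonneg hτ z

lemma im_zero_pow (hτ : IsTrace τ) (w : A) (N : ℕ) : (τ ((star w * w)^N)).im = 0 := by
  obtain ⟨z, hz⟩ := pow_is_sq w N
  rw [hz]; exact im_zero hτ z

/-- variant: `(w * star w)^N` also has nonnegative real trace. -/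
lemma re_nonneg_pow' (hτ : IsTrace τ) (w : A) (N : ℕ) : 0 ≤ (τ ((w * star w)^N)).re := by
  have h : w * star w = star (star w) * star w := by rw [star_star]
  rw [h]; exact re_nonneg_pow hτ (star w) N

lemma im_zero_pow' (hτ : IsTrace τ) (w : A) (N : ℕ) : (τ ((w * star w)^N)).im = 0 := by
  have h : w * star w = star (star w) * star w := by rw [star_star]
  rw [h]; exact im_zero_pow hτ (star w) N

/-- CS in the convenient form `|τ(x y)|² ≤ τ(x x*) τ(y* y)`. -/
lemma cs' (hτ : IsTrace τ) (x y : A) :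
    ‖τ (x * y)‖ ^ 2 ≤ (τ (x * star x)).re * (τ (star y * y)).re := by
  have := cs hτ (star x) y
  rwa [star_star] at this

/-- `|τ(x²)| ≤ τ(x x*).re`. -/
lemma abs_sq_le (hτ : IsTrace τ) (x : A) :
    ‖τ (x * x)‖ ≤ (τ (x * star x)).re := by
  have h := cs' hτ x x
  have hc : (τ (star x * x)).re = (τ (x * star x)).re := by rw [hτ.2.2]
  rw [hc] at h
  have hnn : 0 ≤ (τ (x * star x)).re := by
    have : x * star x = star (star x) * star x := by rw [star_star]
    rw [this]; exact re_nonneg hτ (star x)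
  nlinarith [norm_nonneg (τ (x * x)), h]

/-- Monotonicity: `τ(h^{2^j}).re ^ (2^d) ≤ τ(h^{2^{j+d}}).re` for `h = star w * w`. -/
lemma mono_pow (hτ : IsTrace τ) (w : A) (j d : ℕ) :
    (τ ((star w * w)^(2^j))).re ^ (2^d) ≤ (τ ((star w * w)^(2^(j+d)))).re := by
  induction d generalizing j with
  | zero => simp
  | succ d ih =>
    set h := star w * w with hh
    have step : (τ (h^(2^j))).re ^ 2 ≤ (τ (h^(2^(j+1)))).re := by
      -- CS with 1 : |τ(y)|² ≤ τ(1) τ(y* y), y := h^(2^j)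
      have hcs := cs hτ (1 : A) (h^(2^j))
      rw [star_one, one_mul, one_mul, hτ.1] at hcs
      simp only [Complex.one_re, one_mul] at hcs
      have hsa : star (h^(2^j)) = h^(2^j) := by
        rw [hh, star_pow, star_mul, star_star]
      rw [hsa, ← pow_add] at hcs
      have h2 : 2^j + 2^j = 2^(j+1) := by rw [pow_succ]; ring
      rw [h2] at hcs
      have hre : (τ (h^(2^j))).re ≤ ‖τ (h^(2^j))‖ := Complex.re_le_norm _
      have hnn : 0 ≤ (τ (h^(2^j))).re := re_nonneg_pow hτ w _
      nlinarith [hcs, hre, hnn]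
    have hpow : (τ (h^(2^j))).re ^ (2^(d+1)) = ((τ (h^(2^j))).re ^ 2) ^ (2^d) := by
      rw [← pow_mul]; congr 1; rw [pow_succ]; ring
    rw [hpow]
    calc ((τ (h^(2^j))).re ^ 2) ^ (2^d) ≤ ((τ (h^(2^(j+1)))).re) ^ (2^d) := by
          apply pow_le_pow_left₀ (by positivity) step
    _ ≤ (τ (h^(2^(j+1+d)))).re := ih (j+1)
    _ = (τ (h^(2^(j+(d+1))))).re := by ring_nf


/-- Reduction of `τ((Y²(Y²)*)^N)` to the word `((Y Y*)(Y* Y))^N`. -/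
lemma square_word_eq (hτ : IsTrace τ) (Y : A) (N : ℕ) :
    τ ((Y^2 * star (Y^2))^N) = τ (((Y * star Y) * (star Y * Y))^N) := by
  have e1 : Y^2 * star (Y^2) = Y * (Y * (star Y * star Y)) := by
    rw [star_pow, pow_two, pow_two]
    simp [mul_assoc]
  have e2 : (Y * (star Y * star Y)) * Y = (Y * star Y) * (star Y * Y) := by
    simp [mul_assoc]
  rw [e1, cyc_pow hτ Y (Y * (star Y * star Y)), e2]

/-- Descent step, base case `s = 0`. -/
lemma vstep0 (hτ : IsTrace τ) (Y : A) :
    (τ ((Y^2 * star (Y^2))^(2^0))).re ≤ (τ ((Y * star Y)^(2^1))).re := by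
  set v := Y * star Y with hv
  set u := star Y * Y with hu
  have hsv : star v = v := by rw [hv, star_mul, star_star]
  have hsu : star u = u := by rw [hu, star_mul, star_star]
  have heq : τ ((Y^2 * star (Y^2))^(2^0)) = τ (v * u) := by
    rw [square_word_eq hτ Y]
    norm_num [hv, hu, mul_assoc]
  rw [heq]
  have hR : (τ (v * v)).re = (τ ((Y * star Y)^(2^1))).re := by
    rw [show v * v = (Y * star Y)^(2:ℕ) by rw [hv, pow_two]]
    norm_num
  have hR' : (τ (u * u)).re = (τ ((Y * star Y)^(2^1))).re := by
    rw [show u * u = (star Y * Y)^(2:ℕ) by rw [hu, pow_two]]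
    rw [cyc_pow hτ (star Y) Y]
    norm_num
  have hcs := cs' hτ v u
  rw [hsv, hsu] at hcs
  rw [hR, hR'] at hcs
  have hRnn : 0 ≤ (τ ((Y * star Y)^(2^1))).re := re_nonneg_pow' hτ Y _
  have hre : (τ (v * u)).re ≤ ‖τ (v * u)‖ := Complex.re_le_norm _
  nlinarith [norm_nonneg (τ (v * u))]

/-- Descent step, `s ≥ 1`, assuming the sorting estimate at level `s`. -/
lemma vstepS (hτ : IsTrace τ) (s : ℕ)
    (hFS : ∀ P Q : A, star P = P → star Q = Q →
      ‖τ ((P*Q)^(2^s))‖ ≤ (τ (P^(2^s) * Q^(2^s))).re)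
    (Y : A) :
    (τ ((Y^2 * star (Y^2))^(2^s))).re ≤ (τ ((Y * star Y)^(2^(s+1)))).re := by
  set v := Y * star Y with hv
  set u := star Y * Y with hu
  have hsv : star v = v := by rw [hv, star_mul, star_star]
  have hsu : star u = u := by rw [hu, star_mul, star_star]
  have heq : τ ((Y^2 * star (Y^2))^(2^s)) = τ ((v * u)^(2^s)) := square_word_eq hτ Y _
  rw [heq]
  have h1 : (τ ((v*u)^(2^s))).re ≤ ‖τ ((v*u)^(2^s))‖ := Complex.re_le_norm _
  have h2 := hFS v u hsv hsu
  -- now bound τ(v^K u^K) by τ(v^{2K}) = RHS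
  set K := 2^s with hK
  have h3 : (τ (v^K * u^K)).re ≤ ‖τ (v^K * u^K)‖ := Complex.re_le_norm _
  have hcs := cs' hτ (v^K) (u^K)
  rw [star_pow, hsv, star_pow, hsu, ← pow_add, ← pow_add] at hcs
  have hKK : K + K = 2^(s+1) := by rw [hK, pow_succ]; ring
  rw [hKK] at hcs
  have hvv : (τ (v^(2^(s+1)))).re = (τ ((Y * star Y)^(2^(s+1)))).re := by rw [hv]
  have huu : (τ (u^(2^(s+1)))).re = (τ ((Y * star Y)^(2^(s+1)))).re := by
    rw [hu, cyc_pow hτ (star Y) Y]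
  rw [hvv, huu] at hcs
  have hRnn : 0 ≤ (τ ((Y * star Y)^(2^(s+1)))).re := re_nonneg_pow' hτ Y _
  have h4 : ‖τ (v^K * u^K)‖ ≤ (τ ((Y * star Y)^(2^(s+1)))).re := by
    nlinarith [norm_nonneg (τ (v^K * u^K))]
  linarith


/-- **Sorting lemma**: `|τ((PQ)^{2^m})| ≤ τ(P^{2^m} Q^{2^m}).re` for self-adjoint `P, Q`. -/
lemma fullsort (hτ : IsTrace τ) : ∀ m : ℕ, 1 ≤ m → ∀ P Q : A, star P = P → star Q = Q →
    ‖τ ((P*Q)^(2^m))‖ ≤ (τ (P^(2^m) * Q^(2^m))).re := by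
  intro m
  induction m using Nat.strong_induction_on with
  | _ m IH =>
  intro hm P Q hP hQ
  obtain ⟨M, rfl⟩ : ∃ M, m = M + 1 := ⟨m - 1, (Nat.succ_pred_eq_of_pos hm).symm⟩
  -- the descending family of quantities
  set g : ℕ → ℝ := fun t => (τ (((P*Q)^(2^t) * (Q*P)^(2^t))^(2^(M-t)))).re with hg
  -- Step A : |τ((PQ)^{2^{M+1}})| ≤ g M
  have stepA : ‖τ ((P*Q)^(2^(M+1)))‖ ≤ g M := by
    have hx : (P*Q)^(2^(M+1)) = (P*Q)^(2^M) * (P*Q)^(2^M) := by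
      rw [← pow_add]; congr 1; rw [pow_succ]; ring
    have hstar : star ((P*Q)^(2^M)) = (Q*P)^(2^M) := by
      rw [star_pow, star_mul, hP, hQ]
    have := abs_sq_le hτ ((P*Q)^(2^M))
    rw [hstar] at this
    rw [hx]
    simpa [hg, Nat.sub_self] using this
  -- descent
  have descent : ∀ k, k ≤ M → g M ≤ g (M - k) := by
    intro k
    induction k with
    | zero => intro _; simp
    | succ k ihk =>
      intro hk
      have hk' : k ≤ M := le_of_lt (Nat.lt_of_succ_le hk)
      refine le_trans (ihk hk') ?_
      -- g (M-k) ≤ g (M-k-1), with t := M-k ≥ 1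
      set t := M - k with hts
      have ht1 : 1 ≤ t := by omega
      set Y := (P*Q)^(2^(t-1)) with hY
      have hY2 : Y^2 = (P*Q)^(2^t) := by
        rw [hY, ← pow_mul]
        congr 1
        have : t - 1 + 1 = t := by omega
        rw [mul_comm, ← pow_succ']
        rw [this]
      have hYstar : star (Y^2) = (Q*P)^(2^t) := by
        rw [hY2, star_pow, star_mul, hP, hQ]
      have hYsY : Y * star Y = (P*Q)^(2^(t-1)) * (Q*P)^(2^(t-1)) := by
        rw [hY, star_pow, star_mul, hP, hQ]
      have key : (τ ((Y^2 * star (Y^2))^(2^(M-t)))).re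
          ≤ (τ ((Y * star Y)^(2^(M-t+1)))).re := by
        rcases Nat.eq_zero_or_pos (M - t) with h0 | hpos
        · rw [h0]
          simpa [h0] using vstep0 hτ Y
        · exact vstepS hτ (M-t)
            (fun P' Q' hP' hQ' => IH (M-t) (by omega) (by omega) P' Q' hP' hQ') Y
      have e1 : g t = (τ ((Y^2 * star (Y^2))^(2^(M-t)))).re := by
        rw [hg]; simp only []
        rw [← hY2, ← hYstar]
      have e2 : g (t-1) = (τ ((Y * star Y)^(2^(M-t+1)))).re := by
        have hexp : M - (t - 1) = M - t + 1 := by omega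
        rw [hg]; simp only []
        rw [← hYsY, hexp]
      have : g t ≤ g (t - 1) := by rw [e1, e2]; exact key
      have ht2 : M - (k+1) = t - 1 := by omega
      rw [ht2]
      exact this
  -- terminal bound
  have terminal : g 0 ≤ (τ (P^(2^(M+1)) * Q^(2^(M+1)))).re := by
    have e0 : g 0 = (τ ((Q^2 * P^2)^(2^M))).re := by
      rw [hg]; simp only [pow_zero, pow_one, Nat.sub_zero]
      have e : (P*Q) * (Q*P) = P * ((Q * (Q * P))) := by simp [mul_assoc]
      rw [e, cyc_pow hτ P (Q * (Q * P))]
      have e' : (Q * (Q * P)) * P = Q^2 * P^2 := by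
        rw [pow_two, pow_two]; simp [mul_assoc]
      rw [e']
    rw [e0]
    rcases Nat.eq_zero_or_pos M with h0 | hMpos
    · subst h0
      simp only [pow_zero, pow_one]
      have : τ (Q^2 * P^2) = τ (P^2 * Q^2) := hτ.2.2 _ _
      rw [this]
      norm_num
    · have hre : (τ ((Q^2 * P^2)^(2^M))).re ≤ ‖τ ((Q^2 * P^2)^(2^M))‖ :=
        Complex.re_le_norm _
      have hQ2 : star (Q^2 : A) = Q^2 := by rw [star_pow, hQ]
      have hP2 : star (P^2 : A) = P^2 := by rw [star_pow, hP]
      have hIH := IH M (by omega) hMpos (Q^2) (P^2) hQ2 hP2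
      have epow : (Q^2)^(2^M) = Q^(2^(M+1)) := by
        rw [← pow_mul]; congr 1; rw [pow_succ]; ring
      have epow' : (P^2)^(2^M) = P^(2^(M+1)) := by
        rw [← pow_mul]; congr 1; rw [pow_succ]; ring
      rw [epow, epow'] at hIH
      have : τ (Q^(2^(M+1)) * P^(2^(M+1))) = τ (P^(2^(M+1)) * Q^(2^(M+1))) := hτ.2.2 _ _
      rw [this] at hIH
      exact le_trans hre hIH
  calc ‖τ ((P*Q)^(2^(M+1)))‖ ≤ g M := stepA
  _ ≤ g (M - M) := descent M le_rfl
  _ = g 0 := by rw [Nat.sub_self]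
  _ ≤ _ := terminal


/-- Squared Hölder estimate for a pair of self-adjoint elements. -/
lemma csq (hτ : IsTrace τ) (m : ℕ) (P Q : A) (hP : star P = P) (hQ : star Q = Q) :
    ‖τ ((P*Q)^(2^m))‖^2 ≤ (τ (P^(2^(m+1)))).re * (τ (Q^(2^(m+1)))).re := by
  rcases Nat.eq_zero_or_pos m with h0 | hm
  · subst h0
    have hcs := cs' hτ P Q
    rw [hP] at hcs
    have e1 : P * P = P^(2^(0+1)) := by norm_num [pow_two]
    have e2 : star Q * Q = Q^(2^(0+1)) := by rw [hQ]; norm_num [pow_two]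
    rw [e1, e2] at hcs
    simpa using hcs
  · have h1 := fullsort hτ m hm P Q hP hQ
    set K := 2^m with hK
    have hcs := cs' hτ (P^K) (Q^K)
    rw [star_pow, hP, star_pow, hQ, ← pow_add, ← pow_add] at hcs
    have hKK : K + K = 2^(m+1) := by rw [hK, pow_succ]; ring
    rw [hKK] at hcs
    have h2 : (τ (P^K * Q^K)).re ≤ ‖τ (P^K * Q^K)‖ := Complex.re_le_norm _
    have h3 : 0 ≤ ‖τ ((P*Q)^(2^m))‖ := norm_nonneg _
    nlinarith [h1, h2, hcs, h3]

/-- Palindrome-power estimate over a word given as a list. -/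
lemma palpow (hτ : IsTrace τ) : ∀ (l : List A), l ≠ [] → ∀ m : ℕ,
    (τ ((l.prod * star l.prod)^(2^m))).re ^ (2^(l.length - 1)) ≤
      (l.map (fun c => (τ ((star c * c)^(2^(m + l.length - 1)))).re)).prod := by
  intro l
  induction l with
  | nil => intro h; exact absurd rfl h
  | cons c l' ih =>
    intro _ m
    rcases eq_or_ne l' [] with rfl | hl'
    · -- singleton
      simp only [List.prod_cons, List.prod_nil, mul_one, List.length_cons,
        List.length_nil, List.map_cons, List.map_nil]
      have : τ ((c * star c)^(2^m)) = τ ((star c * c)^(2^m)) := cyc_pow hτ c (star c) _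
      rw [this]
      simp
    · -- length ≥ 2
      set p := l'.prod with hp
      set G := p * star p with hG
      set P := star c * c with hP
      have hsaG : star G = G := by rw [hG, star_mul, star_star]
      have hsaP : star P = P := by rw [hP, star_mul, star_star]
      have hword : ∀ N : ℕ, τ (((c :: l').prod * star ((c :: l').prod))^N) = τ ((G * P)^N) := by
        intro N
        have e1 : (c :: l').prod * star ((c :: l').prod) = c * (G * star c) := by
          rw [List.prod_cons, star_mul, hG, hp]
          simp [mul_assoc]
        have e2 : (G * star c) * c = G * P := by rw [hP, mul_assoc]
        rw [e1, cyc_pow hτ c (G * star c), e2]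
      have hcsq := csq hτ m G P hsaG hsaP
      set X := (τ (((c :: l').prod * star ((c :: l').prod))^(2^m))).re with hX
      have hXabs : X ≤ ‖τ ((G*P)^(2^m))‖ := by
        rw [hX, hword]; exact Complex.re_le_norm _
      have hXnn : 0 ≤ X := re_nonneg_pow' hτ ((c :: l').prod) _
      have hXsq : X^2 ≤ (τ (G^(2^(m+1)))).re * (τ (P^(2^(m+1)))).re := by
        nlinarith [hXabs, hcsq, hXnn, norm_nonneg (τ ((G*P)^(2^m)))]
      -- lengths
      set L := l'.length with hL
      have hL1 : 1 ≤ L := by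
        rw [hL]
        exact List.length_pos_iff.mpr hl'
      have hPmono : ((τ (P^(2^(m+1)))).re)^(2^(L-1)) ≤ (τ (P^(2^(m+L)))).re := by
        have := mono_pow hτ c (m+1) (L-1)
        have he : m + 1 + (L - 1) = m + L := by omega
        rw [he] at this
        exact this
      have hGih : ((τ (G^(2^(m+1)))).re)^(2^(L-1)) ≤
          (l'.map (fun c' => (τ ((star c' * c')^(2^(m + L)))).re)).prod := by
        have := ih hl' (m+1)
        have he : m + 1 + l'.length - 1 = m + L := by omega
        rw [he] at this
        rw [hG, hp]
        exact this
      -- assemble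
      have hGnn : 0 ≤ (τ (G^(2^(m+1)))).re := by
        rw [hG]
        exact re_nonneg_pow' hτ p _
      have hPnn : 0 ≤ (τ (P^(2^(m+1)))).re := by rw [hP]; exact re_nonneg_pow hτ c _
      have goalpow : X^(2^((c::l').length - 1)) = (X^2)^(2^(L-1)) := by
        have hlen : (c::l').length - 1 = L := by simp [hL]
        have h2L : 2 ^ L = 2 * 2 ^ (L - 1) := by
          conv_lhs => rw [show L = (L-1)+1 by omega]
          rw [pow_succ]; ring
        rw [hlen, h2L, pow_mul]
      rw [goalpow]
      have step1 : (X^2)^(2^(L-1)) ≤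
          ((τ (G^(2^(m+1)))).re * (τ (P^(2^(m+1)))).re)^(2^(L-1)) := by
        apply pow_le_pow_left₀ (by positivity) hXsq
      have step2 : ((τ (G^(2^(m+1)))).re * (τ (P^(2^(m+1)))).re)^(2^(L-1)) =
          ((τ (G^(2^(m+1)))).re)^(2^(L-1)) * ((τ (P^(2^(m+1)))).re)^(2^(L-1)) := mul_pow _ _ _
      have hRHSnn : 0 ≤ (l'.map (fun c' => (τ ((star c' * c')^(2^(m + L)))).re)).prod := by
        apply List.prod_nonneg
        intro a ha
        simp only [List.mem_map] at ha
        obtain ⟨c', _, rfl⟩ := ha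
        exact re_nonneg_pow hτ c' _
      have final : ((τ (G^(2^(m+1)))).re)^(2^(L-1)) * ((τ (P^(2^(m+1)))).re)^(2^(L-1)) ≤
          (τ (P^(2^(m+L)))).re * (l'.map (fun c' => (τ ((star c' * c')^(2^(m + L)))).re)).prod := by
        rw [mul_comm ((τ (P^(2^(m+L)))).re)]
        apply mul_le_mul hGih hPmono (by positivity) hRHSnn
      -- match RHS shape
      have hRHS : ((c::l').map (fun c' => (τ ((star c' * c')^(2^(m + (c::l').length - 1)))).re)).prod
          = (τ (P^(2^(m+L)))).re * (l'.map (fun c' => (τ ((star c' * c')^(2^(m + L)))).re)).prod := by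
        rw [List.map_cons, List.prod_cons]
        have he : m + (c::l').length - 1 = m + L := by
          rw [List.length_cons]; omega
        rw [he, hP]
      rw [hRHS]
      calc (X^2)^(2^(L-1)) ≤ _ := step1
      _ = _ := step2
      _ ≤ _ := final


lemma list_prod_pow (l : List ℝ) (n : ℕ) : (l.prod)^n = (l.map (·^n)).prod := by
  induction l with
  | nil => simp
  | cons a l ih => simp [mul_pow, ih]

lemma list_prod_le_prod {α : Type*} (l : List α) (f g : α → ℝ)
    (h0 : ∀ a ∈ l, 0 ≤ f a) (h : ∀ a ∈ l, f a ≤ g a) :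
    (l.map f).prod ≤ (l.map g).prod := by
  induction l with
  | nil => simp
  | cons a l ih =>
    simp only [List.map_cons, List.prod_cons]
    have hf0 : 0 ≤ f a := h0 a (by simp)
    have hfa : f a ≤ g a := h a (by simp)
    have hrest0 : 0 ≤ (l.map f).prod := by
      apply List.prod_nonneg
      intro x hx
      simp only [List.mem_map] at hx
      obtain ⟨b, hb, rfl⟩ := hx
      exact h0 b (by simp [hb])
    have hrest : (l.map f).prod ≤ (l.map g).prod := by
      apply ih (fun a ha => h0 a (by simp [ha])) (fun a ha => h a (by simp [ha]))
    apply mul_le_mul hfa hrest hrest0 (le_trans hf0 hfa)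

/-- **Word lemma**: per-word Hölder estimate with exponent `2^{⌈r/2⌉-1}`. -/
lemma word_estimate (hτ : IsTrace τ) (l : List A) (hl : l ≠ []) :
    ‖τ l.prod‖ ^ (2 * 2^((l.length + 1)/2 - 1)) ≤
      (l.map (fun c => (τ ((star c * c)^(2^((l.length + 1)/2 - 1)))).re)).prod := by
  set r := l.length with hr
  have hr1 : 1 ≤ r := by rw [hr]; exact List.length_pos_iff.mpr hl
  set s1 := (r+1)/2 with hs1
  rcases eq_or_lt_of_le hr1 with h1 | h2
  · -- r = 1 : single letter
    obtain ⟨c, rfl⟩ : ∃ c, l = [c] := List.length_eq_one_iff.mp (by omega)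
    have hs1' : s1 = 1 := by simp [hs1, ← h1, hr]
    have hcs := cs hτ (1 : A) c
    rw [star_one, one_mul, one_mul, hτ.1] at hcs
    simp only [Complex.one_re, one_mul] at hcs
    simp only [List.prod_cons, List.prod_nil, mul_one, List.map_cons, List.map_nil, hs1']
    norm_num
    exact hcs
  · -- r ≥ 2 : split the word
    have hr2 : 2 ≤ r := h2
    have hs1r : s1 ≤ r := by omega
    set l₁ := l.take s1 with hl₁
    set l₂ := l.drop s1 with hl₂
    have hlen₁ : l₁.length = s1 := by rw [hl₁, List.length_take]; omega
    have hlen₂ : l₂.length = r - s1 := by rw [hl₂, List.length_drop]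
    set s2 := r - s1 with hs2
    have hs21 : 1 ≤ s2 := by omega
    have hs2s1 : s2 ≤ s1 := by omega
    have hne₁ : l₁ ≠ [] := by
      intro h; rw [h] at hlen₁; simp at hlen₁; omega
    have hne₂ : l₂ ≠ [] := by
      intro h; rw [h] at hlen₂; simp at hlen₂; omega
    have hsplit : l₁.prod * l₂.prod = l.prod := by
      rw [hl₁, hl₂, ← List.prod_append, List.take_append_drop]
    set p₁ := l₁.prod with hp₁
    set p₂ := l₂.prod with hp₂
    -- Cauchy–Schwarz split
    have hcs := cs' hτ p₁ p₂
    rw [show τ (star p₂ * p₂) = τ (p₂ * star p₂) from hτ.2.2 _ _] at hcs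
    rw [hsplit] at hcs
    -- raise to power φ := 2^(s1-1)
    set φ := 2^(s1-1) with hφ
    have habs : ‖τ l.prod‖ ^ (2*φ) = (‖τ l.prod‖^2)^φ :=
      pow_mul _ 2 φ
    have hT1nn : 0 ≤ (τ (p₁ * star p₁)).re := re_nonneg_pow' hτ p₁ 1 |>.trans_eq (by rw [pow_one])
    have hT2nn : 0 ≤ (τ (p₂ * star p₂)).re := re_nonneg_pow' hτ p₂ 1 |>.trans_eq (by rw [pow_one])
    have hstep : (‖τ l.prod‖^2)^φ ≤
        ((τ (p₁ * star p₁)).re)^φ * ((τ (p₂ * star p₂)).re)^φ := by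
      rw [← mul_pow]
      apply pow_le_pow_left₀ (by positivity) hcs
    -- first factor : palindrome estimate on l₁
    have hpal₁ := palpow hτ l₁ hne₁ 0
    simp only [pow_zero, pow_one, hlen₁, Nat.zero_add] at hpal₁
    -- second factor : palindrome estimate on l₂, then monotonicity
    have hpal₂ := palpow hτ l₂ hne₂ 0
    simp only [pow_zero, pow_one, hlen₂, Nat.zero_add] at hpal₂
    have hφsplit : φ = 2^(s2-1) * 2^(s1-s2) := by
      rw [hφ, ← pow_add]; congr 1; omega
    have h2nn : 0 ≤ (τ (p₂ * star p₂)).re := hT2nn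
    have hfac₂ : ((τ (p₂ * star p₂)).re)^φ ≤
        (l₂.map (fun c => (τ ((star c * c)^(2^(s1-1)))).re)).prod := by
      rw [hφsplit, pow_mul]
      have step_a : (((τ (p₂ * star p₂)).re)^(2^(s2-1)))^(2^(s1-s2)) ≤
          ((l₂.map (fun c => (τ ((star c * c)^(2^(s2-1)))).re)).prod)^(2^(s1-s2)) := by
        apply pow_le_pow_left₀ (pow_nonneg hT2nn _) hpal₂
      refine le_trans step_a ?_
      rw [list_prod_pow, List.map_map]
      apply list_prod_le_prod
      · intro a _
        exact pow_nonneg (re_nonneg_pow hτ a _) _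
      · intro a _
        simp only [Function.comp_apply]
        have := mono_pow hτ a (s2-1) (s1-s2)
        have he : s2 - 1 + (s1 - s2) = s1 - 1 := by omega
        rw [he] at this
        exact this
    -- assemble
    have hfinal : ((τ (p₁ * star p₁)).re)^φ * ((τ (p₂ * star p₂)).re)^φ ≤
        (l₁.map (fun c => (τ ((star c * c)^(2^(s1-1)))).re)).prod *
        (l₂.map (fun c => (τ ((star c * c)^(2^(s1-1)))).re)).prod := by
      have hnn₂ : 0 ≤ ((τ (p₂ * star p₂)).re)^φ := by positivity
      have hnn₁' : 0 ≤ (l₁.map (fun c => (τ ((star c * c)^(2^(s1-1)))).re)).prod := by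
        apply List.prod_nonneg
        intro x hx
        simp only [List.mem_map] at hx
        obtain ⟨b, _, rfl⟩ := hx
        exact re_nonneg_pow hτ b _
      exact mul_le_mul hpal₁ hfac₂ hnn₂ hnn₁'
    have hmerge : (l₁.map (fun c => (τ ((star c * c)^(2^(s1-1)))).re)).prod *
        (l₂.map (fun c => (τ ((star c * c)^(2^(s1-1)))).re)).prod =
        (l.map (fun c => (τ ((star c * c)^(2^(s1-1)))).re)).prod := by
      rw [← List.prod_append, ← List.map_append, hl₁, hl₂, List.take_append_drop]
    calc ‖τ l.prod‖ ^ (2*φ) = (‖τ l.prod‖^2)^φ := habs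
    _ ≤ _ := hstep
    _ ≤ _ := hfinal
    _ = _ := hmerge


/-- Noncommutative expansion of a power of a finite sum into ordered words. -/
lemma sum_pow_expand {R : Type*} [Ring R] {n : ℕ} (c : Fin n → R) :
    ∀ r : ℕ, (∑ i, c i)^r = ∑ f : Fin r → Fin n, (List.ofFn (fun j => c (f j))).prod := by
  intro r
  induction r with
  | zero => simp
  | succ r ih =>
    rw [pow_succ', ih, Finset.sum_mul_sum]
    rw [← Equiv.sum_comp (Fin.consEquiv (fun _ => Fin n))
      (fun g => (List.ofFn (fun j => c (g j))).prod)]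
    rw [Fintype.sum_prod_type]
    apply Finset.sum_congr rfl
    intro i _
    apply Finset.sum_congr rfl
    intro f _
    have : List.ofFn (fun j => c ((Fin.consEquiv (fun _ => Fin n)) (i, f) j)) =
        c i :: List.ofFn (fun j => c (f j)) := by
      rw [List.ofFn_succ]
      congr 1
    rw [this, List.prod_cons]

end TraceAux

lemma phi_eq (r : ℕ) : phi r = 2^((r+1)/2 - 1) := by
  unfold phi
  split
  · rename_i h
    obtain ⟨k, rfl⟩ := h
    congr 1
    omega
  · rfl


open TraceAux in
/-- For a positive trace `τ` on a unital complex `*`-algebra,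
`r, n ∈ ℕ` and `a₁,…,aₙ ∈ A`,
`|τ((a₁+⋯+aₙ)^r)| ≤ (Σᵢ τ((aᵢ*aᵢ)^{φ(r)})^{1/(2φ(r))})^r`.  (Each
`τ((aᵢ*aᵢ)^{φ(r)})` is a nonnegative real, recorded via its real part.) -/
theorem trace_power_sum_estimate
    {A : Type*} [Ring A] [Algebra ℂ A] [StarRing A] [StarModule ℂ A]
    (τ : A →ₗ[ℂ] ℂ) (hτ : IsTrace τ) (r n : ℕ) (a : Fin n → A) :
    ‖τ ((∑ i, a i) ^ r)‖ ≤
      (∑ i, ((τ ((star (a i) * a i) ^ phi r)).re) ^ (1 / (2 * (phi r : ℝ)))) ^ r := by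
  rcases Nat.eq_zero_or_pos r with rfl | hr
  · simp [hτ.1]
  · -- notation
    set φ := phi r with hφdef
    have hφ : φ = 2^((r+1)/2 - 1) := phi_eq r
    have hφpos : 0 < φ := by rw [hφ]; positivity
    set N : Fin n → ℝ := fun i => ((τ ((star (a i) * a i) ^ φ)).re) ^ (1 / (2 * (φ : ℝ)))
      with hN
    have hNnn : ∀ i, 0 ≤ N i := by
      intro i
      apply Real.rpow_nonneg
      exact re_nonneg_pow hτ (a i) φ
    -- expand
    rw [sum_pow_expand a r, map_sum]
    have habs : ‖∑ f : Fin r → Fin n, τ (List.ofFn (fun j => a (f j))).prod‖ ≤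
        ∑ f : Fin r → Fin n, ‖τ (List.ofFn (fun j => a (f j))).prod‖ :=
      norm_sum_le _ _
    refine le_trans habs ?_
    -- per-word estimate
    have hword : ∀ f : Fin r → Fin n,
        ‖τ (List.ofFn (fun j => a (f j))).prod‖ ≤ ∏ j, N (f j) := by
      intro f
      set l : List A := List.ofFn (fun j => a (f j)) with hl
      have hlen : l.length = r := by rw [hl, List.length_ofFn]
      have hlne : l ≠ [] := by
        intro h; rw [h] at hlen; simp at hlen; omega
      have hest := word_estimate hτ l hlne
      rw [hlen] at hest
      -- rewrite map-prod as a Finset product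
      have hmap : (l.map (fun c => (τ ((star c * c)^(2^((r + 1)/2 - 1)))).re)).prod
          = ∏ j, (τ ((star (a (f j)) * a (f j))^φ)).re := by
        rw [hl, List.map_ofFn]
        rw [List.prod_ofFn]
        apply Finset.prod_congr rfl
        intro j _
        rw [hφ]
        rfl
      rw [hmap] at hest
      -- take (2φ)-th roots
      set B := ∏ j, (τ ((star (a (f j)) * a (f j))^φ)).re with hB
      have hBnn : 0 ≤ B := by
        apply Finset.prod_nonneg
        intro j _
        exact re_nonneg_pow hτ (a (f j)) φ
      set x := ‖τ l.prod‖ with hx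
      have hxnn : 0 ≤ x := norm_nonneg _
      have hk : (2 * 2^((r + 1)/2 - 1)) = 2 * φ := by rw [hφ]
      rw [hk] at hest
      -- x ^ (2φ) ≤ B  ⟹  x ≤ B ^ (1/(2φ))
      have hroot : x ≤ B ^ (1 / (2 * (φ:ℝ))) := by
        have h2φ : ((2 * φ : ℕ) : ℝ) ≠ 0 := by positivity
        have h1 : x = (x ^ (2*φ : ℕ)) ^ ((1:ℝ) / ((2*φ : ℕ) : ℝ)) := by
          rw [← Real.rpow_natCast x (2*φ), ← Real.rpow_mul hxnn]
          rw [mul_one_div, div_self h2φ, Real.rpow_one]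
        rw [h1]
        have := Real.rpow_le_rpow (by positivity) hest (by positivity :
          (0:ℝ) ≤ 1 / ((2*φ : ℕ) : ℝ))
        refine le_trans this ?_
        apply le_of_eq
        congr 1
        push_cast
        ring
      refine le_trans hroot ?_
      -- B^(1/(2φ)) = ∏ N (f j)
      rw [hB, ← Real.finset_prod_rpow _ _ (fun j _ => re_nonneg_pow hτ (a (f j)) φ)]
    calc ∑ f : Fin r → Fin n, ‖τ (List.ofFn (fun j => a (f j))).prod‖
        ≤ ∑ f : Fin r → Fin n, ∏ j, N (f j) :=
          Finset.sum_le_sum (fun f _ => hword f)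
    _ = (∑ i, N i) ^ r := by
        rw [sum_pow_expand N r]
        apply Finset.sum_congr rfl
        intro f _
        rw [List.prod_ofFn]
end
end

section
/- Let (A,τ) be a tracial *-algebra. For every even positive integer p and all a, b ∈ A, ‖ab‖_p ≤ ‖a‖_{φ(p+4)} · ‖b‖_{φ(p+4)}, where φ(m) = 2^{m/2−1} for even m (so φ(p+4) = 2^{p/2+1}). -/
open scoped ComplexOrder

noncomputable section

/-- For even `p`, the `p`-norm `‖a‖_p = τ((a*a)^{p/2})^{1/p}` associated to a
trace `τ` (the value `τ((a*a)^{p/2})` is a nonnegative real, recorded via its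
real part). -/
def pnorm {A : Type*} [Ring A] [Algebra ℂ A] [StarRing A] [StarModule ℂ A]
    (τ : A →ₗ[ℂ] ℂ) (p : ℕ) (a : A) : ℝ :=
  (τ ((star a * a) ^ (p / 2))).re ^ (1 / (p : ℝ))

namespace HoelderAux

variable {A : Type*} [Ring A] [Algebra ℂ A] [StarRing A] [StarModule ℂ A]

/-- The basic real-valued quantity `‖x‖_{2n}^{2n} = Re τ((x* x)^n)`. -/
def Gq (τ : A →ₗ[ℂ] ℂ) (x : A) (n : ℕ) : ℝ := (τ ((star x * x) ^ n)).re

lemma mul_pow_succ (a b : A) (n : ℕ) : (a * b) ^ (n + 1) = a * (b * a) ^ n * b := by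
  induction n with
  | zero => simp [mul_assoc]
  | succ n ih =>
    rw [pow_succ, ih, pow_succ]
    simp [mul_assoc]

variable {τ : A →ₗ[ℂ] ℂ}

lemma cyc_pow (hτ : IsTrace τ) (a b : A) (n : ℕ) :
    τ ((a * b) ^ n) = τ ((b * a) ^ n) := by
  cases n with
  | zero => simp
  | succ n =>
    rw [mul_pow_succ, mul_assoc, hτ.2.2, mul_assoc, ← pow_succ]

lemma star_c_pow (x : A) (n : ℕ) : star ((star x * x) ^ n) = (star x * x) ^ n := by
  rw [star_pow, star_mul, star_star]

lemma exists_sq (x : A) (n : ℕ) : ∃ w : A, (star x * x) ^ n = star w * w := by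
  rcases Nat.even_or_odd n with ⟨m, hm⟩ | ⟨m, hm⟩
  · refine ⟨(star x * x) ^ m, ?_⟩
    rw [star_c_pow, ← pow_add, hm]
  · refine ⟨x * (star x * x) ^ m, ?_⟩
    rw [star_mul, star_c_pow, mul_assoc, ← mul_assoc (star x) x ((star x * x) ^ m),
      ← pow_succ', ← pow_add, hm]
    congr 1
    omega

lemma Gq_nonneg (hτ : IsTrace τ) (x : A) (n : ℕ) : 0 ≤ Gq τ x n := by
  obtain ⟨w, hw⟩ := exists_sq x n
  have := hτ.2.1 w
  rw [Complex.le_def] at this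
  simpa [Gq, hw] using this.1

lemma Gq_zero (hτ : IsTrace τ) (x : A) : Gq τ x 0 = 1 := by
  simp [Gq, hτ.1]

/-- Cauchy–Schwarz for the sesquilinear form `(u,v) ↦ τ(u* v)`. -/
lemma trace_cs (hτ : IsTrace τ) (u v : A) :
    Complex.normSq (τ (star u * v)) ≤ (τ (star u * u)).re * (τ (star v * v)).re := by
  obtain ⟨-, hpos, -⟩ := hτ
  have hre : ∀ w : A, 0 ≤ (τ (star w * w)).re := by
    intro w; have := hpos w; rw [Complex.le_def] at this; exact this.1
  have him : ∀ w : A, (τ (star w * w)).im = 0 := by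
    intro w; have := hpos w; rw [Complex.le_def] at this; exact this.2.symm
  set B := τ (star u * v) with hBdef
  set C := τ (star v * u) with hCdef
  set X := (τ (star u * u)).re with hX
  set Y := (τ (star v * v)).re with hY
  have expand : ∀ c : ℂ, τ (star (c • u + v) * (c • u + v)) =
      (star c * c) * τ (star u * u) + star c * B + c * C + τ (star v * v) := by
    intro c
    simp only [star_add, star_smul, add_mul, mul_add, smul_mul_assoc, mul_smul_comm,
      smul_smul, map_add, map_smul, smul_eq_mul, ← hBdef, ← hCdef]
    ring
  have h1 := him ((1 : ℂ) • u + v)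
  rw [expand 1] at h1
  simp only [star_one, one_mul, Complex.add_im, Complex.one_im, Complex.one_re,
    him u, him v, Complex.mul_im, ] at h1
  have h2 := him ((Complex.I : ℂ) • u + v)
  rw [expand Complex.I] at h2
  simp only [Complex.star_def, Complex.conj_I, Complex.add_im, Complex.mul_im,
    Complex.mul_re, Complex.I_re, Complex.I_im, Complex.neg_im, Complex.neg_re,
    him u, him v] at h2
  have hsymm : C = (starRingEnd ℂ) B := by
    apply Complex.ext
    · simp only [Complex.conj_re]
      nlinarith [h2]
    · simp only [Complex.conj_im]
      nlinarith [h1]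
  by_cases hB0 : B = 0
  · rw [hB0]
    simpa using mul_nonneg (hre u) (hre v)
  have hpoly : ∀ t : ℝ, 0 ≤ (Complex.normSq B * X) * (t * t) + (2 * Complex.normSq B) * t + Y := by
    intro t
    have h0 := hre (((t : ℂ) * B) • u + v)
    rw [expand ((t : ℂ) * B)] at h0
    rw [hsymm] at h0
    simp only [Complex.star_def, map_mul, Complex.conj_ofReal, Complex.add_re,
      Complex.mul_re, Complex.mul_im, Complex.ofReal_re, Complex.ofReal_im,
      Complex.conj_re, Complex.conj_im, him u, him v, ← hX, ← hY] at h0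
    have hns : Complex.normSq B = B.re * B.re + B.im * B.im := Complex.normSq_apply B
    rw [hns]
    ring_nf
    ring_nf at h0
    linarith [h0]
  have hd := discrim_le_zero hpoly
  rw [discrim] at hd
  have hnspos : 0 < Complex.normSq B := Complex.normSq_pos.mpr hB0
  have h4 : Complex.normSq B * Complex.normSq B ≤ Complex.normSq B * (X * Y) := by
    nlinarith [hd]
  exact le_of_mul_le_mul_left h4 hnspos


lemma trace_cs_re (hτ : IsTrace τ) (u v : A) :
    (τ (star u * v)).re ^ 2 ≤ (τ (star u * u)).re * (τ (star v * v)).re := by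
  have h := trace_cs hτ u v
  have h2 : (τ (star u * v)).re ^ 2 ≤ Complex.normSq (τ (star u * v)) := by
    rw [Complex.normSq_apply]; nlinarith [sq_nonneg (τ (star u * v)).im]
  linarith

lemma star_xc_mul (x : A) (m k : ℕ) :
    star (x * (star x * x) ^ m) * (x * (star x * x) ^ k) = (star x * x) ^ (m + k + 1) := by
  rw [star_mul, star_c_pow, mul_assoc, ← mul_assoc (star x) x ((star x * x) ^ k),
    ← pow_succ', ← pow_add]
  congr 1

lemma logconv (hτ : IsTrace τ) (x : A) (n : ℕ) :
    Gq τ x (n + 1) ^ 2 ≤ Gq τ x n * Gq τ x (n + 2) := by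
  rcases Nat.even_or_odd n with ⟨m, hm⟩ | ⟨m, hm⟩
  · have h := trace_cs_re hτ ((star x * x) ^ m) ((star x * x) ^ (m + 1))
    simp only [star_c_pow, ← pow_add] at h
    have e1 : m + (m + 1) = n + 1 := by omega
    have e2 : m + m = n := by omega
    have e3 : m + 1 + (m + 1) = n + 2 := by omega
    rw [e1, e2, e3] at h
    exact h
  · have h := trace_cs_re hτ (x * (star x * x) ^ m) (x * (star x * x) ^ (m + 1))
    rw [star_xc_mul, star_xc_mul, star_xc_mul] at h
    have e1 : m + (m + 1) + 1 = n + 1 := by omega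
    have e2 : m + m + 1 = n := by omega
    have e3 : m + 1 + (m + 1) + 1 = n + 2 := by omega
    rw [e1, e2, e3] at h
    exact h

lemma Qlem (hτ : IsTrace τ) (x : A) : ∀ n : ℕ, Gq τ x n ^ (n + 1) ≤ Gq τ x (n + 1) ^ n := by
  intro n
  induction n with
  | zero => simp [Gq_zero hτ]
  | succ n ih =>
    by_cases h0 : Gq τ x (n + 1) = 0
    · rw [h0, zero_pow (by omega)]
      exact pow_nonneg (Gq_nonneg hτ x (n + 2)) _
    · have hpos : 0 < Gq τ x (n + 1) :=
        lt_of_le_of_ne (Gq_nonneg hτ x (n + 1)) (Ne.symm h0)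
      have hlc := logconv hτ x n
      have h1 : Gq τ x (n + 1) ^ (2 * (n + 1)) ≤ (Gq τ x n * Gq τ x (n + 2)) ^ (n + 1) := by
        calc Gq τ x (n + 1) ^ (2 * (n + 1)) = (Gq τ x (n + 1) ^ 2) ^ (n + 1) := by
              rw [← pow_mul]
          _ ≤ (Gq τ x n * Gq τ x (n + 2)) ^ (n + 1) :=
              pow_le_pow_left₀ (sq_nonneg _) hlc _
      have h3 : Gq τ x n ^ (n + 1) * Gq τ x (n + 2) ^ (n + 1)
          ≤ Gq τ x (n + 1) ^ n * Gq τ x (n + 2) ^ (n + 1) :=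
        mul_le_mul_of_nonneg_right ih (pow_nonneg (Gq_nonneg hτ x (n + 2)) _)
      have h4 : Gq τ x (n + 1) ^ n * Gq τ x (n + 1) ^ (n + 2)
          ≤ Gq τ x (n + 1) ^ n * Gq τ x (n + 2) ^ (n + 1) := by
        rw [← pow_add]
        have e : n + (n + 2) = 2 * (n + 1) := by omega
        rw [e]
        calc Gq τ x (n + 1) ^ (2 * (n + 1))
            ≤ (Gq τ x n * Gq τ x (n + 2)) ^ (n + 1) := h1
          _ = Gq τ x n ^ (n + 1) * Gq τ x (n + 2) ^ (n + 1) := mul_pow _ _ _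
          _ ≤ _ := h3
      exact le_of_mul_le_mul_left h4 (pow_pos hpos n)

lemma Gq_mono (hτ : IsTrace τ) (x : A) (n : ℕ) :
    ∀ m : ℕ, n ≤ m → Gq τ x n ^ m ≤ Gq τ x m ^ n := by
  intro m
  induction m with
  | zero =>
    intro hn
    have : n = 0 := by omega
    subst this
    simp
  | succ m ih =>
    intro hnm
    rcases Nat.eq_or_lt_of_le hnm with he | hlt
    · rw [he]
    · have hnm' : n ≤ m := by omega
      have ihm := ih hnm'
      rcases Nat.eq_zero_or_pos m with rfl | hm
      · have hn0 : n = 0 := by omega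
        subst hn0
        simp [Gq_zero hτ]
      · apply le_of_pow_le_pow_left₀ (by omega : m ≠ 0)
          (pow_nonneg (Gq_nonneg hτ x (m + 1)) n)
        calc (Gq τ x n ^ (m + 1)) ^ m = (Gq τ x n ^ m) ^ (m + 1) := by
              rw [← pow_mul, ← pow_mul, Nat.mul_comm]
          _ ≤ (Gq τ x m ^ n) ^ (m + 1) :=
              pow_le_pow_left₀ (pow_nonneg (Gq_nonneg hτ x n) m) ihm (m + 1)
          _ = (Gq τ x m ^ (m + 1)) ^ n := by rw [← pow_mul, ← pow_mul, Nat.mul_comm]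
          _ ≤ (Gq τ x (m + 1) ^ m) ^ n :=
              pow_le_pow_left₀ (pow_nonneg (Gq_nonneg hτ x m) (m + 1)) (Qlem hτ x m) n
          _ = (Gq τ x (m + 1) ^ n) ^ m := by rw [← pow_mul, ← pow_mul, Nat.mul_comm]

lemma sand (hτ : IsTrace τ) (x y : A) (M : ℕ) :
    τ ((star (x * y) * (x * y)) ^ M) = τ ((star x * x * (y * star y)) ^ M) := by
  have h1 : star (x * y) * (x * y) = star y * (star x * x * y) := by
    rw [star_mul]
    simp [mul_assoc]
  rw [h1, cyc_pow hτ (star y) (star x * x * y), mul_assoc]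

/-- The dyadic Hölder statement at level `j` (in the `Gq` normalisation):
`‖xy‖_N^N ≤ (‖x‖_{2N} ‖y‖_{2N})^N` for `N = 2^{j+1}`. -/
def HLDs (τ : A →ₗ[ℂ] ℂ) (j : ℕ) : Prop :=
  ∀ x y : A, Gq τ (x * y) (2 ^ j) ^ 2 ≤ Gq τ x (2 ^ (j + 1)) * Gq τ y (2 ^ (j + 1))

lemma spl (hτ : IsTrace τ) : ∀ i t : ℕ, (∀ s, s < i + t → HLDs τ s) → ∀ z : A,
    Gq τ (z ^ 2 ^ i) (2 ^ t) ≤ Gq τ z (2 ^ (i + t)) := by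
  intro i
  induction i with
  | zero => intro t _ z; simp
  | succ i ih =>
    intro t hyp z
    have h0 : HLDs τ t := hyp t (by omega)
    have hsplit : z ^ 2 ^ (i + 1) = z ^ 2 ^ i * z ^ 2 ^ i := by
      rw [← pow_add]
      congr 1
      rw [pow_succ]
      omega
    have h1 := h0 (z ^ 2 ^ i) (z ^ 2 ^ i)
    rw [← hsplit] at h1
    have h2 : Gq τ (z ^ 2 ^ (i + 1)) (2 ^ t) ≤ Gq τ (z ^ 2 ^ i) (2 ^ (t + 1)) := by
      have ha := Gq_nonneg hτ (z ^ 2 ^ (i + 1)) (2 ^ t)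
      have hb := Gq_nonneg hτ (z ^ 2 ^ i) (2 ^ (t + 1))
      nlinarith [h1]
    have h3 := ih (t + 1) (fun s hs => hyp s (by omega)) z
    have e : i + (t + 1) = i + 1 + t := by omega
    rw [e] at h3
    exact le_trans h2 h3

lemma hld_all (hτ : IsTrace τ) : ∀ j, HLDs τ j := by
  intro j
  induction j using Nat.strong_induction_on with
  | _ j IH =>
    match j with
    | 0 =>
      intro x y
      have hsh : star (star x * x) = star x * x := by rw [star_mul, star_star]
      have hsk : star (y * star y) = y * star y := by rw [star_mul, star_star]
      have hbase : Gq τ (x * y) 1 = (τ (star x * x * (y * star y))).re := by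
        have hs := sand hτ x y 1
        simp only [pow_one] at hs
        simpa [Gq] using congrArg Complex.re hs
      have hcs := trace_cs_re hτ (star x * x) (y * star y)
      rw [hsh, hsk] at hcs
      have e1 : (τ (star x * x * (star x * x))).re = Gq τ x 2 := by
        simp [Gq, pow_two]
      have e2 : (τ (y * star y * (y * star y))).re = Gq τ y 2 := by
        have hcyc := cyc_pow hτ y (star y) 2
        simp only [pow_two] at hcyc
        simp [Gq, pow_two, hcyc]
      rw [e1, e2] at hcs
      rw [show (2:ℕ) ^ 0 = 1 from rfl, show (2:ℕ) ^ (0 + 1) = 2 from rfl, hbase]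
      exact hcs
    | (i + 1) =>
      intro x y
      set h := star x * x with hh
      set k := y * star y with hk
      have hsh : star h = h := by rw [hh, star_mul, star_star]
      have hsk : star k = k := by rw [hk, star_mul, star_star]
      have hstar_u : star ((k * h) ^ 2 ^ i) = (h * k) ^ 2 ^ i := by
        rw [star_pow, star_mul, hsh, hsk]
      have hstar_v : star ((h * k) ^ 2 ^ i) = (k * h) ^ 2 ^ i := by
        rw [star_pow, star_mul, hsh, hsk]
      have hcs := trace_cs_re hτ ((k * h) ^ 2 ^ i) ((h * k) ^ 2 ^ i)
      rw [hstar_u, hstar_v] at hcs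
      have hPP : τ ((k * h) ^ 2 ^ i * (h * k) ^ 2 ^ i)
          = τ ((h * k) ^ 2 ^ i * (k * h) ^ 2 ^ i) := hτ.2.2 _ _
      rw [hPP] at hcs
      set P := (τ ((h * k) ^ 2 ^ i * (k * h) ^ 2 ^ i)).re with hPdef
      have epow : 2 ^ i + 2 ^ i = 2 ^ (i + 1) := by
        rw [pow_succ]
        omega
      have hGdef : Gq τ (x * y) (2 ^ (i + 1))
          = (τ ((h * k) ^ 2 ^ i * (h * k) ^ 2 ^ i)).re := by
        have hs := sand hτ x y (2 ^ (i + 1))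
        show (τ ((star (x * y) * (x * y)) ^ 2 ^ (i + 1))).re = _
        rw [hs, ← hh, ← hk, ← pow_add, epow]
      have hPG : P = Gq τ ((k * h) ^ 2 ^ i) 1 := by
        rw [hPdef, Gq, pow_one, hstar_u]
      have hG2P2 : Gq τ (x * y) (2 ^ (i + 1)) ^ 2 ≤ P * P := by
        rw [hGdef]; exact hcs
      have hGnn := Gq_nonneg hτ (x * y) (2 ^ (i + 1))
      have hPnn : 0 ≤ P := by rw [hPG]; exact Gq_nonneg hτ _ 1
      have hGP : Gq τ (x * y) (2 ^ (i + 1)) ≤ P := by nlinarith [hG2P2]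
      have hsplP : Gq τ ((k * h) ^ 2 ^ i) 1 ≤ Gq τ (k * h) (2 ^ i) := by
        have hsp := spl hτ i 0 (fun s hs => IH s (by omega)) (k * h)
        simpa using hsp
      have hPQ : P ≤ Gq τ (k * h) (2 ^ i) := by
        rw [hPG]; exact hsplP
      have hIH := IH i (by omega) k h
      have eh : Gq τ h (2 ^ (i + 1)) = Gq τ x (2 ^ (i + 2)) := by
        show (τ ((star h * h) ^ 2 ^ (i + 1))).re = (τ ((star x * x) ^ 2 ^ (i + 2))).re
        rw [hsh, ← pow_two, ← pow_mul, show 2 * 2 ^ (i + 1) = 2 ^ (i + 2) from by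
          rw [pow_succ]; ring]
      have ek : Gq τ k (2 ^ (i + 1)) = Gq τ y (2 ^ (i + 2)) := by
        show (τ ((star k * k) ^ 2 ^ (i + 1))).re = (τ ((star y * y) ^ 2 ^ (i + 2))).re
        rw [hsk, ← pow_two, ← pow_mul, show 2 * 2 ^ (i + 1) = 2 ^ (i + 2) from by
          rw [pow_succ]; ring]
        rw [hk, cyc_pow hτ y (star y) (2 ^ (i + 2))]
      rw [eh, ek] at hIH
      have hQnn := Gq_nonneg hτ (k * h) (2 ^ i)
      have hfinal : Gq τ (x * y) (2 ^ (i + 1)) ^ 2 ≤ Gq τ (k * h) (2 ^ i) ^ 2 :=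
        pow_le_pow_left₀ hGnn (le_trans hGP hPQ) 2
      calc Gq τ (x * y) (2 ^ (i + 1)) ^ 2 ≤ Gq τ (k * h) (2 ^ i) ^ 2 := hfinal
        _ ≤ Gq τ y (2 ^ (i + 2)) * Gq τ x (2 ^ (i + 2)) := by nlinarith [hIH, hQnn]
        _ = Gq τ x (2 ^ (i + 1 + 1)) * Gq τ y (2 ^ (i + 1 + 1)) := by rw [mul_comm]

end HoelderAux

/-- Hölder type inequality.  For a tracial `*`-algebra `(A,τ)`,
an even positive integer `p` and `a, b ∈ A`,
`‖ab‖_p ≤ ‖a‖_{φ(p+4)} ‖b‖_{φ(p+4)}` (where `φ(p+4) = 2^{p/2+1}`). -/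
theorem hoelder_type_inequality
    {A : Type*} [Ring A] [Algebra ℂ A] [StarRing A] [StarModule ℂ A]
    (τ : A →ₗ[ℂ] ℂ) (hτ : IsTrace τ)
    (p : ℕ) (hp : Even p) (hp0 : 0 < p) (a b : A) :
    pnorm τ p (a * b) ≤ pnorm τ (phi (p + 4)) a * pnorm τ (phi (p + 4)) b := by
  obtain ⟨q, hq⟩ := hp
  have hq1 : 1 ≤ q := by omega
  have hp2 : p = 2 * q := by omega
  have hpdiv : p / 2 = q := by omega
  have hphi : phi (p + 4) = 2 ^ (q + 1) := by
    have hev : Even (p + 4) := ⟨q + 2, by omega⟩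
    rw [phi, if_pos hev]
    congr 1
    omega
  have hrdiv : 2 ^ (q + 1) / 2 = 2 ^ q := by
    rw [pow_succ]
    omega
  set X := HoelderAux.Gq τ (a * b) q with hX
  set Y := HoelderAux.Gq τ a (2 ^ q) with hY
  set Z := HoelderAux.Gq τ b (2 ^ q) with hZ
  have hXnn : 0 ≤ X := HoelderAux.Gq_nonneg hτ _ _
  have hYnn : 0 ≤ Y := HoelderAux.Gq_nonneg hτ _ _
  have hZnn : 0 ≤ Z := HoelderAux.Gq_nonneg hτ _ _
  have hYZnn : 0 ≤ Y * Z := mul_nonneg hYnn hZnn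
  have hqle : q ≤ 2 ^ (q - 1) := by
    have := Nat.lt_two_pow_self (n := q - 1)
    omega
  have hmono := HoelderAux.Gq_mono hτ (a * b) q (2 ^ (q - 1)) hqle
  have hhld := HoelderAux.hld_all hτ (q - 1) a b
  rw [show q - 1 + 1 = q from by omega] at hhld
  set W := HoelderAux.Gq τ (a * b) (2 ^ (q - 1)) with hW
  have hWnn : 0 ≤ W := HoelderAux.Gq_nonneg hτ _ _
  have key : X ^ (2 ^ q) ≤ (Y * Z) ^ q := by
    have e1 : X ^ (2 ^ q) = (X ^ 2 ^ (q - 1)) ^ 2 := by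
      rw [← pow_mul]
      congr 1
      rw [show 2 ^ (q - 1) * 2 = 2 ^ (q - 1 + 1) from (pow_succ 2 (q - 1)).symm,
        show q - 1 + 1 = q from by omega]
    rw [e1]
    calc (X ^ 2 ^ (q - 1)) ^ 2 ≤ (W ^ q) ^ 2 :=
          pow_le_pow_left₀ (pow_nonneg hXnn _) hmono 2
      _ = (W ^ 2) ^ q := by rw [← pow_mul, ← pow_mul, Nat.mul_comm]
      _ ≤ (Y * Z) ^ q := pow_le_pow_left₀ (sq_nonneg _) hhld q
  have hgoal1 : pnorm τ p (a * b) = X ^ (1 / (p : ℝ)) := by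
    rw [pnorm, hpdiv, hX]
    rfl
  have hgoal2 : pnorm τ (phi (p + 4)) a = Y ^ (1 / ((2 ^ (q + 1) : ℕ) : ℝ)) := by
    rw [hphi, pnorm, hrdiv, hY]
    rfl
  have hgoal3 : pnorm τ (phi (p + 4)) b = Z ^ (1 / ((2 ^ (q + 1) : ℕ) : ℝ)) := by
    rw [hphi, pnorm, hrdiv, hZ]
    rfl
  rw [hgoal1, hgoal2, hgoal3]
  have step1 : X ≤ (Y * Z) ^ ((q : ℝ) / (2 : ℝ) ^ q) := by
    have key' : (X : ℝ) ^ (((2 ^ q : ℕ) : ℝ)) ≤ (Y * Z) ^ ((q : ℕ) : ℝ) := by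
      rw [Real.rpow_natCast, Real.rpow_natCast]
      exact key
    have h := Real.rpow_le_rpow (by positivity) key'
      (by positivity : (0 : ℝ) ≤ 1 / (2 : ℝ) ^ q)
    rw [← Real.rpow_mul hXnn, ← Real.rpow_mul hYZnn] at h
    have ec : ((2 ^ q : ℕ) : ℝ) * (1 / (2 : ℝ) ^ q) = 1 := by
      push_cast
      field_simp
    have eq2 : ((q : ℕ) : ℝ) * (1 / (2 : ℝ) ^ q) = (q : ℝ) / (2 : ℝ) ^ q := by
      push_cast
      ring
    rw [ec, eq2, Real.rpow_one] at h
    exact h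
  have step2 : X ^ (1 / (p : ℝ)) ≤ ((Y * Z) ^ ((q : ℝ) / (2 : ℝ) ^ q)) ^ (1 / (p : ℝ)) :=
    Real.rpow_le_rpow hXnn step1 (by positivity)
  have step3 : ((Y * Z) ^ ((q : ℝ) / (2 : ℝ) ^ q)) ^ (1 / (p : ℝ))
      = (Y * Z) ^ (1 / ((2 ^ (q + 1) : ℕ) : ℝ)) := by
    rw [← Real.rpow_mul hYZnn]
    congr 1
    have hpcast : (p : ℝ) = 2 * (q : ℝ) := by
      rw [hp2]
      push_cast
      ring
    have hq0 : (q : ℝ) ≠ 0 := by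
      have : (0 : ℝ) < (q : ℝ) := by exact_mod_cast hq1
      linarith
    rw [hpcast]
    push_cast
    have h2q : ((2 : ℝ) ^ q) ≠ 0 := by positivity
    field_simp
    ring
  calc X ^ (1 / (p : ℝ)) ≤ ((Y * Z) ^ ((q : ℝ) / (2 : ℝ) ^ q)) ^ (1 / (p : ℝ)) := step2
    _ = (Y * Z) ^ (1 / ((2 ^ (q + 1) : ℕ) : ℝ)) := step3
    _ = Y ^ (1 / ((2 ^ (q + 1) : ℕ) : ℝ)) * Z ^ (1 / ((2 ^ (q + 1) : ℕ) : ℝ)) :=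
        Real.mul_rpow hYnn hZnn
end
end
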